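/- arXiv:2103.09266 — 6 statements merged into one kernel-verified Lean document; each statement's English description precedes it below -/
import Mathlib

section
/- For every t ∈ ℝ the one-sided derivatives p'₋(t) and p'₊(t) of the polar parameterization exist, and the set {t ∈ ℝ : p'₋(t) ≠ p'₊(t)} is at most countable. -/
open Metric Set Filter Topology


noncomputable def rightD (f : ℝ → ℝ) (a : ℝ) : ℝ := sInf (slope f a '' Ioi a)
noncomputable def leftD (f : ℝ → ℝ) (a : ℝ) : ℝ := sSup (slope f a '' Iio a)

variable {f : ℝ → ℝ}

lemma slope_mono' (hf : ConvexOn ℝ univ f) (a : ℝ) {x y : ℝ} (hx : x ≠ a) (hy : y ≠ a)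
    (hxy : x ≤ y) : slope f a x ≤ slope f a y := by
  rw [slope_def_field, slope_def_field]
  exact hf.secant_mono trivial trivial trivial hx hy hxy

lemma bddBelow_right (hf : ConvexOn ℝ univ f) (a : ℝ) : BddBelow (slope f a '' Ioi a) := by
  refine ⟨slope f a (a - 1), ?_⟩
  rintro _ ⟨x, hx, rfl⟩
  exact slope_mono' hf a (by linarith) (ne_of_gt hx) (by linarith [mem_Ioi.1 hx])

lemma bddAbove_left (hf : ConvexOn ℝ univ f) (a : ℝ) : BddAbove (slope f a '' Iio a) := by
  refine ⟨slope f a (a + 1), ?_⟩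
  rintro _ ⟨x, hx, rfl⟩
  exact slope_mono' hf a (ne_of_lt hx) (by linarith) (by linarith [mem_Iio.1 hx])

lemma hasDerivWithinAt_rightD (hf : ConvexOn ℝ univ f) (a : ℝ) :
    HasDerivWithinAt f (rightD f a) (Ici a) a := by
  rw [hasDerivWithinAt_iff_tendsto_slope, Ici_sdiff_left]
  exact MonotoneOn.tendsto_nhdsGT
    (fun x hx y hy hxy => slope_mono' hf a (ne_of_gt hx) (ne_of_gt hy) hxy)
    (bddBelow_right hf a)

lemma hasDerivWithinAt_leftD (hf : ConvexOn ℝ univ f) (a : ℝ) :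
    HasDerivWithinAt f (leftD f a) (Iic a) a := by
  rw [hasDerivWithinAt_iff_tendsto_slope, Iic_diff_right]
  exact MonotoneOn.tendsto_nhdsLT
    (fun x hx y hy hxy => slope_mono' hf a (ne_of_lt hx) (ne_of_lt hy) hxy)
    (bddAbove_left hf a)

lemma leftD_le_rightD (hf : ConvexOn ℝ univ f) (a : ℝ) : leftD f a ≤ rightD f a := by
  refine csSup_le ⟨slope f a (a - 1), ⟨a - 1, by simp, rfl⟩⟩ ?_
  rintro _ ⟨x, hx, rfl⟩
  refine le_csInf ⟨slope f a (a + 1), ⟨a + 1, by simp, rfl⟩⟩ ?_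
  rintro _ ⟨y, hy, rfl⟩
  exact slope_mono' hf a (ne_of_lt hx) (ne_of_gt hy) (le_of_lt ((mem_Iio.1 hx).trans hy))

lemma rightD_le_leftD (hf : ConvexOn ℝ univ f) {a b : ℝ} (hab : a < b) :
    rightD f a ≤ leftD f b := by
  have h1 : rightD f a ≤ slope f a b := csInf_le (bddBelow_right hf a) ⟨b, hab, rfl⟩
  have h2 : slope f b a ≤ leftD f b := le_csSup (bddAbove_left hf b) ⟨a, hab, rfl⟩
  rw [slope_comm] at h2
  exact h1.trans h2

lemma countable_leftD_ne_rightD (hf : ConvexOn ℝ univ f) :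
    {x : ℝ | leftD f x ≠ rightD f x}.Countable := by
  set T := {x : ℝ | leftD f x ≠ rightD f x} with hT
  have hlt : ∀ x ∈ T, leftD f x < rightD f x := fun x hx =>
    lt_of_le_of_ne (leftD_le_rightD hf x) hx
  have hch : ∀ x ∈ T, ∃ q : ℚ, leftD f x < (q : ℝ) ∧ (q : ℝ) < rightD f x := fun x hx =>
    exists_rat_btwn (hlt x hx)
  choose! r hr using hch
  have key : ∀ x ∈ T, ∀ y ∈ T, x < y → (r x : ℝ) < r y := by
    intro x hx y hy h
    calc (r x : ℝ) < rightD f x := (hr x hx).2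
      _ ≤ leftD f y := rightD_le_leftD hf h
      _ < r y := (hr y hy).1
  have hinj : InjOn (fun x => Encodable.encode (r x)) T := by
    intro x hx y hy hxy
    have : r x = r y := Encodable.encode_injective hxy
    by_contra hne
    rcases lt_or_gt_of_ne hne with h | h
    · exact absurd (key x hx y hy h) (by rw [this]; exact lt_irrefl _)
    · exact absurd (key y hy x hx h) (by rw [this]; exact lt_irrefl _)
  exact Set.countable_iff_exists_injOn.mpr ⟨_, hinj⟩

open Real in
lemma convexOn_norm_line {X : Type*} [NormedAddCommGroup X] [NormedSpace ℝ X] (x v : X) :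
    ConvexOn ℝ univ (fun s : ℝ => ‖x + s • v‖) := by
  have h := (convexOn_univ_norm (E := X)).comp_affineMap (AffineMap.lineMap x (x + v))
  simpa [Function.comp_def, AffineMap.lineMap_apply, add_comm] using h

open Real in
lemma norm_chart {X : Type*} [NormedAddCommGroup X] [NormedSpace ℝ X]
    (Q : ℝ → X) (x v : X) (t₀ : ℝ)
    (hId : ∀ u : ℝ, Q (t₀ + u) = Real.cos u • x + Real.sin u • v)
    {t : ℝ} (ht : t ∈ Ioo (t₀ - Real.pi / 2) (t₀ + Real.pi / 2)) :
    (∀ s ∈ Ioo (t₀ - Real.pi / 2) (t₀ + Real.pi / 2),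
        ‖Q s‖ = Real.cos (s - t₀) * ‖x + Real.tan (s - t₀) • v‖) ∧
    Real.cos (t - t₀) ≠ 0 := by
  constructor
  · intro s hs
    have hw : s - t₀ ∈ Ioo (-(Real.pi / 2)) (Real.pi / 2) := by
      constructor <;> [linarith [hs.1]; linarith [hs.2]]
    have hc : 0 < Real.cos (s - t₀) := Real.cos_pos_of_mem_Ioo hw
    have h1 : Q s = Real.cos (s - t₀) • x + Real.sin (s - t₀) • v := by
      have := hId (s - t₀); rwa [add_sub_cancel] at this
    have h2 : Real.cos (s - t₀) • x + Real.sin (s - t₀) • v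
        = Real.cos (s - t₀) • (x + Real.tan (s - t₀) • v) := by
      rw [smul_add, smul_smul, Real.tan_eq_sin_div_cos, mul_div_cancel₀ _ (ne_of_gt hc)]
    rw [h1, h2, norm_smul, Real.norm_eq_abs, abs_of_pos hc]
  · have hw : t - t₀ ∈ Ioo (-(Real.pi / 2)) (Real.pi / 2) := by
      constructor <;> [linarith [ht.1]; linarith [ht.2]]
    exact ne_of_gt (Real.cos_pos_of_mem_Ioo hw)

open Real in
lemma chart_hasDerivWithinAt_right {X : Type*} [NormedAddCommGroup X] [NormedSpace ℝ X]
    (Q : ℝ → X) (x v : X) (t₀ : ℝ)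
    (hId : ∀ u : ℝ, Q (t₀ + u) = Real.cos u • x + Real.sin u • v)
    {t : ℝ} (ht : t ∈ Ioo (t₀ - Real.pi / 2) (t₀ + Real.pi / 2)) :
    HasDerivWithinAt (fun s => ‖Q s‖)
      ((-Real.sin (t - t₀) * 1) * ‖x + Real.tan (t - t₀) • v‖
        + Real.cos (t - t₀) *
          (rightD (fun s => ‖x + s • v‖) (Real.tan (t - t₀)) * (1 / Real.cos (t - t₀) ^ 2 * 1)))
      (Ici t) t := by
  obtain ⟨hEq, hcne⟩ := norm_chart Q x v t₀ hId ht
  set h : ℝ → ℝ := fun s => ‖x + s • v‖ with hh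
  set S : Set ℝ := Ici t ∩ Ioo (t₀ - Real.pi / 2) (t₀ + Real.pi / 2) with hS
  have hSmem : S ∈ 𝓝[Ici t] t :=
    Filter.inter_mem self_mem_nhdsWithin
      (mem_nhdsWithin_of_mem_nhds (isOpen_Ioo.mem_nhds ht))
  -- derivative of cos (s - t₀)
  have hcos : HasDerivAt (fun s => Real.cos (s - t₀)) (-Real.sin (t - t₀) * 1) t :=
    (Real.hasDerivAt_cos (t - t₀)).comp (h₂ := Real.cos) t ((hasDerivAt_id t).sub_const t₀)
  -- derivative of tan (s - t₀)
  have htan : HasDerivAt (fun s => Real.tan (s - t₀)) (1 / Real.cos (t - t₀) ^ 2 * 1) t :=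
    (Real.hasDerivAt_tan hcne).comp (h₂ := Real.tan) t ((hasDerivAt_id t).sub_const t₀)
  -- h part
  have hhd : HasDerivWithinAt h (rightD h (Real.tan (t - t₀))) (Ici (Real.tan (t - t₀)))
      (Real.tan (t - t₀)) := hasDerivWithinAt_rightD (convexOn_norm_line x v) _
  have hmaps : MapsTo (fun s => Real.tan (s - t₀)) S (Ici (Real.tan (t - t₀))) := by
    intro s hs
    have hw : s - t₀ ∈ Ioo (-(Real.pi / 2)) (Real.pi / 2) :=
      ⟨by linarith [hs.2.1], by linarith [hs.2.2]⟩
    have hw' : t - t₀ ∈ Ioo (-(Real.pi / 2)) (Real.pi / 2) := ⟨by linarith [ht.1], by linarith [ht.2]⟩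
    exact Real.strictMonoOn_tan.monotoneOn hw' hw (by linarith [mem_Ici.1 hs.1])
  have hcomp : HasDerivWithinAt (fun s => h (Real.tan (s - t₀)))
      (rightD h (Real.tan (t - t₀)) * (1 / Real.cos (t - t₀) ^ 2 * 1)) S t :=
    HasDerivWithinAt.comp (h₂ := h) t hhd (htan.hasDerivWithinAt) hmaps
  have hF : HasDerivWithinAt (fun s => Real.cos (s - t₀) * h (Real.tan (s - t₀)))
      ((-Real.sin (t - t₀) * 1) * h (Real.tan (t - t₀))
        + Real.cos (t - t₀) * (rightD h (Real.tan (t - t₀)) * (1 / Real.cos (t - t₀) ^ 2 * 1)))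
      S t := (hcos.hasDerivWithinAt).mul hcomp
  have hN : HasDerivWithinAt (fun s => ‖Q s‖)
      ((-Real.sin (t - t₀) * 1) * h (Real.tan (t - t₀))
        + Real.cos (t - t₀) * (rightD h (Real.tan (t - t₀)) * (1 / Real.cos (t - t₀) ^ 2 * 1)))
      S t := hF.congr (fun s hs => hEq s hs.2) (hEq t ht)
  exact hN.mono_of_mem_nhdsWithin hSmem

open Real in
lemma chart_hasDerivWithinAt_left {X : Type*} [NormedAddCommGroup X] [NormedSpace ℝ X]
    (Q : ℝ → X) (x v : X) (t₀ : ℝ)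
    (hId : ∀ u : ℝ, Q (t₀ + u) = Real.cos u • x + Real.sin u • v)
    {t : ℝ} (ht : t ∈ Ioo (t₀ - Real.pi / 2) (t₀ + Real.pi / 2)) :
    HasDerivWithinAt (fun s => ‖Q s‖)
      ((-Real.sin (t - t₀) * 1) * ‖x + Real.tan (t - t₀) • v‖
        + Real.cos (t - t₀) *
          (leftD (fun s => ‖x + s • v‖) (Real.tan (t - t₀)) * (1 / Real.cos (t - t₀) ^ 2 * 1)))
      (Iic t) t := by
  obtain ⟨hEq, hcne⟩ := norm_chart Q x v t₀ hId ht
  set h : ℝ → ℝ := fun s => ‖x + s • v‖ with hh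
  set S : Set ℝ := Iic t ∩ Ioo (t₀ - Real.pi / 2) (t₀ + Real.pi / 2) with hS
  have hSmem : S ∈ 𝓝[Iic t] t :=
    Filter.inter_mem self_mem_nhdsWithin
      (mem_nhdsWithin_of_mem_nhds (isOpen_Ioo.mem_nhds ht))
  -- derivative of cos (s - t₀)
  have hcos : HasDerivAt (fun s => Real.cos (s - t₀)) (-Real.sin (t - t₀) * 1) t :=
    (Real.hasDerivAt_cos (t - t₀)).comp (h₂ := Real.cos) t ((hasDerivAt_id t).sub_const t₀)
  -- derivative of tan (s - t₀)
  have htan : HasDerivAt (fun s => Real.tan (s - t₀)) (1 / Real.cos (t - t₀) ^ 2 * 1) t :=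
    (Real.hasDerivAt_tan hcne).comp (h₂ := Real.tan) t ((hasDerivAt_id t).sub_const t₀)
  -- h part
  have hhd : HasDerivWithinAt h (leftD h (Real.tan (t - t₀))) (Iic (Real.tan (t - t₀)))
      (Real.tan (t - t₀)) := hasDerivWithinAt_leftD (convexOn_norm_line x v) _
  have hmaps : MapsTo (fun s => Real.tan (s - t₀)) S (Iic (Real.tan (t - t₀))) := by
    intro s hs
    have hw : s - t₀ ∈ Ioo (-(Real.pi / 2)) (Real.pi / 2) :=
      ⟨by linarith [hs.2.1], by linarith [hs.2.2]⟩
    have hw' : t - t₀ ∈ Ioo (-(Real.pi / 2)) (Real.pi / 2) := ⟨by linarith [ht.1], by linarith [ht.2]⟩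
    exact Real.strictMonoOn_tan.monotoneOn hw hw' (by linarith [mem_Iic.1 hs.1])
  have hcomp : HasDerivWithinAt (fun s => h (Real.tan (s - t₀)))
      (leftD h (Real.tan (t - t₀)) * (1 / Real.cos (t - t₀) ^ 2 * 1)) S t :=
    HasDerivWithinAt.comp (h₂ := h) t hhd (htan.hasDerivWithinAt) hmaps
  have hF : HasDerivWithinAt (fun s => Real.cos (s - t₀) * h (Real.tan (s - t₀)))
      ((-Real.sin (t - t₀) * 1) * h (Real.tan (t - t₀))
        + Real.cos (t - t₀) * (leftD h (Real.tan (t - t₀)) * (1 / Real.cos (t - t₀) ^ 2 * 1)))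
      S t := (hcos.hasDerivWithinAt).mul hcomp
  have hN : HasDerivWithinAt (fun s => ‖Q s‖)
      ((-Real.sin (t - t₀) * 1) * h (Real.tan (t - t₀))
        + Real.cos (t - t₀) * (leftD h (Real.tan (t - t₀)) * (1 / Real.cos (t - t₀) ^ 2 * 1)))
      S t := hF.congr (fun s hs => hEq s hs.2) (hEq t ht)
  exact hN.mono_of_mem_nhdsWithin hSmem


/-- For the polar parameterization `p` of the unit sphere of a 2-dimensional real Banach
space, the one-sided derivatives `p'₋(t)` and `p'₊(t)` exist at every `t ∈ ℝ`, and the set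
of points where they differ is at most countable. -/
theorem polar_parameterization_one_sided_derivs
    {X : Type*} [NormedAddCommGroup X] [NormedSpace ℝ X] [CompleteSpace X]
    (hdim : Module.finrank ℝ X = 2)
    (e₁ e₂ : X) (hInd : LinearIndependent ℝ ![e₁, e₂])
    (p : ℝ → X)
    (hp : ∀ t, p t = ‖Real.cos t • e₁ + Real.sin t • e₂‖⁻¹ •
      (Real.cos t • e₁ + Real.sin t • e₂)) :
    (∀ t : ℝ, (∃ d : X, HasDerivWithinAt p d (Iic t) t) ∧
      (∃ d : X, HasDerivWithinAt p d (Ici t) t)) ∧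
    {t : ℝ | derivWithin p (Iic t) t ≠ derivWithin p (Ici t) t}.Countable := by
  set q : ℝ → X := fun t => Real.cos t • e₁ + Real.sin t • e₂ with hq
  set qd : ℝ → X := fun t => -Real.sin t • e₁ + Real.cos t • e₂ with hqd
  set N : ℝ → ℝ := fun t => ‖q t‖ with hN
  have hq0 : ∀ t, q t ≠ 0 := by
    intro t h0
    obtain ⟨h1, h2⟩ := (LinearIndependent.pair_iff.1 hInd) _ _ h0
    have := Real.sin_sq_add_cos_sq t
    rw [h1, h2] at this; norm_num at this
  have hN0 : ∀ t, N t ≠ 0 := fun t => norm_ne_zero_iff.mpr (hq0 t)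
  have hId : ∀ t₀ u : ℝ, q (t₀ + u) = Real.cos u • q t₀ + Real.sin u • qd t₀ := by
    intro t₀ u
    simp only [hq, hqd, Real.cos_add, Real.sin_add]
    module
  have hqd' : ∀ t, HasDerivAt q (qd t) t := fun t =>
    ((Real.hasDerivAt_cos t).smul_const e₁).add ((Real.hasDerivAt_sin t).smul_const e₂)
  have hhalf : (1 : ℝ) < Real.pi / 2 := by linarith [Real.pi_gt_three]
  have hmem : ∀ t : ℝ, t ∈ Ioo (t - Real.pi / 2) (t + Real.pi / 2) := fun t => ⟨by linarith, by linarith⟩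
  -- one-sided derivatives of N
  have hNR : ∀ t : ℝ, HasDerivWithinAt N
      ((-Real.sin (t - t) * 1) * ‖q t + Real.tan (t - t) • qd t‖
        + Real.cos (t - t) * (rightD (fun s => ‖q t + s • qd t‖) (Real.tan (t - t))
          * (1 / Real.cos (t - t) ^ 2 * 1))) (Ici t) t := fun t =>
    chart_hasDerivWithinAt_right q (q t) (qd t) t (hId t) (hmem t)
  have hNL : ∀ t : ℝ, HasDerivWithinAt N
      ((-Real.sin (t - t) * 1) * ‖q t + Real.tan (t - t) • qd t‖
        + Real.cos (t - t) * (leftD (fun s => ‖q t + s • qd t‖) (Real.tan (t - t))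
          * (1 / Real.cos (t - t) ^ 2 * 1))) (Iic t) t := fun t =>
    chart_hasDerivWithinAt_left q (q t) (qd t) t (hId t) (hmem t)
  -- p in terms of N and q
  have hp' : p = fun t => (N t)⁻¹ • q t := funext fun t => hp t
  have hP : ∀ (t : ℝ) (s : Set ℝ) (d : ℝ), HasDerivWithinAt N d s t →
      HasDerivWithinAt p ((N t)⁻¹ • qd t + (-d / N t ^ 2) • q t) s t := by
    intro t s d hd
    rw [hp']
    exact (hd.inv (hN0 t)).smul (hqd' t).hasDerivWithinAt
  constructor
  · exact fun t => ⟨⟨_, hP t _ _ (hNL t)⟩, ⟨_, hP t _ _ (hNR t)⟩⟩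
  · -- countability
    have hBsub : {t : ℝ | derivWithin p (Iic t) t ≠ derivWithin p (Ici t) t} ⊆
        {t : ℝ | derivWithin N (Iic t) t ≠ derivWithin N (Ici t) t} := by
      intro t ht
      simp only [mem_setOf_eq] at ht ⊢
      intro hNe
      apply ht
      have hL := (hNL t).derivWithin (uniqueDiffOn_Iic t t self_mem_Iic)
      have hR := (hNR t).derivWithin (uniqueDiffOn_Ici t t self_mem_Ici)
      rw [(hP t _ _ (hNL t)).derivWithin (uniqueDiffOn_Iic t t self_mem_Iic),
        (hP t _ _ (hNR t)).derivWithin (uniqueDiffOn_Ici t t self_mem_Ici)]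
      rw [← hL, ← hR, hNe]
    refine Set.Countable.mono hBsub ?_
    have hcover : {t : ℝ | derivWithin N (Iic t) t ≠ derivWithin N (Ici t) t} ⊆
        ⋃ k : ℤ, {t : ℝ | derivWithin N (Iic t) t ≠ derivWithin N (Ici t) t}
          ∩ Ioo ((k : ℝ) - 1) ((k : ℝ) + 1) := by
      intro t ht
      exact mem_iUnion.2 ⟨⌊t⌋, ht, by linarith [Int.floor_le t], by linarith [Int.lt_floor_add_one t]⟩
    refine Set.Countable.mono hcover (Set.countable_iUnion fun k => ?_)
    set h : ℝ → ℝ := fun s => ‖q (k : ℝ) + s • qd (k : ℝ)‖ with hhdef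
    have hT : {s : ℝ | leftD h s ≠ rightD h s}.Countable :=
      countable_leftD_ne_rightD (convexOn_norm_line _ _)
    refine Set.Countable.mono ?_ (hT.image (fun s => (k : ℝ) + Real.arctan s))
    rintro t ⟨ht, htk⟩
    have hsub : t - (k : ℝ) ∈ Ioo (-(Real.pi / 2)) (Real.pi / 2) :=
      ⟨by linarith [htk.1], by linarith [htk.2]⟩
    have htmem : t ∈ Ioo ((k : ℝ) - Real.pi / 2) ((k : ℝ) + Real.pi / 2) :=
      ⟨by linarith [hsub.1], by linarith [hsub.2]⟩
    have hR := chart_hasDerivWithinAt_right q (q (k : ℝ)) (qd (k : ℝ)) (k : ℝ) (hId _) htmem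
    have hL := chart_hasDerivWithinAt_left q (q (k : ℝ)) (qd (k : ℝ)) (k : ℝ) (hId _) htmem
    refine ⟨Real.tan (t - (k : ℝ)), ?_, ?_⟩
    · simp only [mem_setOf_eq]
      intro hEq
      apply ht
      rw [hL.derivWithin (uniqueDiffOn_Iic t t self_mem_Iic),
        hR.derivWithin (uniqueDiffOn_Ici t t self_mem_Ici), hEq]
    · show (k : ℝ) + Real.arctan (Real.tan (t - (k : ℝ))) = t
      rw [Real.arctan_tan hsub.1 hsub.2]; ring
end

section
/- For all t, ε ∈ ℝ, the polar parameterization satisfies (c/C)·|sin(ε)| ≤ ‖p(t+ε) − p(t)‖ ≤ (2C²/c²)·|ε|. -/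
open Metric Set

private lemma lagrange_det_le (x₁ x₂ y₁ y₂ : ℝ) :
    |x₁ * y₂ - x₂ * y₁| ≤ Real.sqrt (x₁^2 + x₂^2) * Real.sqrt (y₁^2 + y₂^2) := by
  rw [← Real.sqrt_mul (by positivity), ← Real.sqrt_sq_eq_abs]
  apply Real.sqrt_le_sqrt
  nlinarith [sq_nonneg (x₁*y₁ + x₂*y₂)]


private lemma norm_normalize_sub_le {X : Type*} [NormedAddCommGroup X] [NormedSpace ℝ X]
    (a b : X) (Na Nb : ℝ) (hNa : Na = ‖a‖) (hNb : Nb = ‖b‖)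
    (ha : 0 < Na) (hb : 0 < Nb) :
    ‖Na⁻¹ • a - Nb⁻¹ • b‖ ≤ 2 * Nb⁻¹ * ‖a - b‖ := by
  have hsplit : Na⁻¹ • a - Nb⁻¹ • b = Nb⁻¹ • (a - b) + (Na⁻¹ - Nb⁻¹) • a := by
    rw [smul_sub, sub_smul]; abel
  have h12 : |Nb - Na| ≤ ‖a - b‖ := by
    rw [hNa, hNb, abs_sub_comm]
    exact abs_norm_sub_norm_le a b
  have h11 : |Na⁻¹ - Nb⁻¹| = |Nb - Na| * (Nb⁻¹ * Na⁻¹) := by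
    rw [← abs_of_nonneg (by positivity : (0:ℝ) ≤ Nb⁻¹ * Na⁻¹), ← abs_mul]
    congr 1
    field_simp
  have hterm : |Na⁻¹ - Nb⁻¹| * ‖a‖ ≤ Nb⁻¹ * ‖a - b‖ := by
    rw [h11, ← hNa]
    calc |Nb - Na| * (Nb⁻¹ * Na⁻¹) * Na = |Nb - Na| * Nb⁻¹ := by field_simp
      _ ≤ ‖a - b‖ * Nb⁻¹ := mul_le_mul_of_nonneg_right h12 (by positivity)
      _ = Nb⁻¹ * ‖a - b‖ := by ring
  calc ‖Na⁻¹ • a - Nb⁻¹ • b‖ = ‖Nb⁻¹ • (a - b) + (Na⁻¹ - Nb⁻¹) • a‖ := by rw [hsplit]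
    _ ≤ ‖Nb⁻¹ • (a - b)‖ + ‖(Na⁻¹ - Nb⁻¹) • a‖ := norm_add_le _ _
    _ = Nb⁻¹ * ‖a - b‖ + |Na⁻¹ - Nb⁻¹| * ‖a‖ := by
        rw [norm_smul, norm_smul, Real.norm_eq_abs, Real.norm_eq_abs,
          abs_of_nonneg (by positivity)]
    _ ≤ Nb⁻¹ * ‖a - b‖ + Nb⁻¹ * ‖a - b‖ := add_le_add le_rfl hterm
    _ = 2 * Nb⁻¹ * ‖a - b‖ := by ring

set_option maxHeartbeats 1600000 in
/-- For the polar parameterization `p` of the unit sphere of a 2-dimensional real Banach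
space, with `c = min ‖e^{it}‖` and `C = max ‖e^{it}‖`, one has
`(c/C)·|sin ε| ≤ ‖p (t+ε) - p t‖ ≤ (2C²/c²)·|ε|` for all `t, ε ∈ ℝ`. -/
theorem polar_parameterization_bilipschitz_bounds
    {X : Type*} [NormedAddCommGroup X] [NormedSpace ℝ X] [CompleteSpace X]
    (hdim : Module.finrank ℝ X = 2)
    (e₁ e₂ : X) (hInd : LinearIndependent ℝ ![e₁, e₂])
    (p : ℝ → X)
    (hp : ∀ t, p t = ‖Real.cos t • e₁ + Real.sin t • e₂‖⁻¹ •
      (Real.cos t • e₁ + Real.sin t • e₂))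
    (c C : ℝ)
    (hc : IsLeast (Set.range fun t : ℝ => ‖Real.cos t • e₁ + Real.sin t • e₂‖) c)
    (hC : IsGreatest (Set.range fun t : ℝ => ‖Real.cos t • e₁ + Real.sin t • e₂‖) C) :
    ∀ t ε : ℝ, c / C * |Real.sin ε| ≤ ‖p (t + ε) - p t‖ ∧
      ‖p (t + ε) - p t‖ ≤ 2 * C ^ 2 / c ^ 2 * |ε| := by
  have hpair := LinearIndependent.pair_iff.1 hInd
  -- f never vanishes
  have hfne : ∀ s : ℝ, Real.cos s • e₁ + Real.sin s • e₂ ≠ 0 := by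
    intro s h
    obtain ⟨h1, h2⟩ := hpair _ _ h
    nlinarith [Real.sin_sq_add_cos_sq s]
  have hc0 : 0 < c := by
    obtain ⟨t₀, ht₀⟩ := hc.1
    rw [← ht₀]
    exact norm_pos_iff.2 (hfne t₀)
  have hcC : c ≤ C := hC.2 hc.1
  have hC0 : 0 < C := lt_of_lt_of_le hc0 hcC
  -- key scaling bound
  have key : ∀ a b : ℝ, c * Real.sqrt (a^2 + b^2) ≤ ‖a • e₁ + b • e₂‖ ∧
      ‖a • e₁ + b • e₂‖ ≤ C * Real.sqrt (a^2 + b^2) := by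
    intro a b
    rcases eq_or_ne (a^2 + b^2) 0 with h0 | h0
    · have ha : a = 0 := by nlinarith [sq_nonneg a, sq_nonneg b]
      have hb : b = 0 := by nlinarith [sq_nonneg a, sq_nonneg b]
      simp [ha, hb]
    · set z : ℂ := ⟨a, b⟩ with hz
      have hzne : z ≠ 0 := by
        intro h
        rw [Complex.ext_iff] at h
        simp [hz] at h
        exact h0 (by rw [h.1, h.2]; ring)
      have hre : ‖z‖ * Real.cos z.arg = a := Complex.norm_mul_cos_arg z
      have him : ‖z‖ * Real.sin z.arg = b := Complex.norm_mul_sin_arg z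
      have habs : ‖z‖ = Real.sqrt (a^2 + b^2) := by
        rw [Complex.norm_def, Complex.normSq_apply]
        norm_num [hz]
        ring_nf
      have heq : a • e₁ + b • e₂ =
          ‖z‖ • (Real.cos z.arg • e₁ + Real.sin z.arg • e₂) := by
        rw [smul_add, smul_smul, smul_smul, hre, him]
      have hcle : c ≤ ‖Real.cos z.arg • e₁ + Real.sin z.arg • e₂‖ := hc.2 ⟨z.arg, rfl⟩
      have hCge : ‖Real.cos z.arg • e₁ + Real.sin z.arg • e₂‖ ≤ C := hC.2 ⟨z.arg, rfl⟩
      rw [heq, norm_smul, Real.norm_eq_abs, abs_of_nonneg (norm_nonneg z), habs]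
      constructor
      · rw [mul_comm]
        exact mul_le_mul_of_nonneg_left hcle (Real.sqrt_nonneg _)
      · rw [mul_comm C]
        exact mul_le_mul_of_nonneg_left hCge (Real.sqrt_nonneg _)
  intro t ε
  set N₁ := ‖Real.cos t • e₁ + Real.sin t • e₂‖ with hN₁
  set N₂ := ‖Real.cos (t+ε) • e₁ + Real.sin (t+ε) • e₂‖ with hN₂
  have hN₁c : c ≤ N₁ := hc.2 ⟨t, rfl⟩
  have hN₁C : N₁ ≤ C := hC.2 ⟨t, rfl⟩
  have hN₂c : c ≤ N₂ := hc.2 ⟨t + ε, rfl⟩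
  have hN₂C : N₂ ≤ C := hC.2 ⟨t + ε, rfl⟩
  have hN₁0 : 0 < N₁ := lt_of_lt_of_le hc0 hN₁c
  have hN₂0 : 0 < N₂ := lt_of_lt_of_le hc0 hN₂c
  set A := N₂⁻¹ * Real.cos (t+ε) - N₁⁻¹ * Real.cos t with hA
  set B := N₂⁻¹ * Real.sin (t+ε) - N₁⁻¹ * Real.sin t with hB
  have hdiff : p (t+ε) - p t = A • e₁ + B • e₂ := by
    rw [hp, hp, hA, hB]
    rw [smul_add, smul_add, smul_smul, smul_smul, smul_smul, smul_smul,
      sub_smul, sub_smul]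
    abel
  constructor
  · -- lower bound
    have hlag := lagrange_det_le (N₁⁻¹ * Real.cos t) (N₁⁻¹ * Real.sin t) A B
    have hdet : (N₁⁻¹ * Real.cos t) * B - (N₁⁻¹ * Real.sin t) * A
        = N₁⁻¹ * N₂⁻¹ * Real.sin ε := by
      have : Real.sin ε = Real.sin ((t + ε) - t) := by congr 1; ring
      rw [this, Real.sin_sub, hA, hB]; ring
    have hx : Real.sqrt ((N₁⁻¹ * Real.cos t)^2 + (N₁⁻¹ * Real.sin t)^2) = N₁⁻¹ := by
      have : (N₁⁻¹ * Real.cos t)^2 + (N₁⁻¹ * Real.sin t)^2 = (N₁⁻¹)^2 := by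
        have := Real.sin_sq_add_cos_sq t; nlinarith
      rw [this, Real.sqrt_sq (by positivity)]
    rw [hdet, hx] at hlag
    rw [abs_mul, abs_mul, abs_of_nonneg (by positivity : (0:ℝ) ≤ N₁⁻¹),
      abs_of_nonneg (by positivity : (0:ℝ) ≤ N₂⁻¹)] at hlag
    have hsqrt : N₂⁻¹ * |Real.sin ε| ≤ Real.sqrt (A^2 + B^2) := by
      have h := mul_le_mul_of_nonneg_left hlag (le_of_lt hN₁0)
      have e1 : N₁ * (N₁⁻¹ * N₂⁻¹ * |Real.sin ε|) = N₂⁻¹ * |Real.sin ε| := by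
        field_simp
      have e2 : N₁ * (N₁⁻¹ * Real.sqrt (A^2 + B^2)) = Real.sqrt (A^2 + B^2) := by
        field_simp
      rw [e1, e2] at h
      exact h
    have hkey := (key A B).1
    rw [← hdiff] at hkey
    calc c / C * |Real.sin ε| ≤ c * (N₂⁻¹ * |Real.sin ε|) := by
          rw [div_mul_eq_mul_div, mul_comm N₂⁻¹ _, ← mul_assoc, ← div_eq_mul_inv,
            mul_div_assoc, mul_div_assoc]
          apply mul_le_mul_of_nonneg_left _ (le_of_lt hc0)
          apply div_le_div_of_nonneg_left (abs_nonneg _) hN₂0 hN₂C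
      _ ≤ c * Real.sqrt (A^2 + B^2) := by
          exact mul_le_mul_of_nonneg_left hsqrt (le_of_lt hc0)
      _ ≤ ‖p (t+ε) - p t‖ := hkey
  · -- upper bound
    clear_value N₁ N₂ A B
    clear hdiff hA hB A B
    have hab : ‖(Real.cos (t+ε) • e₁ + Real.sin (t+ε) • e₂)
        - (Real.cos t • e₁ + Real.sin t • e₂)‖ ≤ C * |ε| := by
      have h1 : (Real.cos (t+ε) • e₁ + Real.sin (t+ε) • e₂)
          - (Real.cos t • e₁ + Real.sin t • e₂)
          = (Real.cos (t+ε) - Real.cos t) • e₁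
          + (Real.sin (t+ε) - Real.sin t) • e₂ := by
        rw [sub_smul, sub_smul]; abel
      have h2 := (key (Real.cos (t+ε) - Real.cos t) (Real.sin (t+ε) - Real.sin t)).2
      rw [← h1] at h2
      have h3 : (Real.cos (t+ε) - Real.cos t)^2 + (Real.sin (t+ε) - Real.sin t)^2
          = 2 - 2 * Real.cos ε := by
        have hce : Real.cos ε = Real.cos ((t+ε) - t) := by congr 1; ring
        rw [hce, Real.cos_sub]
        have h4 := Real.sin_sq_add_cos_sq t
        have h5 := Real.sin_sq_add_cos_sq (t+ε)
        nlinarith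
      have h6 : 2 - 2 * Real.cos ε ≤ ε^2 := by
        have h7 : Real.sin (ε/2)^2 = 1/2 - Real.cos ε / 2 := by
          have h := Real.sin_sq_eq_half_sub (ε/2)
          rwa [show 2*(ε/2) = ε by ring] at h
        have h8 : |Real.sin (ε/2)| ≤ |ε/2| := Real.abs_sin_le_abs
        have h9 : Real.sin (ε/2)^2 ≤ (ε/2)^2 := by
          rw [← sq_abs, ← sq_abs (ε/2)]
          exact pow_le_pow_left₀ (abs_nonneg _) h8 2
        nlinarith
      have h10 : Real.sqrt ((Real.cos (t+ε) - Real.cos t)^2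
          + (Real.sin (t+ε) - Real.sin t)^2) ≤ |ε| := by
        rw [← Real.sqrt_sq_eq_abs]
        exact Real.sqrt_le_sqrt (by rw [h3]; exact h6)
      calc ‖_‖ ≤ C * _ := h2
        _ ≤ C * |ε| := mul_le_mul_of_nonneg_left h10 (le_of_lt hC0)
    have hnorm : ‖p (t+ε) - p t‖ ≤ 2 * N₁⁻¹ * ‖(Real.cos (t+ε) • e₁ + Real.sin (t+ε) • e₂)
        - (Real.cos t • e₁ + Real.sin t • e₂)‖ := by
      rw [hp, hp, ← hN₁, ← hN₂]
      exact norm_normalize_sub_le _ _ _ _ hN₂ hN₁ hN₂0 hN₁0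
    calc ‖p (t+ε) - p t‖ ≤ 2 * N₁⁻¹ * _ := hnorm
      _ ≤ 2 * c⁻¹ * (C * |ε|) := by
          apply mul_le_mul _ hab (norm_nonneg _) (by positivity)
          have : N₁⁻¹ ≤ c⁻¹ := inv_anti₀ hc0 hN₁c
          linarith
      _ ≤ 2 * C ^ 2 / c ^ 2 * |ε| := by
          rw [div_mul_eq_mul_div, le_div_iff₀ (by positivity)]
          have habs : 0 ≤ |ε| := abs_nonneg ε
          have hrw : 2 * c⁻¹ * (C * |ε|) * c^2 = 2 * C * c * |ε| := by
            field_simp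
          rw [hrw]
          nlinarith [mul_le_mul_of_nonneg_left hcC (le_of_lt hC0)]
end

section
/- For every t ∈ ℝ the one-sided derivatives p'₋(t) and p'₊(t) of the polar parameterization exist and satisfy c/C ≤ min{‖p'₋(t)‖, ‖p'₊(t)‖} ≤ max{‖p'₋(t)‖, ‖p'₊(t)‖} ≤ 2C²/c². -/
open Metric Set Filter Asymptotics Topology

section helpers
variable {X : Type*} [NormedAddCommGroup X] [NormedSpace ℝ X]

lemma norm_line_right (x w : X) :
    ∃ d : ℝ, |d| ≤ ‖w‖ ∧ HasDerivWithinAt (fun s : ℝ => ‖x + s • w‖) d (Ici 0) 0 := by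
  set g : ℝ → ℝ := fun s => ‖x + s • w‖ with hgdef
  have hconv : ConvexOn ℝ univ g := by
    have h := (convexOn_norm (convex_univ (𝕜 := ℝ) (E := X))).comp_affineMap
      (AffineMap.lineMap x (x + w) : ℝ →ᵃ[ℝ] X)
    have : (fun s : ℝ => ‖x + s • w‖) = (norm ∘ (AffineMap.lineMap x (x + w) : ℝ →ᵃ[ℝ] X)) := by
      funext s
      simp [Function.comp, AffineMap.lineMap_apply, add_comm]
    rw [hgdef, this]; exact h
  have hsl : ∀ s : ℝ, s ≠ 0 → |slope g 0 s| ≤ ‖w‖ := by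
    intro s hs
    have h1 : |g s - g 0| ≤ ‖(x + s • w) - (x + (0:ℝ) • w)‖ := abs_norm_sub_norm_le _ _
    have h2 : (x + s • w) - (x + (0:ℝ) • w) = s • w := by
      simp
    rw [h2, norm_smul, Real.norm_eq_abs] at h1
    rw [slope_def_field, div_eq_mul_inv, abs_mul, abs_inv]
    rw [sub_zero]
    calc |g s - g 0| * |s|⁻¹ ≤ (|s| * ‖w‖) * |s|⁻¹ := by
          gcongr
      _ = ‖w‖ := by
          field_simp
  have hmono : MonotoneOn (slope g 0) (Ioi 0) := by
    have := hconv.slope_mono (mem_univ (0:ℝ))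
    exact this.mono (fun s hs => ⟨mem_univ s, ne_of_gt hs⟩)
  have hbdd : BddBelow (slope g 0 '' Ioi 0) := by
    refine ⟨-‖w‖, fun y hy => ?_⟩
    obtain ⟨s, hs, rfl⟩ := hy
    have := hsl s (ne_of_gt hs)
    linarith [neg_abs_le (slope g 0 s), abs_nonneg (slope g 0 s)]
  set d := sInf (slope g 0 '' Ioi 0) with hd
  have htend : Tendsto (slope g 0) (𝓝[>] 0) (𝓝 d) :=
    hmono.tendsto_nhdsGT hbdd
  refine ⟨d, ?_, ?_⟩
  · rw [abs_le]
    constructor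
    · refine le_csInf ⟨slope g 0 1, mem_image_of_mem _ (by norm_num)⟩ ?_
      rintro y ⟨s, hs, rfl⟩
      linarith [hsl s (ne_of_gt hs), neg_abs_le (slope g 0 s)]
    · refine le_trans (csInf_le hbdd (mem_image_of_mem _ (by norm_num : (1:ℝ) ∈ Ioi 0))) ?_
      linarith [hsl 1 one_ne_zero, le_abs_self (slope g 0 1)]
  · rw [hasDerivWithinAt_iff_tendsto_slope]
    rw [Ici_sdiff_left]
    exact htend

lemma norm_line_left (x w : X) :
    ∃ d : ℝ, |d| ≤ ‖w‖ ∧ HasDerivWithinAt (fun s : ℝ => ‖x + s • w‖) d (Iic 0) 0 := by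
  obtain ⟨d, hd, hder⟩ := norm_line_right x (-w)
  refine ⟨-d, by simpa using hd, ?_⟩
  have hneg : HasDerivWithinAt (fun s : ℝ => -s) (-1) (Iic 0) 0 :=
    (hasDerivAt_neg (0:ℝ)).hasDerivWithinAt
  have hmaps : MapsTo (fun s : ℝ => -s) (Iic 0) (Ici 0) := fun s hs => by
    simpa using hs
  have hder' : HasDerivWithinAt (fun s : ℝ => ‖x + s • (-w)‖) d (Ici 0) (-(0:ℝ)) := by
    simpa using hder
  have hcomp := hder'.comp (0:ℝ) hneg hmaps
  have : HasDerivWithinAt ((fun s : ℝ => ‖x + s • (-w)‖) ∘ (fun s : ℝ => -s)) (d * -1) (Iic 0) 0 :=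
    hcomp
  have heq : ∀ s : ℝ, ((fun s : ℝ => ‖x + s • (-w)‖) ∘ (fun s : ℝ => -s)) s = ‖x + s • w‖ := by
    intro s; simp [Function.comp]
  have := this.congr (fun s _ => (heq s).symm) (heq 0).symm
  simpa using this

lemma norm_comp_transfer {v : ℝ → X} {w : X} {t : ℝ} (hv : HasDerivAt v w t)
    {d : ℝ} {S : Set ℝ} (hg : HasDerivWithinAt (fun s : ℝ => ‖v t + s • w‖) d S 0) :
    HasDerivWithinAt (fun u => ‖v u‖) d ((fun u : ℝ => u - t) ⁻¹' S) t := by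
  rw [hasDerivWithinAt_iff_isLittleO] at hg ⊢
  have hφ : Tendsto (fun u : ℝ => u - t) (𝓝[(fun u : ℝ => u - t) ⁻¹' S] t) (𝓝[S] 0) := by
    rw [tendsto_nhdsWithin_iff]
    constructor
    · have h0 : Tendsto (fun u : ℝ => u - t) (𝓝 t) (𝓝 (t - t)) :=
        (continuous_sub_right t).tendsto t
      rw [sub_self] at h0
      exact h0.mono_left nhdsWithin_le_nhds
    · exact eventually_mem_nhdsWithin.mono (fun u hu => hu)
  have L1 := hg.comp_tendsto hφ
  have hv2 : (fun u => v u - v t - (u - t) • w) =o[𝓝 t] fun u => u - t :=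
    hasDerivAt_iff_isLittleO.mp hv
  have L2 : (fun u => ‖v u‖ - ‖v t + (u - t) • w‖) =o[𝓝[(fun u : ℝ => u - t) ⁻¹' S] t]
      ((fun x' : ℝ => x' - 0) ∘ fun u : ℝ => u - t) := by
    simp only [Function.comp, sub_zero]
    refine (Asymptotics.isBigO_of_le _ fun u => ?_).trans_isLittleO
      (hv2.mono nhdsWithin_le_nhds)
    have h1 : |‖v u‖ - ‖v t + (u - t) • w‖| ≤ ‖v u - (v t + (u - t) • w)‖ :=
      abs_norm_sub_norm_le _ _
    have h2 : v u - (v t + (u - t) • w) = v u - v t - (u - t) • w := by abel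
    rw [h2] at h1
    simpa [Real.norm_eq_abs] using h1
  have hsum := L1.add L2
  refine hsum.congr (fun u => ?_) (fun u => by simp [Function.comp])
  simp only [Function.comp, zero_smul, add_zero, sub_zero, smul_eq_mul]
  ring

end helpers

/-- For the polar parameterization `p` of the unit sphere of a 2-dimensional real Banach
space, with `c = min ‖e^{it}‖` and `C = max ‖e^{it}‖`, the one-sided derivatives exist
at every point and satisfy `c/C ≤ min{‖p'₋(t)‖, ‖p'₊(t)‖} ≤ max{‖p'₋(t)‖, ‖p'₊(t)‖} ≤ 2C²/c²`. -/
theorem polar_parameterization_deriv_bounds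
    {X : Type*} [NormedAddCommGroup X] [NormedSpace ℝ X] [CompleteSpace X]
    (hdim : Module.finrank ℝ X = 2)
    (e₁ e₂ : X) (hInd : LinearIndependent ℝ ![e₁, e₂])
    (p : ℝ → X)
    (hp : ∀ t, p t = ‖Real.cos t • e₁ + Real.sin t • e₂‖⁻¹ •
      (Real.cos t • e₁ + Real.sin t • e₂))
    (c C : ℝ)
    (hc : IsLeast (Set.range fun t : ℝ => ‖Real.cos t • e₁ + Real.sin t • e₂‖) c)
    (hC : IsGreatest (Set.range fun t : ℝ => ‖Real.cos t • e₁ + Real.sin t • e₂‖) C) :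
    ∀ t : ℝ, ∃ dm dp : X, HasDerivWithinAt p dm (Iic t) t ∧ HasDerivWithinAt p dp (Ici t) t ∧
      c / C ≤ min ‖dm‖ ‖dp‖ ∧ max ‖dm‖ ‖dp‖ ≤ 2 * C ^ 2 / c ^ 2 := by
  set v : ℝ → X := fun u => Real.cos u • e₁ + Real.sin u • e₂ with hv_def
  have hvd : ∀ t : ℝ, HasDerivAt v (-Real.sin t • e₁ + Real.cos t • e₂) t := by
    intro t
    exact ((Real.hasDerivAt_cos t).smul_const e₁).add ((Real.hasDerivAt_sin t).smul_const e₂)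
  have hvne : ∀ u, v u ≠ 0 := by
    intro u h
    have hpair := LinearIndependent.pair_iff.mp hInd (Real.cos u) (Real.sin u) h
    have hone := Real.sin_sq_add_cos_sq u
    rw [hpair.1, hpair.2] at hone
    norm_num at hone
  have hcpos : 0 < c := by
    obtain ⟨s₀, hs₀⟩ := hc.1
    calc (0:ℝ) < ‖v s₀‖ := norm_pos_iff.mpr (hvne s₀)
      _ = c := hs₀
  have hcC : c ≤ C := hC.2 hc.1
  have hCpos : 0 < C := lt_of_lt_of_le hcpos hcC
  have hcle : ∀ u, c ≤ ‖v u‖ := fun u => hc.2 (mem_range_self u)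
  have hleC : ∀ u, ‖v u‖ ≤ C := fun u => hC.2 (mem_range_self u)
  -- the basis
  have hcard : Fintype.card (Fin 2) = Module.finrank ℝ X := by simp [hdim]
  set b := basisOfLinearIndependentOfCardEqFinrank hInd hcard with hb_def
  have hb : ∀ i, b i = ![e₁, e₂] i := fun i =>
    congrFun (coe_basisOfLinearIndependentOfCardEqFinrank hInd hcard) i
  have hb0 : b 0 = e₁ := hb 0
  have hb1 : b 1 = e₂ := hb 1
  have hcoord : ∀ (i : Fin 2) (a₁ a₂ : ℝ), b.coord i (a₁ • e₁ + a₂ • e₂) = ![a₁, a₂] i := by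
    intro i a₁ a₂
    rw [← hb0, ← hb1]
    fin_cases i <;>
      simp [Module.Basis.coord_apply, Module.Basis.repr_self]
  -- the key pointwise functional inequality
  have key : ∀ (t : ℝ) (x : X),
      c * |(-Real.sin t) * b.coord 0 x + Real.cos t * b.coord 1 x| ≤ ‖x‖ := by
    intro t x
    set α := b.coord 0 x with hα_def
    set β := b.coord 1 x with hβ_def
    have hx : x = α • e₁ + β • e₂ := by
      have h := b.sum_repr x
      rw [Fin.sum_univ_two, hb0, hb1] at h
      rw [hα_def, hβ_def, Module.Basis.coord_apply, Module.Basis.coord_apply, h]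
    by_cases hz : (⟨α, β⟩ : ℂ) = 0
    · have hα : α = 0 := congrArg Complex.re hz
      have hβ : β = 0 := congrArg Complex.im hz
      rw [hα, hβ]
      simp
    · set ρ := ‖(⟨α, β⟩ : ℂ)‖ with hρ_def
      have hρ : 0 < ρ := norm_pos_iff.mpr hz
      set u := Complex.arg ⟨α, β⟩ with hu_def
      have hcu : Real.cos u = α / ρ := Complex.cos_arg hz
      have hsu : Real.sin u = β / ρ := Complex.sin_arg _
      have hαv : α = ρ * Real.cos u := by rw [hcu]; field_simp
      have hβv : β = ρ * Real.sin u := by rw [hsu]; field_simp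
      have hnx : ‖x‖ = ρ * ‖v u‖ := by
        rw [hx, hαv, hβv]
        have : (ρ * Real.cos u) • e₁ + (ρ * Real.sin u) • e₂ = ρ • v u := by
          rw [hv_def]
          simp [smul_add, smul_smul]
        rw [this, norm_smul, Real.norm_eq_abs, abs_of_pos hρ]
      have hGx : (-Real.sin t) * α + Real.cos t * β = ρ * Real.sin (u - t) := by
        rw [hαv, hβv, Real.sin_sub]; ring
      rw [hGx, abs_mul, abs_of_pos hρ]
      calc c * (ρ * |Real.sin (u - t)|) ≤ c * (ρ * 1) := by
            gcongr
            exact Real.abs_sin_le_one _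
        _ = c * ρ := by ring
        _ ≤ ‖v u‖ * ρ := by
            gcongr
            exact hcle u
        _ = ‖x‖ := by rw [hnx]; ring
  have hvc0 : ∀ u : ℝ, b.coord 0 (v u) = Real.cos u := by
    intro u
    rw [hv_def]
    exact hcoord 0 _ _
  have hvc1 : ∀ u : ℝ, b.coord 1 (v u) = Real.sin u := by
    intro u
    rw [hv_def]
    exact hcoord 1 _ _
  intro t
  set wt : X := -Real.sin t • e₁ + Real.cos t • e₂ with hwt_def
  set r := ‖v t‖ with hr_def
  have hwtC : ‖wt‖ ≤ C := by
    have : wt = v (t + Real.pi / 2) := by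
      rw [hwt_def, hv_def]
      simp [Real.cos_add_pi_div_two, Real.sin_add_pi_div_two]
    rw [this]
    exact hleC _
  have hwc0 : b.coord 0 wt = -Real.sin t := hcoord 0 _ _
  have hwc1 : b.coord 1 wt = Real.cos t := hcoord 1 _ _
  have hrc : c ≤ r := hcle t
  have hrC : r ≤ C := hleC t
  have hrpos : 0 < r := lt_of_lt_of_le hcpos hrc
  have side : ∀ (d : ℝ) (S : Set ℝ), |d| ≤ ‖wt‖ →
      HasDerivWithinAt (fun u => ‖v u‖) d S t →
      ∃ D : X, HasDerivWithinAt p D S t ∧ c / C ≤ ‖D‖ ∧ ‖D‖ ≤ 2 * C ^ 2 / c ^ 2 := by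
    intro d S hdle hNd
    have hdC : |d| ≤ C := hdle.trans hwtC
    have hinv : HasDerivWithinAt (fun u => ‖v u‖⁻¹) (-d / r ^ 2) S t :=
      hNd.inv (ne_of_gt hrpos)
    have hsm := hinv.smul ((hvd t).hasDerivWithinAt (s := S))
    set D : X := r⁻¹ • wt + (-d / r ^ 2) • v t with hD_def
    have hpD : HasDerivWithinAt p D S t := by
      refine hsm.congr (fun u _ => ?_) ?_
      · rw [hp u]; rfl
      · rw [hp t]; rfl
    have hGD : (-Real.sin t) * b.coord 0 D + Real.cos t * b.coord 1 D = r⁻¹ := by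
      rw [hD_def]
      simp only [map_add, map_smul, hvc0, hvc1, hwc0, hwc1, smul_eq_mul]
      have h1 := Real.sin_sq_add_cos_sq t
      field_simp
      nlinarith [h1]
    have hlow : c / C ≤ ‖D‖ := by
      have hkey := key t D
      rw [hGD, abs_of_pos (inv_pos.mpr hrpos)] at hkey
      have h1 : c / C ≤ c * r⁻¹ := by
        rw [div_eq_mul_inv]
        gcongr
      exact h1.trans hkey
    have hhigh : ‖D‖ ≤ 2 * C ^ 2 / c ^ 2 := by
      have hub : ‖D‖ ≤ c⁻¹ * C + C / c ^ 2 * C := by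
        calc ‖D‖ ≤ ‖r⁻¹ • wt‖ + ‖(-d / r ^ 2) • v t‖ := norm_add_le _ _
          _ = r⁻¹ * ‖wt‖ + |d| / r ^ 2 * ‖v t‖ := by
              rw [norm_smul, norm_smul, Real.norm_eq_abs, Real.norm_eq_abs,
                abs_of_pos (inv_pos.mpr hrpos), abs_div, abs_neg,
                abs_of_pos (pow_pos hrpos 2)]
          _ ≤ c⁻¹ * C + C / c ^ 2 * C := by
              gcongr
      have hsub : 2 * C ^ 2 / c ^ 2 - (c⁻¹ * C + C / c ^ 2 * C) = C * (C - c) / c ^ 2 := by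
        field_simp
        ring
      have hpos : 0 ≤ C * (C - c) / c ^ 2 :=
        div_nonneg (mul_nonneg hCpos.le (by linarith)) (by positivity)
      linarith
    exact ⟨D, hpD, hlow, hhigh⟩
  obtain ⟨dm0, hdm0le, hdm0⟩ := norm_line_left (v t) wt
  obtain ⟨dp0, hdp0le, hdp0⟩ := norm_line_right (v t) wt
  have hNm : HasDerivWithinAt (fun u => ‖v u‖) dm0 (Iic t) t := by
    have h := norm_comp_transfer (hvd t) hdm0
    have hset : ((fun u : ℝ => u - t) ⁻¹' Iic 0) = Iic t := by
      ext u; simp [sub_nonpos]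
    rwa [hset] at h
  have hNp : HasDerivWithinAt (fun u => ‖v u‖) dp0 (Ici t) t := by
    have h := norm_comp_transfer (hvd t) hdp0
    have hset : ((fun u : ℝ => u - t) ⁻¹' Ici 0) = Ici t := by
      ext u; simp [sub_nonneg]
    rwa [hset] at h
  obtain ⟨Dm, hDm, hDmlow, hDmhigh⟩ := side dm0 (Iic t) hdm0le hNm
  obtain ⟨Dp, hDp, hDplow, hDphigh⟩ := side dp0 (Ici t) hdp0le hNp
  exact ⟨Dm, Dp, hDm, hDp, le_min hDmlow hDplow, max_le hDmhigh hDphigh⟩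
end

section
/- The natural parameterization r : ℝ → S_X has the following properties: (1) r(s+L) = −r(s) for every s ∈ ℝ; (2) the one-sided derivatives r'₋(s) and r'₊(s) exist at every s ∈ ℝ; (3) the set {s ∈ ℝ : r'₋(s) ≠ r'₊(s)} is at most countable; (4) r is non-expanding (‖r(s) − r(s')‖ ≤ |s − s'| for all s, s' ∈ ℝ) and ‖r'₋(s)‖ = ‖r'₊(s)‖ = 1 for every s ∈ ℝ. -/
open Metric Set Filter Topology

section NPAux
variable {X : Type*} [NormedAddCommGroup X] [NormedSpace ℝ X]

noncomputable def qsl (v w : X) (u : ℝ) : ℝ := (‖v + u • w‖ - ‖v‖) / u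

lemma convexOn_nlin (v w : X) : ConvexOn ℝ univ (fun u : ℝ => ‖v + u • w‖) := by
  have h := (convexOn_univ_norm (E := X)).comp_affineMap (AffineMap.lineMap v (v + w))
  simp only [Set.preimage_univ] at h
  refine h.congr fun u _ => ?_
  simp [AffineMap.lineMap_apply, Function.comp, add_comm]

lemma qsl_mono (v w : X) {u₁ u₂ : ℝ} (h₁ : u₁ ≠ 0) (h₂ : u₂ ≠ 0) (h : u₁ ≤ u₂) :
    qsl v w u₁ ≤ qsl v w u₂ := by
  have := (convexOn_nlin v w).secant_mono (a := 0) (x := u₁) (y := u₂)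
    trivial trivial trivial h₁ h₂ h
  simpa [qsl] using this

lemma abs_qsl_le (v w : X) {u : ℝ} (hu : u ≠ 0) : |qsl v w u| ≤ ‖w‖ := by
  rw [qsl, abs_div, div_le_iff₀ (abs_pos.2 hu)]
  calc |‖v + u • w‖ - ‖v‖| ≤ ‖v + u • w - v‖ := abs_norm_sub_norm_le _ _
    _ = ‖u • w‖ := by rw [add_sub_cancel_left]
    _ = ‖w‖ * |u| := by rw [norm_smul, Real.norm_eq_abs, mul_comm]

noncomputable def rdv (v w : X) : ℝ := sInf (qsl v w '' Ioi 0)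

lemma rdv_le_qsl (v w : X) {u : ℝ} (hu : 0 < u) : rdv v w ≤ qsl v w u :=
  csInf_le ⟨qsl v w (-1), by
    rintro y ⟨u', hu', rfl⟩
    exact qsl_mono v w (by norm_num) (ne_of_gt hu') (by linarith [(mem_Ioi.1 hu').le])⟩
    (mem_image_of_mem _ hu)

lemma qsl_le_rdv (v w : X) {u : ℝ} (hu : u < 0) : qsl v w u ≤ rdv v w :=
  le_csInf (⟨qsl v w 1, mem_image_of_mem _ (by norm_num : (1:ℝ) ∈ Ioi 0)⟩) (by
    rintro y ⟨u', hu', rfl⟩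
    exact qsl_mono v w (ne_of_lt hu) (ne_of_gt hu') (by linarith [(mem_Ioi.1 hu').le]))

lemma tendsto_qsl_rdv (v w : X) : Tendsto (qsl v w) (𝓝[>] 0) (𝓝 (rdv v w)) :=
  MonotoneOn.tendsto_nhdsGT
    (fun a ha b hb hab => qsl_mono v w (ne_of_gt ha) (ne_of_gt hb) hab)
    ⟨qsl v w (-1), by rintro y ⟨u', hu', rfl⟩
                      exact qsl_mono v w (by norm_num) (ne_of_gt hu') (by linarith [(mem_Ioi.1 hu').le])⟩

noncomputable def ldv (v w : X) : ℝ := -rdv v (-w)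

lemma qsl_neg (v w : X) (u : ℝ) : qsl v (-w) u = -qsl v w (-u) := by
  simp [qsl, neg_div, div_neg, smul_neg, neg_smul]

lemma tendsto_qsl_ldv (v w : X) : Tendsto (qsl v w) (𝓝[<] 0) (𝓝 (ldv v w)) := by
  have h1 : Tendsto (fun u : ℝ => -u) (𝓝[<] (0:ℝ)) (𝓝[>] (0:ℝ)) := by
    have h0 : ContinuousWithinAt (fun u : ℝ => -u) (Iio 0) 0 :=
      (continuous_neg.continuousWithinAt)
    have := h0.tendsto_nhdsWithin (fun x hx => by simpa using hx : MapsTo (fun u : ℝ => -u) (Iio 0) (Ioi 0))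
    simpa using this
  have h2 := (tendsto_qsl_rdv v (-w)).comp h1
  have h3 : Tendsto (fun u => -(qsl v (-w) (-u))) (𝓝[<] (0:ℝ)) (𝓝 (-rdv v (-w))) :=
    (h2.neg)
  refine h3.congr fun u => ?_
  rw [qsl_neg, neg_neg, neg_neg]

lemma ldv_le_rdv (v w : X) : ldv v w ≤ rdv v w :=
  le_of_tendsto (tendsto_qsl_ldv v w)
    (eventually_nhdsWithin_of_forall (fun u hu => qsl_le_rdv v w hu))

lemma qsl_le_ldv (v w : X) {u : ℝ} (hu : u < 0) : qsl v w u ≤ ldv v w :=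
  ge_of_tendsto (tendsto_qsl_ldv v w) (by
    filter_upwards [Ioo_mem_nhdsLT hu] with u' hu'
    exact qsl_mono v w (ne_of_lt hu) (ne_of_lt hu'.2) hu'.1.le)

lemma abs_rdv_le (v w : X) : |rdv v w| ≤ ‖w‖ := by
  rw [abs_le]
  constructor
  · have := qsl_le_rdv v w (u := -1) (by norm_num)
    have h2 := abs_qsl_le v w (u := -1) (by norm_num)
    rw [abs_le] at h2; linarith [h2.1]
  · have := rdv_le_qsl v w (u := 1) one_pos
    have h2 := abs_qsl_le v w (u := 1) (by norm_num)
    rw [abs_le] at h2; linarith [h2.2]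


lemma rdv_unique {v w : X} {d : ℝ} (h : Tendsto (qsl v w) (𝓝[>] (0:ℝ)) (𝓝 d)) :
    rdv v w = d :=
  tendsto_nhds_unique (tendsto_qsl_rdv v w) h

/-- helper: a map tending to `0` within `Ioi 0`. -/
lemma tendsto_Ioi_zero_of {φ : ℝ → ℝ} (h : Tendsto φ (𝓝[>] (0:ℝ)) (𝓝 (0:ℝ)))
    (hpos : ∀ᶠ u in 𝓝[>] (0:ℝ), 0 < φ u) : Tendsto φ (𝓝[>] (0:ℝ)) (𝓝[>] (0:ℝ)) := by
  rw [tendsto_nhdsWithin_iff]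
  exact ⟨h, hpos⟩

lemma rdv_smul_left {a : ℝ} (ha : 0 < a) (v w : X) : rdv (a • v) w = rdv v w := by
  refine rdv_unique ?_
  have key : ∀ u : ℝ, u ≠ 0 → qsl (a • v) w u = qsl v w (u / a) := by
    intro u hu
    have hv : a • v + u • w = a • (v + (u / a) • w) := by
      match_scalars <;> field_simp
    simp only [qsl]
    rw [hv, norm_smul, norm_smul, Real.norm_eq_abs, abs_of_pos ha]
    field_simp
  have hφ : Tendsto (fun u : ℝ => u / a) (𝓝[>] (0:ℝ)) (𝓝[>] (0:ℝ)) := by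
    refine tendsto_Ioi_zero_of ?_ ?_
    · have hc : Continuous fun u : ℝ => u / a := by fun_prop
      simpa using (hc.tendsto (0:ℝ)).mono_left nhdsWithin_le_nhds
    · filter_upwards [self_mem_nhdsWithin] with u hu
      exact div_pos hu ha
  refine ((tendsto_qsl_rdv v w).comp hφ).congr' ?_
  filter_upwards [self_mem_nhdsWithin] with u hu
  exact (key u (ne_of_gt hu)).symm

lemma rdv_smul_right {b : ℝ} (hb : 0 < b) (v w : X) : rdv v (b • w) = b * rdv v w := by
  refine rdv_unique ?_
  have key : ∀ u : ℝ, u ≠ 0 → qsl v (b • w) u = b * qsl v w (u * b) := by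
    intro u hu
    simp only [qsl]
    rw [smul_smul]
    field_simp
  have hφ : Tendsto (fun u : ℝ => u * b) (𝓝[>] (0:ℝ)) (𝓝[>] (0:ℝ)) := by
    refine tendsto_Ioi_zero_of ?_ ?_
    · have hc : Continuous fun u : ℝ => u * b := by fun_prop
      simpa using (hc.tendsto (0:ℝ)).mono_left nhdsWithin_le_nhds
    · filter_upwards [self_mem_nhdsWithin] with u hu
      exact mul_pos hu hb
  have := (((tendsto_qsl_rdv v w).comp hφ).const_mul b)
  refine (this.congr' ?_)
  filter_upwards [self_mem_nhdsWithin] with u hu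
  exact (key u (ne_of_gt hu)).symm

lemma rdv_add_smul (v w : X) (a : ℝ) : rdv v (w + a • v) = rdv v w + a * ‖v‖ := by
  refine rdv_unique ?_
  have key : ∀ u : ℝ, u ≠ 0 → 0 < 1 + u * a →
      qsl v (w + a • v) u = qsl v w (u / (1 + u * a)) + a * ‖v‖ := by
    intro u hu hb
    have hv : v + u • (w + a • v) = (1 + u * a) • (v + (u / (1 + u * a)) • w) := by
      match_scalars <;> field_simp
    simp only [qsl]
    rw [hv, norm_smul, Real.norm_eq_abs, abs_of_pos hb]
    field_simp
    ring
  have hφ : Tendsto (fun u : ℝ => u / (1 + u * a)) (𝓝[>] (0:ℝ)) (𝓝[>] (0:ℝ)) := by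
    have hcont : ContinuousAt (fun u : ℝ => u / (1 + u * a)) 0 := by
      apply ContinuousAt.div
      · exact continuousAt_id
      · fun_prop
      · norm_num
    have hb : ∀ᶠ u in 𝓝[>] (0:ℝ), 0 < 1 + u * a := by
      have : Tendsto (fun u : ℝ => 1 + u * a) (𝓝[>] (0:ℝ)) (𝓝 (1:ℝ)) := by
        have hc : Continuous fun u : ℝ => 1 + u * a := by fun_prop
        simpa using (hc.tendsto (0:ℝ)).mono_left nhdsWithin_le_nhds
      exact this.eventually (eventually_gt_nhds one_pos)
    refine tendsto_Ioi_zero_of ?_ ?_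
    · simpa using hcont.continuousWithinAt.tendsto
    · filter_upwards [hb, self_mem_nhdsWithin] with u h1 h2
      exact div_pos h2 h1
  have hb : ∀ᶠ u in 𝓝[>] (0:ℝ), 0 < 1 + u * a := by
    have : Tendsto (fun u : ℝ => 1 + u * a) (𝓝[>] (0:ℝ)) (𝓝 (1:ℝ)) := by
      have hc : Continuous fun u : ℝ => 1 + u * a := by fun_prop
      simpa using (hc.tendsto (0:ℝ)).mono_left nhdsWithin_le_nhds
    exact this.eventually (eventually_gt_nhds one_pos)
  have h2 : Tendsto (fun u : ℝ => qsl v w (u / (1 + u * a)) + a * ‖v‖) (𝓝[>] (0:ℝ))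
      (𝓝 (rdv v w + a * ‖v‖)) := ((tendsto_qsl_rdv v w).comp hφ).add_const _
  refine h2.congr' ?_
  filter_upwards [hb, self_mem_nhdsWithin] with u h1 h0
  exact (key u (ne_of_gt h0) h1).symm

lemma rdv_neg_neg (v w : X) : rdv (-v) (-w) = rdv v w := by
  have : qsl (-v) (-w) = qsl v w := by
    funext u
    simp only [qsl]
    rw [smul_neg, ← neg_add, norm_neg, norm_neg]
  unfold rdv
  rw [this]


lemma qsl_shift (v w : X) (u u' : ℝ) :
    qsl (v + u • w) w (u' - u) = (‖v + u' • w‖ - ‖v + u • w‖) / (u' - u) := by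
  simp only [qsl]
  congr 2
  rw [add_assoc, ← add_smul, add_sub_cancel]

lemma qsl_shift' (v w : X) (u u' : ℝ) :
    qsl (v + u • w) w (u' - u) = qsl (v + u' • w) w (u - u') := by
  rw [qsl_shift, qsl_shift, ← neg_div_neg_eq]
  congr 1 <;> ring

lemma rdv_le_ldv_of_lt (v w : X) {u u' : ℝ} (h : u < u') :
    rdv (v + u • w) w ≤ ldv (v + u' • w) w := by
  calc rdv (v + u • w) w ≤ qsl (v + u • w) w (u' - u) := rdv_le_qsl _ _ (by linarith)
    _ = qsl (v + u' • w) w (u - u') := qsl_shift' v w u u'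
    _ ≤ ldv (v + u' • w) w := qsl_le_ldv _ _ (by linarith)

lemma rdv_line_mono (v w : X) : Monotone (fun u : ℝ => rdv (v + u • w) w) := by
  intro u u' h
  rcases eq_or_lt_of_le h with rfl | h
  · exact le_rfl
  · exact (rdv_le_ldv_of_lt v w h).trans (ldv_le_rdv _ _)

lemma rdv_line_bddBelow (v w : X) : BddBelow ((fun u : ℝ => rdv (v + u • w) w) '' Ioi 0) :=
  ⟨rdv (v + (0:ℝ) • w) w, by rintro y ⟨u, hu, rfl⟩; exact rdv_line_mono v w hu.le⟩

lemma tendsto_rdv_line_right (v w : X) :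
    Tendsto (fun u : ℝ => rdv (v + u • w) w) (𝓝[>] 0) (𝓝 (rdv v w)) := by
  set R : ℝ → ℝ := fun u => rdv (v + u • w) w with hR
  have hmono : Monotone R := rdv_line_mono v w
  have h0 : R 0 = rdv v w := by simp [hR]
  have htend : Tendsto R (𝓝[>] 0) (𝓝 (sInf (R '' Ioi 0))) :=
    MonotoneOn.tendsto_nhdsGT (hmono.monotoneOn _) (rdv_line_bddBelow v w)
  have hle : rdv v w ≤ sInf (R '' Ioi 0) := by
    refine le_csInf ⟨R 1, mem_image_of_mem _ (by norm_num)⟩ ?_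
    rintro y ⟨u, hu, rfl⟩
    rw [← h0]; exact hmono (le_of_lt hu)
  have hge : sInf (R '' Ioi 0) ≤ rdv v w := by
    have key : ∀ u' : ℝ, 0 < u' → sInf (R '' Ioi 0) ≤ qsl v w u' := by
      intro u' hu'
      have hcont : Tendsto (fun u : ℝ => (‖v + u' • w‖ - ‖v + u • w‖) / (u' - u))
          (𝓝[>] (0:ℝ)) (𝓝 (qsl v w u')) := by
        have hc : ContinuousAt (fun u : ℝ => (‖v + u' • w‖ - ‖v + u • w‖) / (u' - u)) 0 := by
          apply ContinuousAt.div
          · fun_prop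
          · fun_prop
          · simpa using hu'.ne'
        have : (fun u : ℝ => (‖v + u' • w‖ - ‖v + u • w‖) / (u' - u)) 0 = qsl v w u' := by
          simp [qsl]
        rw [← this]
        exact hc.continuousWithinAt.tendsto
      refine ge_of_tendsto hcont ?_
      filter_upwards [Ioo_mem_nhdsGT hu'] with u hu
      calc sInf (R '' Ioi 0) ≤ R u := csInf_le (rdv_line_bddBelow v w)
            (mem_image_of_mem _ hu.1)
        _ ≤ qsl (v + u • w) w (u' - u) := rdv_le_qsl _ _ (by linarith [hu.2])
        _ = (‖v + u' • w‖ - ‖v + u • w‖) / (u' - u) := qsl_shift v w u u'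
    refine le_csInf ⟨qsl v w 1, mem_image_of_mem _ (by norm_num)⟩ ?_
    rintro y ⟨u', hu', rfl⟩
    exact key u' hu'
  rw [le_antisymm hge hle] at htend
  exact htend

lemma tendsto_rdv_line_left (v w : X) :
    Tendsto (fun u : ℝ => rdv (v + u • w) w) (𝓝[<] 0) (𝓝 (ldv v w)) := by
  set R : ℝ → ℝ := fun u => rdv (v + u • w) w with hR
  have hmono : Monotone R := rdv_line_mono v w
  have hbdd : BddAbove (R '' Iio 0) :=
    ⟨R 0, by rintro y ⟨u, hu, rfl⟩; exact hmono hu.le⟩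
  have htend : Tendsto R (𝓝[<] 0) (𝓝 (sSup (R '' Iio 0))) :=
    MonotoneOn.tendsto_nhdsLT (hmono.monotoneOn _) hbdd
  have hle : sSup (R '' Iio 0) ≤ ldv v w := by
    refine csSup_le ⟨R (-1), mem_image_of_mem _ (by norm_num)⟩ ?_
    rintro y ⟨u, hu, rfl⟩
    have := rdv_le_ldv_of_lt v w (u := u) (u' := 0) hu
    simpa using this
  have hge : ldv v w ≤ sSup (R '' Iio 0) := by
    have key : ∀ u'' : ℝ, u'' < 0 → qsl v w u'' ≤ sSup (R '' Iio 0) := by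
      intro u'' hu''
      have hcont : Tendsto (fun u : ℝ => (‖v + u'' • w‖ - ‖v + u • w‖) / (u'' - u))
          (𝓝[<] (0:ℝ)) (𝓝 (qsl v w u'')) := by
        have hc : ContinuousAt (fun u : ℝ => (‖v + u'' • w‖ - ‖v + u • w‖) / (u'' - u)) 0 := by
          apply ContinuousAt.div
          · fun_prop
          · fun_prop
          · simpa using hu''.ne
        have : (fun u : ℝ => (‖v + u'' • w‖ - ‖v + u • w‖) / (u'' - u)) 0 = qsl v w u'' := by
          simp [qsl]
        rw [← this]
        exact hc.continuousWithinAt.tendsto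
      refine le_of_tendsto hcont ?_
      filter_upwards [Ioo_mem_nhdsLT hu''] with u hu
      calc (‖v + u'' • w‖ - ‖v + u • w‖) / (u'' - u)
          = qsl (v + u • w) w (u'' - u) := (qsl_shift v w u u'').symm
        _ ≤ ldv (v + u • w) w := qsl_le_ldv _ _ (by linarith [hu.1])
        _ ≤ R u := ldv_le_rdv _ _
        _ ≤ sSup (R '' Iio 0) := le_csSup hbdd (mem_image_of_mem _ hu.2)
    exact le_of_tendsto (tendsto_qsl_ldv v w)
      (by filter_upwards [self_mem_nhdsWithin] with u hu; exact key u hu)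
  rw [le_antisymm hle hge] at htend
  exact htend

lemma tendsto_rdv_line_right_at (v w : X) (u₀ : ℝ) :
    Tendsto (fun u : ℝ => rdv (v + u • w) w) (𝓝[>] u₀) (𝓝 (rdv (v + u₀ • w) w)) := by
  have hsub : Tendsto (fun u : ℝ => u - u₀) (𝓝[>] u₀) (𝓝[>] (0:ℝ)) := by
    rw [tendsto_nhdsWithin_iff]
    constructor
    · have hc : Continuous fun u : ℝ => u - u₀ := by fun_prop
      simpa using (hc.tendsto u₀).mono_left nhdsWithin_le_nhds
    · filter_upwards [self_mem_nhdsWithin] with u hu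
      simpa [sub_pos] using hu
  have := (tendsto_rdv_line_right (v + u₀ • w) w).comp hsub
  refine this.congr fun u => ?_
  simp only [Function.comp]
  congr 1
  rw [add_assoc, ← add_smul, add_sub_cancel]

lemma tendsto_rdv_line_left_at (v w : X) (u₀ : ℝ) :
    Tendsto (fun u : ℝ => rdv (v + u • w) w) (𝓝[<] u₀) (𝓝 (ldv (v + u₀ • w) w)) := by
  have hsub : Tendsto (fun u : ℝ => u - u₀) (𝓝[<] u₀) (𝓝[<] (0:ℝ)) := by
    rw [tendsto_nhdsWithin_iff]
    constructor
    · have hc : Continuous fun u : ℝ => u - u₀ := by fun_prop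
      simpa using (hc.tendsto u₀).mono_left nhdsWithin_le_nhds
    · filter_upwards [self_mem_nhdsWithin] with u hu
      simpa [sub_neg] using hu
  have := (tendsto_rdv_line_left (v + u₀ • w) w).comp hsub
  refine this.congr fun u => ?_
  simp only [Function.comp]
  congr 1
  rw [add_assoc, ← add_smul, add_sub_cancel]

lemma countable_ldv_ne_rdv (v w : X) :
    Set.Countable {u : ℝ | ldv (v + u • w) w ≠ rdv (v + u • w) w} := by
  have hmono : Monotone (fun u : ℝ => rdv (v + u • w) w) := rdv_line_mono v w
  refine (hmono.countable_not_continuousAt).mono ?_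
  intro u hu
  simp only [mem_setOf_eq] at hu ⊢
  intro hcont
  have h1 : Tendsto (fun u' : ℝ => rdv (v + u' • w) w) (𝓝[<] u)
      (𝓝 (rdv (v + u • w) w)) := (hcont.tendsto).mono_left nhdsWithin_le_nhds
  exact hu (tendsto_nhds_unique (tendsto_rdv_line_left_at v w u) h1)


lemma abs_ldv_le (v w : X) : |ldv v w| ≤ ‖w‖ := by
  rw [ldv, abs_neg]
  simpa using abs_rdv_le v (-w)

lemma ldv_smul_left {a : ℝ} (ha : 0 < a) (v w : X) : ldv (a • v) w = ldv v w := by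
  rw [ldv, ldv, rdv_smul_left ha]

lemma ldv_smul_right {b : ℝ} (hb : 0 < b) (v w : X) : ldv v (b • w) = b * ldv v w := by
  rw [ldv, ldv, ← smul_neg, rdv_smul_right hb]
  ring

lemma ldv_add_smul (v w : X) (a : ℝ) : ldv v (w + a • v) = ldv v w + a * ‖v‖ := by
  rw [ldv, ldv, neg_add, ← neg_smul, rdv_add_smul]
  ring




noncomputable def ccv (e₁ e₂ : X) (t : ℝ) : X := Real.cos t • e₁ + Real.sin t • e₂
noncomputable def cdv (e₁ e₂ : X) (t : ℝ) : X := (-Real.sin t) • e₁ + Real.cos t • e₂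

section CC

variable (e₁ e₂ : X)

lemma continuous_ccv : Continuous (ccv e₁ e₂) := by
  unfold ccv; fun_prop

lemma continuous_cdv : Continuous (cdv e₁ e₂) := by
  unfold cdv; fun_prop

lemma hasDerivAt_ccv (t : ℝ) : HasDerivAt (ccv e₁ e₂) (cdv e₁ e₂ t) t := by
  unfold ccv cdv
  exact ((Real.hasDerivAt_cos t).smul_const e₁).add ((Real.hasDerivAt_sin t).smul_const e₂)

lemma ccv_rot (t θ : ℝ) :
    ccv e₁ e₂ (t + θ) = Real.cos θ • ccv e₁ e₂ t + Real.sin θ • cdv e₁ e₂ t := by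
  unfold ccv cdv
  rw [Real.cos_add, Real.sin_add]
  match_scalars <;> ring

lemma cdv_rot (t θ : ℝ) :
    cdv e₁ e₂ (t + θ) = Real.cos θ • cdv e₁ e₂ t - Real.sin θ • ccv e₁ e₂ t := by
  unfold ccv cdv
  rw [Real.cos_add, Real.sin_add]
  match_scalars <;> ring

lemma ccv_pi (t : ℝ) : ccv e₁ e₂ (t + Real.pi) = -ccv e₁ e₂ t := by
  unfold ccv
  rw [Real.cos_add_pi, Real.sin_add_pi]
  match_scalars <;> ring

lemma cdv_pi (t : ℝ) : cdv e₁ e₂ (t + Real.pi) = -cdv e₁ e₂ t := by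
  unfold cdv
  rw [Real.cos_add_pi, Real.sin_add_pi]
  match_scalars <;> ring

variable {e₁ e₂}
variable (hInd : LinearIndependent ℝ ![e₁, e₂])
include hInd

lemma lin_cc_cd (t : ℝ) {a b : ℝ} (h : a • ccv e₁ e₂ t + b • cdv e₁ e₂ t = 0) :
    a = 0 ∧ b = 0 := by
  have hp := LinearIndependent.pair_iff.1 hInd
  unfold ccv cdv at h
  have h' : (a * Real.cos t + b * (-Real.sin t)) • e₁
      + (a * Real.sin t + b * Real.cos t) • e₂ = 0 := by
    rw [add_smul, add_smul, mul_smul, mul_smul, mul_smul, mul_smul]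
    rw [smul_add, smul_add] at h
    rw [← h]; abel
  obtain ⟨h1, h2⟩ := hp _ _ h'
  have hpyth := Real.sin_sq_add_cos_sq t
  constructor
  · linear_combination Real.cos t * h1 + Real.sin t * h2 - a * hpyth
  · linear_combination (-Real.sin t) * h1 + Real.cos t * h2 - b * hpyth

lemma ccv_ne (t : ℝ) : ccv e₁ e₂ t ≠ 0 := by
  intro h
  have : (1:ℝ) • ccv e₁ e₂ t + (0:ℝ) • cdv e₁ e₂ t = 0 := by simp [h]
  exact one_ne_zero (lin_cc_cd hInd t this).1




end CC

noncomputable def Nf (e₁ e₂ : X) (t : ℝ) : ℝ := ‖ccv e₁ e₂ t‖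
noncomputable def Nr (e₁ e₂ : X) (t : ℝ) : ℝ := rdv (ccv e₁ e₂ t) (cdv e₁ e₂ t)
noncomputable def Nl (e₁ e₂ : X) (t : ℝ) : ℝ := ldv (ccv e₁ e₂ t) (cdv e₁ e₂ t)
noncomputable def Pr (e₁ e₂ : X) (t : ℝ) : X :=
  (Nf e₁ e₂ t)⁻¹ • cdv e₁ e₂ t - (Nr e₁ e₂ t / (Nf e₁ e₂ t) ^ 2) • ccv e₁ e₂ t
noncomputable def Pl (e₁ e₂ : X) (t : ℝ) : X :=
  (Nf e₁ e₂ t)⁻¹ • cdv e₁ e₂ t - (Nl e₁ e₂ t / (Nf e₁ e₂ t) ^ 2) • ccv e₁ e₂ t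
noncomputable def Ff (e₁ e₂ : X) (t : ℝ) : ℝ := ‖Pr e₁ e₂ t‖
noncomputable def Fl (e₁ e₂ : X) (t : ℝ) : ℝ := ‖Pl e₁ e₂ t‖

section C2
variable {e₁ e₂ : X}

lemma continuous_Nf : Continuous (Nf e₁ e₂) := (continuous_ccv e₁ e₂).norm

lemma tendsto_sub_right (t : ℝ) : Tendsto (fun x : ℝ => x - t) (𝓝[>] t) (𝓝[>] (0:ℝ)) := by
  rw [tendsto_nhdsWithin_iff]
  constructor
  · have hc : Continuous fun x : ℝ => x - t := by fun_prop
    simpa using (hc.tendsto t).mono_left nhdsWithin_le_nhds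
  · filter_upwards [self_mem_nhdsWithin] with x hx
    simpa [sub_pos] using hx

lemma tendsto_sub_left (t : ℝ) : Tendsto (fun x : ℝ => x - t) (𝓝[<] t) (𝓝[<] (0:ℝ)) := by
  rw [tendsto_nhdsWithin_iff]
  constructor
  · have hc : Continuous fun x : ℝ => x - t := by fun_prop
    simpa using (hc.tendsto t).mono_left nhdsWithin_le_nhds
  · filter_upwards [self_mem_nhdsWithin] with x hx
    simpa [sub_neg] using hx

/-- the slope of `Nf` at `t` is asymptotic to `qsl` slopes -/
lemma tendsto_slope_Nf_aux (t : ℝ) {l : Filter ℝ} (hl : l ≤ 𝓝[≠] t) {d : ℝ}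
    (hq : Tendsto (fun x : ℝ => qsl (ccv e₁ e₂ t) (cdv e₁ e₂ t) (x - t)) l (𝓝 d)) :
    Tendsto (slope (Nf e₁ e₂) t) l (𝓝 d) := by
  set A : ℝ → ℝ := fun x => qsl (ccv e₁ e₂ t) (cdv e₁ e₂ t) (x - t) with hA
  have herr : Tendsto (fun x => slope (Nf e₁ e₂) t x - A x) l (𝓝 0) := by
    have hslope : Tendsto (fun x => ‖slope (ccv e₁ e₂) t x - cdv e₁ e₂ t‖) l (𝓝 0) := by
      have h1 : Tendsto (slope (ccv e₁ e₂) t) (𝓝[≠] t) (𝓝 (cdv e₁ e₂ t)) :=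
        hasDerivAt_iff_tendsto_slope.1 (hasDerivAt_ccv e₁ e₂ t)
      have := (h1.mono_left hl).sub_const (cdv e₁ e₂ t)
      simpa using this.norm
    refine squeeze_zero_norm ?_ hslope
    intro x
    rcases eq_or_ne x t with rfl | hx
    · simp [hA, slope_same, qsl]
    · have hxt : x - t ≠ 0 := sub_ne_zero.2 hx
      have e1 : slope (Nf e₁ e₂) t x = (‖ccv e₁ e₂ x‖ - ‖ccv e₁ e₂ t‖) / (x - t) := by
        rw [slope_def_field]; rfl
      have e2 : A x = (‖ccv e₁ e₂ t + (x - t) • cdv e₁ e₂ t‖ - ‖ccv e₁ e₂ t‖) / (x - t) := rfl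
      rw [e1, e2, div_sub_div_same, Real.norm_eq_abs, abs_div]
      rw [div_le_iff₀ (abs_pos.2 hxt)]
      have e3 : slope (ccv e₁ e₂) t x - cdv e₁ e₂ t
          = (x - t)⁻¹ • (ccv e₁ e₂ x - ccv e₁ e₂ t - (x - t) • cdv e₁ e₂ t) := by
        rw [slope_def_module]
        match_scalars <;> field_simp
      calc |‖ccv e₁ e₂ x‖ - ‖ccv e₁ e₂ t‖ - (‖ccv e₁ e₂ t + (x - t) • cdv e₁ e₂ t‖ - ‖ccv e₁ e₂ t‖)|
          = |‖ccv e₁ e₂ x‖ - ‖ccv e₁ e₂ t + (x - t) • cdv e₁ e₂ t‖| := by congr 1; ring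
        _ ≤ ‖ccv e₁ e₂ x - (ccv e₁ e₂ t + (x - t) • cdv e₁ e₂ t)‖ := abs_norm_sub_norm_le _ _
        _ = ‖slope (ccv e₁ e₂) t x - cdv e₁ e₂ t‖ * |x - t| := by
            rw [e3, norm_smul, Real.norm_eq_abs, abs_inv, mul_comm]
            rw [← mul_assoc, mul_inv_cancel₀ (abs_ne_zero.2 hxt), one_mul]
            congr 1
            abel_nf
  have := hq.add herr
  simp only [add_zero] at this
  refine this.congr fun x => ?_
  ring

lemma hasDerivWithinAt_Nf_right (t : ℝ) :
    HasDerivWithinAt (Nf e₁ e₂) (Nr e₁ e₂ t) (Ici t) t := by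
  rw [hasDerivWithinAt_iff_tendsto_slope, Ici_sdiff_left]
  refine tendsto_slope_Nf_aux t (nhdsWithin_mono t fun x hx => ne_of_gt hx) ?_
  exact (tendsto_qsl_rdv _ _).comp (tendsto_sub_right t)

lemma hasDerivWithinAt_Nf_left (t : ℝ) :
    HasDerivWithinAt (Nf e₁ e₂) (Nl e₁ e₂ t) (Iic t) t := by
  rw [hasDerivWithinAt_iff_tendsto_slope, Iic_diff_right]
  refine tendsto_slope_Nf_aux t (nhdsWithin_mono t fun x hx => ne_of_lt hx) ?_
  exact (tendsto_qsl_ldv _ _).comp (tendsto_sub_left t)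

variable (hInd : LinearIndependent ℝ ![e₁, e₂])
include hInd

lemma Nf_pos (t : ℝ) : 0 < Nf e₁ e₂ t := norm_pos_iff.2 (ccv_ne hInd t)

lemma hasDerivWithinAt_curve_right (t : ℝ) :
    HasDerivWithinAt (fun x => (Nf e₁ e₂ x)⁻¹ • ccv e₁ e₂ x) (Pr e₁ e₂ t) (Ici t) t := by
  have h := ((hasDerivWithinAt_Nf_right t).inv (Nf_pos hInd t).ne').smul
    ((hasDerivAt_ccv e₁ e₂ t).hasDerivWithinAt (s := Ici t))
  convert h using 1
  · rfl
  rw [Pr, sub_eq_add_neg, ← neg_smul, neg_div]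
  rfl

lemma hasDerivWithinAt_curve_left (t : ℝ) :
    HasDerivWithinAt (fun x => (Nf e₁ e₂ x)⁻¹ • ccv e₁ e₂ x) (Pl e₁ e₂ t) (Iic t) t := by
  have h := ((hasDerivWithinAt_Nf_left t).inv (Nf_pos hInd t).ne').smul
    ((hasDerivAt_ccv e₁ e₂ t).hasDerivWithinAt (s := Iic t))
  convert h using 1
  · rfl
  rw [Pl, sub_eq_add_neg, ← neg_smul, neg_div]
  rfl

lemma Ff_pos (t : ℝ) : 0 < Ff e₁ e₂ t := by
  rw [Ff, norm_pos_iff]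
  intro h
  have h' : (-(Nr e₁ e₂ t / (Nf e₁ e₂ t) ^ 2)) • ccv e₁ e₂ t
      + (Nf e₁ e₂ t)⁻¹ • cdv e₁ e₂ t = 0 := by
    rw [← h, Pr]; module
  exact (inv_ne_zero (Nf_pos hInd t).ne') (lin_cc_cd hInd t h').2

lemma Fl_pos (t : ℝ) : 0 < Fl e₁ e₂ t := by
  rw [Fl, norm_pos_iff]
  intro h
  have h' : (-(Nl e₁ e₂ t / (Nf e₁ e₂ t) ^ 2)) • ccv e₁ e₂ t
      + (Nf e₁ e₂ t)⁻¹ • cdv e₁ e₂ t = 0 := by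
    rw [← h, Pl]; module
  exact (inv_ne_zero (Nf_pos hInd t).ne') (lin_cc_cd hInd t h').2




end C2

section C3
variable {e₁ e₂ : X}
lemma continuousAt_tan_sub (t : ℝ) : ContinuousAt (fun x : ℝ => Real.tan (x - t)) t := by
  have heq : (fun x : ℝ => Real.tan (x - t)) = fun x => Real.sin (x - t) / Real.cos (x - t) :=
    funext fun x => Real.tan_eq_sin_div_cos _
  rw [heq]
  apply ContinuousAt.div
  · fun_prop
  · fun_prop
  · simp

lemma Nr_rot (t θ : ℝ) (hθ : θ ∈ Ioo (-(Real.pi/2)) (Real.pi/2)) :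
    Nr e₁ e₂ (t + θ) = (Real.cos θ)⁻¹ * rdv (ccv e₁ e₂ t + Real.tan θ • cdv e₁ e₂ t)
      (cdv e₁ e₂ t) - Real.sin θ * ‖ccv e₁ e₂ t + Real.tan θ • cdv e₁ e₂ t‖ := by
  have hcos : 0 < Real.cos θ := Real.cos_pos_of_mem_Ioo hθ
  have hpyth := Real.sin_sq_add_cos_sq θ
  set v : X := ccv e₁ e₂ t + Real.tan θ • cdv e₁ e₂ t with hv
  have step1 : ccv e₁ e₂ (t + θ) = Real.cos θ • v := by
    rw [ccv_rot, hv, Real.tan_eq_sin_div_cos]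
    match_scalars <;> field_simp <;> linear_combination hpyth
  have step2 : cdv e₁ e₂ (t + θ) =
      (Real.cos θ)⁻¹ • cdv e₁ e₂ t + (-Real.sin θ) • v := by
    rw [cdv_rot, hv, Real.tan_eq_sin_div_cos]
    match_scalars <;> field_simp <;> linear_combination hpyth
  simp only [Nr]
  rw [step1, step2, rdv_smul_left hcos, rdv_add_smul, rdv_smul_right (inv_pos.2 hcos)]
  ring

lemma Nl_rot (t θ : ℝ) (hθ : θ ∈ Ioo (-(Real.pi/2)) (Real.pi/2)) :
    Nl e₁ e₂ (t + θ) = (Real.cos θ)⁻¹ * ldv (ccv e₁ e₂ t + Real.tan θ • cdv e₁ e₂ t)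
      (cdv e₁ e₂ t) - Real.sin θ * ‖ccv e₁ e₂ t + Real.tan θ • cdv e₁ e₂ t‖ := by
  have hcos : 0 < Real.cos θ := Real.cos_pos_of_mem_Ioo hθ
  have hpyth := Real.sin_sq_add_cos_sq θ
  set v : X := ccv e₁ e₂ t + Real.tan θ • cdv e₁ e₂ t with hv
  have step1 : ccv e₁ e₂ (t + θ) = Real.cos θ • v := by
    rw [ccv_rot, hv, Real.tan_eq_sin_div_cos]
    match_scalars <;> field_simp <;> linear_combination hpyth
  have step2 : cdv e₁ e₂ (t + θ) =
      (Real.cos θ)⁻¹ • cdv e₁ e₂ t + (-Real.sin θ) • v := by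
    rw [cdv_rot, hv, Real.tan_eq_sin_div_cos]
    match_scalars <;> field_simp <;> linear_combination hpyth
  simp only [Nl]
  rw [step1, step2, ldv_smul_left hcos, ldv_add_smul, ldv_smul_right (inv_pos.2 hcos)]
  ring

lemma tendsto_tan_sub_right (t : ℝ) :
    Tendsto (fun x : ℝ => Real.tan (x - t)) (𝓝[>] t) (𝓝[>] (0:ℝ)) := by
  rw [tendsto_nhdsWithin_iff]
  constructor
  · simpa using (continuousAt_tan_sub t).continuousWithinAt.tendsto
  · filter_upwards [Ioo_mem_nhdsGT (lt_add_one t)] with x hx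
    exact Real.tan_pos_of_pos_of_lt_pi_div_two (by linarith [hx.1])
      (by nlinarith [Real.pi_gt_three, hx.1, hx.2])

lemma tendsto_tan_sub_left (t : ℝ) :
    Tendsto (fun x : ℝ => Real.tan (x - t)) (𝓝[<] t) (𝓝[<] (0:ℝ)) := by
  rw [tendsto_nhdsWithin_iff]
  constructor
  · simpa using (continuousAt_tan_sub t).continuousWithinAt.tendsto
  · filter_upwards [Ioo_mem_nhdsLT (by linarith : t - 1 < t)] with x hx
    have h1 : 0 < Real.tan (t - x) := Real.tan_pos_of_pos_of_lt_pi_div_two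
      (by linarith [hx.2]) (by nlinarith [Real.pi_gt_three, hx.1, hx.2])
    have h2 : Real.tan (x - t) = -Real.tan (t - x) := by
      rw [← Real.tan_neg]; congr 1; ring
    rw [mem_Iio, h2]; linarith

lemma tendsto_Nr_aux (t : ℝ) {l : Filter ℝ} (hl : l ≤ 𝓝 t)
    (hIoo : Ioo (t - 1) (t + 1) ∈ l) {d : ℝ}
    (htan : Tendsto (fun x : ℝ => rdv (ccv e₁ e₂ t + Real.tan (x - t) • cdv e₁ e₂ t)
      (cdv e₁ e₂ t)) l (𝓝 d)) :
    Tendsto (Nr e₁ e₂) l (𝓝 d) := by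
  have hcos : Tendsto (fun x : ℝ => (Real.cos (x - t))⁻¹) l (𝓝 1) := by
    have hc : ContinuousAt (fun x : ℝ => (Real.cos (x - t))⁻¹) t := by
      apply ContinuousAt.inv₀
      · fun_prop
      · simp
    simpa using hc.tendsto.mono_left hl
  have hsin : Tendsto (fun x : ℝ => Real.sin (x - t)) l (𝓝 0) := by
    have hc : ContinuousAt (fun x : ℝ => Real.sin (x - t)) t := by fun_prop
    simpa using hc.tendsto.mono_left hl
  have htn : Tendsto (fun x : ℝ => Real.tan (x - t)) l (𝓝 0) := by
    simpa using (continuousAt_tan_sub t).tendsto.mono_left hl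
  have hnrm : Tendsto (fun x : ℝ => ‖ccv e₁ e₂ t + Real.tan (x - t) • cdv e₁ e₂ t‖)
      l (𝓝 ‖ccv e₁ e₂ t‖) := by
    have hc : Continuous (fun u : ℝ => ‖ccv e₁ e₂ t + u • cdv e₁ e₂ t‖) := by fun_prop
    have := (hc.tendsto 0).comp htn
    simpa [Function.comp_def] using this
  have hmain : Tendsto (fun x : ℝ => (Real.cos (x - t))⁻¹ *
      rdv (ccv e₁ e₂ t + Real.tan (x - t) • cdv e₁ e₂ t) (cdv e₁ e₂ t)
      - Real.sin (x - t) * ‖ccv e₁ e₂ t + Real.tan (x - t) • cdv e₁ e₂ t‖) l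
      (𝓝 (1 * d - 0 * ‖ccv e₁ e₂ t‖)) := (hcos.mul htan).sub (hsin.mul hnrm)
  rw [one_mul, zero_mul, sub_zero] at hmain
  refine hmain.congr' ?_
  filter_upwards [hIoo] with x hx
  have hθ : (x - t) ∈ Ioo (-(Real.pi/2)) (Real.pi/2) := by
    constructor <;> nlinarith [Real.pi_gt_three, hx.1, hx.2]
  have h1 := Nr_rot (e₁ := e₁) (e₂ := e₂) t (x - t) hθ
  have h2 : t + (x - t) = x := by ring
  rw [h2] at h1
  rw [h1]

lemma tendsto_Nr_right (t : ℝ) : Tendsto (Nr e₁ e₂) (𝓝[>] t) (𝓝 (Nr e₁ e₂ t)) := by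
  refine tendsto_Nr_aux t nhdsWithin_le_nhds
    (mem_nhdsWithin_of_mem_nhds (Ioo_mem_nhds (by linarith) (by linarith))) ?_
  have := (tendsto_rdv_line_right (ccv e₁ e₂ t) (cdv e₁ e₂ t)).comp (tendsto_tan_sub_right t)
  simpa [Function.comp_def, Nr] using this

lemma tendsto_Nr_left (t : ℝ) : Tendsto (Nr e₁ e₂) (𝓝[<] t) (𝓝 (Nl e₁ e₂ t)) := by
  refine tendsto_Nr_aux t nhdsWithin_le_nhds
    (mem_nhdsWithin_of_mem_nhds (Ioo_mem_nhds (by linarith) (by linarith))) ?_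
  have := (tendsto_rdv_line_left (ccv e₁ e₂ t) (cdv e₁ e₂ t)).comp (tendsto_tan_sub_left t)
  simpa [Function.comp_def, Nl] using this

end C3

section C4
variable {e₁ e₂ : X}
/-- limits of `Ff` from the right/left. -/
lemma tendsto_Ff_aux (hInd : LinearIndependent ℝ ![e₁, e₂]) (t : ℝ) {l : Filter ℝ}
    (hl : l ≤ 𝓝 t) {d : ℝ} (hNr : Tendsto (Nr e₁ e₂) l (𝓝 d)) :
    Tendsto (Ff e₁ e₂) l
      (𝓝 ‖(Nf e₁ e₂ t)⁻¹ • cdv e₁ e₂ t - (d / (Nf e₁ e₂ t) ^ 2) • ccv e₁ e₂ t‖) := by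
  have hNf : Tendsto (Nf e₁ e₂) l (𝓝 (Nf e₁ e₂ t)) :=
    ((continuous_ccv e₁ e₂).norm.tendsto t).mono_left hl
  have hinv : Tendsto (fun x => (Nf e₁ e₂ x)⁻¹) l (𝓝 ((Nf e₁ e₂ t)⁻¹)) :=
    hNf.inv₀ (Nf_pos hInd t).ne'
  have hcd : Tendsto (cdv e₁ e₂) l (𝓝 (cdv e₁ e₂ t)) :=
    ((continuous_cdv e₁ e₂).tendsto t).mono_left hl
  have hcc : Tendsto (ccv e₁ e₂) l (𝓝 (ccv e₁ e₂ t)) :=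
    ((continuous_ccv e₁ e₂).tendsto t).mono_left hl
  have hsq : Tendsto (fun x => Nr e₁ e₂ x / (Nf e₁ e₂ x) ^ 2) l
      (𝓝 (d / (Nf e₁ e₂ t) ^ 2)) :=
    hNr.div (hNf.pow 2) (pow_ne_zero 2 (Nf_pos hInd t).ne')
  exact ((hinv.smul hcd).sub (hsq.smul hcc)).norm

lemma tendsto_Ff_right (hInd : LinearIndependent ℝ ![e₁, e₂]) (t : ℝ) :
    Tendsto (Ff e₁ e₂) (𝓝[>] t) (𝓝 (Ff e₁ e₂ t)) :=
  tendsto_Ff_aux hInd t nhdsWithin_le_nhds (tendsto_Nr_right t)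

lemma tendsto_Ff_left (hInd : LinearIndependent ℝ ![e₁, e₂]) (t : ℝ) :
    Tendsto (Ff e₁ e₂) (𝓝[<] t) (𝓝 (Fl e₁ e₂ t)) :=
  tendsto_Ff_aux hInd t nhdsWithin_le_nhds (tendsto_Nr_left t)

lemma measurable_Nr (e₁ e₂ : X) : Measurable (Nr e₁ e₂) := by
  have hseq : Tendsto (fun n : ℕ => (1 : ℝ) / (n + 1)) atTop (𝓝[>] (0:ℝ)) := by
    rw [tendsto_nhdsWithin_iff]
    exact ⟨tendsto_one_div_add_atTop_nhds_zero_nat,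
      Eventually.of_forall fun n => mem_Ioi.2 (by positivity)⟩
  have hlim : ∀ t : ℝ, Tendsto (fun n : ℕ => qsl (ccv e₁ e₂ t) (cdv e₁ e₂ t) (1 / (n + 1)))
      atTop (𝓝 (Nr e₁ e₂ t)) := fun t => (tendsto_qsl_rdv _ _).comp hseq
  refine measurable_of_tendsto_metrizable (f := fun n t =>
    qsl (ccv e₁ e₂ t) (cdv e₁ e₂ t) (1 / (n + 1))) (fun n => ?_) ?_
  · have hc : Continuous fun t : ℝ =>
       (‖ccv e₁ e₂ t + ((1:ℝ) / (n + 1)) • cdv e₁ e₂ t‖ - ‖ccv e₁ e₂ t‖) / ((1:ℝ) / (n + 1)) := by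
      apply Continuous.div_const
      exact (((continuous_ccv e₁ e₂).add ((continuous_cdv e₁ e₂).const_smul _)).norm).sub
        (continuous_ccv e₁ e₂).norm
    exact hc.measurable
  · rw [tendsto_pi_nhds]
    exact hlim

lemma measurable_Ff (hInd : LinearIndependent ℝ ![e₁, e₂]) : Measurable (Ff e₁ e₂) := by
  have hcont : Continuous fun q : ℝ × ℝ =>
      ‖(Nf e₁ e₂ q.1)⁻¹ • cdv e₁ e₂ q.1 - (q.2 / (Nf e₁ e₂ q.1) ^ 2) • ccv e₁ e₂ q.1‖ := by
    apply Continuous.norm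
    apply Continuous.sub
    · apply Continuous.smul
      · exact (((continuous_ccv e₁ e₂).norm).comp continuous_fst).inv₀
          (fun q => (Nf_pos hInd q.1).ne')
      · exact (continuous_cdv e₁ e₂).comp continuous_fst
    · apply Continuous.smul
      · apply Continuous.div
        · exact continuous_snd
        · exact ((((continuous_ccv e₁ e₂).norm).comp continuous_fst).pow 2)
        · exact fun q => pow_ne_zero 2 (Nf_pos hInd q.1).ne'
      · exact (continuous_ccv e₁ e₂).comp continuous_fst
  have : Ff e₁ e₂ = (fun q : ℝ × ℝ =>
      ‖(Nf e₁ e₂ q.1)⁻¹ • cdv e₁ e₂ q.1 - (q.2 / (Nf e₁ e₂ q.1) ^ 2) • ccv e₁ e₂ q.1‖)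
      ∘ (fun t => (t, Nr e₁ e₂ t)) := rfl
  rw [this]
  exact hcont.measurable.comp (measurable_id.prodMk (measurable_Nr e₁ e₂))

lemma intervalIntegrable_Ff (hInd : LinearIndependent ℝ ![e₁, e₂]) (a b : ℝ) :
    IntervalIntegrable (Ff e₁ e₂) MeasureTheory.volume a b := by
  set G : ℝ → ℝ := fun t => (Nf e₁ e₂ t)⁻¹ * ‖cdv e₁ e₂ t‖
    + (‖cdv e₁ e₂ t‖ / (Nf e₁ e₂ t) ^ 2) * ‖ccv e₁ e₂ t‖ with hG
  have hGcont : Continuous G := by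
    apply Continuous.add
    · exact ((continuous_ccv e₁ e₂).norm.inv₀ fun t => (Nf_pos hInd t).ne').mul
        (continuous_cdv e₁ e₂).norm
    · apply Continuous.mul
      · apply Continuous.div
        · exact (continuous_cdv e₁ e₂).norm
        · exact ((continuous_ccv e₁ e₂).norm).pow 2
        · exact fun t => pow_ne_zero 2 (Nf_pos hInd t).ne'
      · exact (continuous_ccv e₁ e₂).norm
  refine (hGcont.intervalIntegrable a b).mono_fun
    ((measurable_Ff hInd).aestronglyMeasurable) ?_
  refine Eventually.of_forall fun t => ?_
  have hb : Ff e₁ e₂ t ≤ G t := by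
    have h1 : ‖Pr e₁ e₂ t‖ ≤ ‖(Nf e₁ e₂ t)⁻¹ • cdv e₁ e₂ t‖
        + ‖(Nr e₁ e₂ t / (Nf e₁ e₂ t) ^ 2) • ccv e₁ e₂ t‖ := norm_sub_le _ _
    have h2 : ‖(Nf e₁ e₂ t)⁻¹ • cdv e₁ e₂ t‖ = (Nf e₁ e₂ t)⁻¹ * ‖cdv e₁ e₂ t‖ := by
      rw [norm_smul, Real.norm_eq_abs, abs_of_pos (inv_pos.2 (Nf_pos hInd t))]
    have h3 : ‖(Nr e₁ e₂ t / (Nf e₁ e₂ t) ^ 2) • ccv e₁ e₂ t‖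
        ≤ (‖cdv e₁ e₂ t‖ / (Nf e₁ e₂ t) ^ 2) * ‖ccv e₁ e₂ t‖ := by
      have hNf2 : (0:ℝ) < (Nf e₁ e₂ t) ^ 2 := pow_pos (Nf_pos hInd t) 2
      rw [norm_smul, Real.norm_eq_abs, abs_div, abs_of_pos hNf2]
      have h4 : |Nr e₁ e₂ t| ≤ ‖cdv e₁ e₂ t‖ := abs_rdv_le (ccv e₁ e₂ t) (cdv e₁ e₂ t)
      gcongr
    calc Ff e₁ e₂ t ≤ _ := h1
      _ ≤ G t := by rw [hG, h2]; exact add_le_add le_rfl h3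
  simp only [Real.norm_eq_abs]
  rw [abs_of_pos (Ff_pos hInd t), abs_of_pos (lt_of_lt_of_le (Ff_pos hInd t) hb)]
  exact hb

end C4

noncomputable def sg0 (e₁ e₂ : X) (x : ℝ) : ℝ := ∫ u in (0:ℝ)..x, Ff e₁ e₂ u

section C5
variable {e₁ e₂ : X}
variable (hInd : LinearIndependent ℝ ![e₁, e₂])
include hInd

lemma continuous_sg0 : Continuous (sg0 e₁ e₂) :=
  intervalIntegral.continuous_primitive (fun a b => intervalIntegrable_Ff hInd a b) 0

lemma hasDerivWithinAt_sg0_right (t : ℝ) :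
    HasDerivWithinAt (sg0 e₁ e₂) (Ff e₁ e₂ t) (Ici t) t := by
  refine intervalIntegral.integral_hasDerivWithinAt_of_tendsto_ae_right
    (intervalIntegrable_Ff hInd 0 t) (t := Ioi t) ?_ ?_
  · exact ⟨univ, univ_mem, ((measurable_Ff hInd).aestronglyMeasurable).restrict⟩
  · exact (tendsto_Ff_right hInd t).mono_left inf_le_left

lemma hasDerivWithinAt_sg0_left (t : ℝ) :
    HasDerivWithinAt (sg0 e₁ e₂) (Fl e₁ e₂ t) (Iic t) t := by
  refine intervalIntegral.integral_hasDerivWithinAt_of_tendsto_ae_right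
    (intervalIntegrable_Ff hInd 0 t) (t := Iic t) ?_ ?_
  · exact ⟨univ, univ_mem, ((measurable_Ff hInd).aestronglyMeasurable).restrict⟩
  · have hle : (𝓝[≤] t ⊓ MeasureTheory.ae MeasureTheory.volume) ≤ 𝓝[<] t := by
      have h1 : MeasureTheory.ae MeasureTheory.volume ≤ 𝓟 ({t}ᶜ) := by
        rw [le_principal_iff]
        exact MeasureTheory.compl_mem_ae_iff.2 (Real.volume_singleton)
      calc 𝓝[≤] t ⊓ MeasureTheory.ae MeasureTheory.volume
          ≤ 𝓝[≤] t ⊓ 𝓟 ({t}ᶜ) := inf_le_inf_left _ h1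
        _ = 𝓝[Iic t ∩ {t}ᶜ] t := by
            rw [nhdsWithin, nhdsWithin, inf_assoc, inf_principal]
        _ = 𝓝[<] t := by
            congr 1
            ext x
            simp only [mem_inter_iff, mem_Iic, mem_compl_iff, mem_singleton_iff, mem_Iio]
            exact ⟨fun h => lt_of_le_of_ne h.1 h.2, fun h => ⟨h.le, h.ne⟩⟩
    exact (tendsto_Ff_left hInd t).mono_left hle

lemma sg0_sub (a b : ℝ) : sg0 e₁ e₂ b - sg0 e₁ e₂ a = ∫ u in a..b, Ff e₁ e₂ u := by
  unfold sg0
  exact intervalIntegral.integral_interval_sub_left (intervalIntegrable_Ff hInd 0 b)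
    (intervalIntegrable_Ff hInd 0 a)

lemma strictMono_sg0 : StrictMono (sg0 e₁ e₂) := by
  intro a b hab
  rw [← sub_pos, sg0_sub hInd]
  exact intervalIntegral.intervalIntegral_pos_of_pos_on (intervalIntegrable_Ff hInd a b)
    (fun x _ => Ff_pos hInd x) hab

lemma chord_le {a b : ℝ} (hab : a ≤ b) :
    ‖(Nf e₁ e₂ b)⁻¹ • ccv e₁ e₂ b - (Nf e₁ e₂ a)⁻¹ • ccv e₁ e₂ a‖
      ≤ sg0 e₁ e₂ b - sg0 e₁ e₂ a := by
  have hcurve : Continuous fun x : ℝ => (Nf e₁ e₂ x)⁻¹ • ccv e₁ e₂ x :=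
    ((continuous_ccv e₁ e₂).norm.inv₀ fun t => (Nf_pos hInd t).ne').smul (continuous_ccv e₁ e₂)
  have := image_norm_le_of_norm_deriv_right_le_deriv_boundary'
    (f := fun x : ℝ => (Nf e₁ e₂ x)⁻¹ • ccv e₁ e₂ x - (Nf e₁ e₂ a)⁻¹ • ccv e₁ e₂ a)
    (f' := Pr e₁ e₂) (a := a) (b := b)
    (B := fun x => sg0 e₁ e₂ x - sg0 e₁ e₂ a) (B' := Ff e₁ e₂)
    ((hcurve.sub continuous_const).continuousOn)
    (fun x _ => (hasDerivWithinAt_curve_right hInd x).sub_const _)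
    (by simp)
    (((continuous_sg0 hInd).sub continuous_const).continuousOn)
    (fun x _ => (hasDerivWithinAt_sg0_right hInd x).sub_const _)
    (fun x _ => le_rfl)
  exact this (right_mem_Icc.2 hab)

omit hInd

lemma Nf_pi (t : ℝ) : Nf e₁ e₂ (t + Real.pi) = Nf e₁ e₂ t := by
  unfold Nf; rw [ccv_pi, norm_neg]

lemma Nr_pi (t : ℝ) : Nr e₁ e₂ (t + Real.pi) = Nr e₁ e₂ t := by
  unfold Nr; rw [ccv_pi, cdv_pi, rdv_neg_neg]

lemma Pr_pi (t : ℝ) : Pr e₁ e₂ (t + Real.pi) = -Pr e₁ e₂ t := by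
  unfold Pr; rw [ccv_pi, cdv_pi, Nf_pi, Nr_pi, smul_neg, smul_neg]
  abel

lemma Ff_pi (t : ℝ) : Ff e₁ e₂ (t + Real.pi) = Ff e₁ e₂ t := by
  unfold Ff; rw [Pr_pi, norm_neg]

include hInd

lemma sg0_pi (t : ℝ) :
    sg0 e₁ e₂ (t + Real.pi) = sg0 e₁ e₂ t + sg0 e₁ e₂ Real.pi := by
  have h1 : sg0 e₁ e₂ (t + Real.pi) - sg0 e₁ e₂ Real.pi
      = ∫ u in Real.pi..(t + Real.pi), Ff e₁ e₂ u := sg0_sub hInd _ _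
  have h2 : (∫ u in Real.pi..(t + Real.pi), Ff e₁ e₂ u) = ∫ u in (0:ℝ)..t, Ff e₁ e₂ u := by
    have h3 := intervalIntegral.integral_comp_add_right (a := (0:ℝ)) (b := t)
      (f := Ff e₁ e₂) Real.pi
    rw [zero_add] at h3
    rw [← h3]
    apply intervalIntegral.integral_congr
    intro x _
    exact Ff_pi x
  have h4 : (∫ u in (0:ℝ)..t, Ff e₁ e₂ u) = sg0 e₁ e₂ t := rfl
  linarith [h1, h2.symm ▸ h1]

omit hInd

lemma countable_Nl_ne_Nr :
    Set.Countable {t : ℝ | Nl e₁ e₂ t ≠ Nr e₁ e₂ t} := by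
  have hsub : {t : ℝ | Nl e₁ e₂ t ≠ Nr e₁ e₂ t} ⊆
      ⋃ n : ℤ, (fun u : ℝ => (n : ℝ) + Real.arctan u) ''
        {u : ℝ | ldv (ccv e₁ e₂ (n : ℝ) + u • cdv e₁ e₂ (n : ℝ)) (cdv e₁ e₂ (n : ℝ))
          ≠ rdv (ccv e₁ e₂ (n : ℝ) + u • cdv e₁ e₂ (n : ℝ)) (cdv e₁ e₂ (n : ℝ))} := by
    intro t ht
    simp only [mem_setOf_eq] at ht
    set n : ℤ := round t with hn
    have habs : |t - (n : ℝ)| ≤ 1 / 2 := by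
      rw [hn]; exact abs_sub_round t
    have hθ : (t - (n : ℝ)) ∈ Ioo (-(Real.pi/2)) (Real.pi/2) := by
      rw [abs_le] at habs
      constructor <;> nlinarith [Real.pi_gt_three, habs.1, habs.2]
    refine mem_iUnion.2 ⟨n, ?_⟩
    refine ⟨Real.tan (t - (n : ℝ)), ?_, ?_⟩
    · simp only [mem_setOf_eq]
      intro heq
      apply ht
      have hr := Nr_rot (e₁ := e₁) (e₂ := e₂) (n : ℝ) (t - (n : ℝ)) hθ
      have hl := Nl_rot (e₁ := e₁) (e₂ := e₂) (n : ℝ) (t - (n : ℝ)) hθ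
      have ht' : (n : ℝ) + (t - (n : ℝ)) = t := by ring
      rw [ht'] at hr hl
      rw [hr, hl, heq]
    · simp only
      rw [Real.arctan_tan hθ.1 hθ.2]
      ring
  refine (Set.countable_iUnion fun n => ?_).mono hsub
  exact (countable_ldv_ne_rdv _ _).image _

end C5

end NPAux



/-- Properties of the natural parameterization `r = p ∘ τ` of the unit sphere of a
2-dimensional real Banach space: antipodality `r (s + L) = -r s`, existence of one-sided
derivatives, countability of the set of points where they differ, the non-expanding
property, and unit norm of the one-sided derivatives. -/
theorem natural_parameterization_properties
    {X : Type*} [NormedAddCommGroup X] [NormedSpace ℝ X] [CompleteSpace X]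
    (hdim : Module.finrank ℝ X = 2)
    (e₁ e₂ : X) (hInd : LinearIndependent ℝ ![e₁, e₂])
    (p : ℝ → X)
    (hp : ∀ t, p t = ‖Real.cos t • e₁ + Real.sin t • e₂‖⁻¹ •
      (Real.cos t • e₁ + Real.sin t • e₂))
    (σ : ℝ → ℝ) (hσ : ∀ t, σ t = ∫ u in (0:ℝ)..t, ‖derivWithin p (Ici u) u‖)
    (τ : ℝ → ℝ) (hτ_cont : Continuous τ) (hτ_mono : StrictMono τ)
    (hστ : ∀ x, σ (τ x) = x)
    (r : ℝ → X) (hr : ∀ s, r s = p (τ s))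
    (L : ℝ) (hL : L = σ Real.pi) :
    (∀ s : ℝ, r (s + L) = -r s) ∧
    (∀ s : ℝ, (∃ d : X, HasDerivWithinAt r d (Iic s) s) ∧
      (∃ d : X, HasDerivWithinAt r d (Ici s) s)) ∧
    {s : ℝ | derivWithin r (Iic s) s ≠ derivWithin r (Ici s) s}.Countable ∧
    (∀ s s' : ℝ, ‖r s - r s'‖ ≤ |s - s'|) ∧
    (∀ s : ℝ, ‖derivWithin r (Iic s) s‖ = 1 ∧ ‖derivWithin r (Ici s) s‖ = 1) := by
  -- identify `p` with the canonical curve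
  have hp' : p = fun t => (Nf e₁ e₂ t)⁻¹ • ccv e₁ e₂ t := by
    funext t
    rw [hp]
    rfl
  have hpr : ∀ t, HasDerivWithinAt p (Pr e₁ e₂ t) (Ici t) t := by
    intro t; rw [hp']; exact hasDerivWithinAt_curve_right hInd t
  have hpl : ∀ t, HasDerivWithinAt p (Pl e₁ e₂ t) (Iic t) t := by
    intro t; rw [hp']; exact hasDerivWithinAt_curve_left hInd t
  -- identify `σ` with the canonical primitive
  have hσs : σ = sg0 e₁ e₂ := by
    funext t
    rw [hσ, sg0]
    apply intervalIntegral.integral_congr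
    intro u _
    have h2 : derivWithin p (Ici u) u = Pr e₁ e₂ u :=
      (hpr u).derivWithin (uniqueDiffOn_Ici u u self_mem_Ici)
    show ‖derivWithin p (Ici u) u‖ = Ff e₁ e₂ u
    rw [h2]; rfl
  have hσmono : StrictMono σ := by rw [hσs]; exact strictMono_sg0 hInd
  have hσinj : Function.Injective σ := hσmono.injective
  have hτσ : ∀ t, τ (σ t) = t := fun t => hσinj (hστ (σ t))
  -- one-sided derivatives of σ
  have hσr : ∀ t, HasDerivWithinAt σ (Ff e₁ e₂ t) (Ici t) t := by
    intro t; rw [hσs]; exact hasDerivWithinAt_sg0_right hInd t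
  have hσl : ∀ t, HasDerivWithinAt σ (Fl e₁ e₂ t) (Iic t) t := by
    intro t; rw [hσs]; exact hasDerivWithinAt_sg0_left hInd t
  -- one-sided derivatives of τ
  have hτr : ∀ s, HasDerivWithinAt τ (Ff e₁ e₂ (τ s))⁻¹ (Ici s) s := by
    intro s
    rw [hasDerivWithinAt_iff_tendsto_slope, Ici_sdiff_left]
    have hσder : Tendsto (slope σ (τ s)) (𝓝[>] (τ s)) (𝓝 (Ff e₁ e₂ (τ s))) := by
      have h := hσr (τ s)
      rw [hasDerivWithinAt_iff_tendsto_slope, Ici_sdiff_left] at h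
      exact h
    have hτtend : Tendsto τ (𝓝[>] s) (𝓝[>] (τ s)) :=
      (hτ_cont.continuousWithinAt).tendsto_nhdsWithin (fun x hx => hτ_mono hx)
    have hcomp := ((hσder.comp hτtend).inv₀ (Ff_pos hInd (τ s)).ne')
    refine hcomp.congr fun x => ?_
    show (slope σ (τ s) (τ x))⁻¹ = slope τ s x
    rw [slope_def_field, slope_def_field, inv_div, hστ x, hστ s]
  have hτl : ∀ s, HasDerivWithinAt τ (Fl e₁ e₂ (τ s))⁻¹ (Iic s) s := by
    intro s
    rw [hasDerivWithinAt_iff_tendsto_slope, Iic_diff_right]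
    have hσder : Tendsto (slope σ (τ s)) (𝓝[<] (τ s)) (𝓝 (Fl e₁ e₂ (τ s))) := by
      have h := hσl (τ s)
      rw [hasDerivWithinAt_iff_tendsto_slope, Iic_diff_right] at h
      exact h
    have hτtend : Tendsto τ (𝓝[<] s) (𝓝[<] (τ s)) :=
      (hτ_cont.continuousWithinAt).tendsto_nhdsWithin (fun x hx => hτ_mono hx)
    have hcomp := ((hσder.comp hτtend).inv₀ (Fl_pos hInd (τ s)).ne')
    refine hcomp.congr fun x => ?_
    show (slope σ (τ s) (τ x))⁻¹ = slope τ s x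
    rw [slope_def_field, slope_def_field, inv_div, hστ x, hστ s]
  -- one-sided derivatives of r
  have hrfun : r = p ∘ τ := funext fun s => hr s
  have hrr : ∀ s, HasDerivWithinAt r ((Ff e₁ e₂ (τ s))⁻¹ • Pr e₁ e₂ (τ s)) (Ici s) s := by
    intro s
    rw [hrfun]
    exact HasDerivWithinAt.scomp s (hpr (τ s)) (hτr s)
      (fun x hx => hτ_mono.monotone hx)
  have hrl : ∀ s, HasDerivWithinAt r ((Fl e₁ e₂ (τ s))⁻¹ • Pl e₁ e₂ (τ s)) (Iic s) s := by
    intro s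
    rw [hrfun]
    exact HasDerivWithinAt.scomp s (hpl (τ s)) (hτl s)
      (fun x hx => hτ_mono.monotone hx)
  have hdrr : ∀ s, derivWithin r (Ici s) s = (Ff e₁ e₂ (τ s))⁻¹ • Pr e₁ e₂ (τ s) :=
    fun s => (hrr s).derivWithin (uniqueDiffOn_Ici s s self_mem_Ici)
  have hdrl : ∀ s, derivWithin r (Iic s) s = (Fl e₁ e₂ (τ s))⁻¹ • Pl e₁ e₂ (τ s) :=
    fun s => (hrl s).derivWithin (uniqueDiffOn_Iic s s self_mem_Iic)
  refine ⟨?_, ?_, ?_, ?_, ?_⟩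
  · -- antipodality
    intro s
    have h1 : τ (s + L) = τ s + Real.pi := by
      apply hσinj
      rw [hστ]
      have h2 : σ (τ s + Real.pi) = σ (τ s) + σ Real.pi := by
        rw [hσs]; exact sg0_pi hInd (τ s)
      rw [h2, hστ, hL]
    rw [hr, hr, h1, hp']
    show (Nf e₁ e₂ (τ s + Real.pi))⁻¹ • ccv e₁ e₂ (τ s + Real.pi)
      = -((Nf e₁ e₂ (τ s))⁻¹ • ccv e₁ e₂ (τ s))
    rw [Nf_pi, ccv_pi, smul_neg]
  · -- existence of one-sided derivatives
    intro s
    exact ⟨⟨_, hrl s⟩, ⟨_, hrr s⟩⟩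
  · -- countability
    have hsub : {s : ℝ | derivWithin r (Iic s) s ≠ derivWithin r (Ici s) s}
        ⊆ σ '' {t : ℝ | Nl e₁ e₂ t ≠ Nr e₁ e₂ t} := by
      intro s hs
      simp only [mem_setOf_eq] at hs
      refine ⟨τ s, ?_, hστ s⟩
      simp only [mem_setOf_eq]
      intro heq
      apply hs
      rw [hdrr, hdrl]
      have hPl : Pl e₁ e₂ (τ s) = Pr e₁ e₂ (τ s) := by
        rw [Pl, Pr, heq]
      rw [hPl]
      have hFl : Fl e₁ e₂ (τ s) = Ff e₁ e₂ (τ s) := by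
        rw [Fl, Ff, hPl]
      rw [hFl]
    exact ((countable_Nl_ne_Nr (e₁ := e₁) (e₂ := e₂)).image σ).mono hsub
  · -- non-expanding
    have haux : ∀ s' s : ℝ, s' ≤ s → ‖r s - r s'‖ ≤ s - s' := by
      intro s' s hss
      rw [hr, hr, hp']
      simp only
      have hts : τ s' ≤ τ s := hτ_mono.monotone hss
      have := chord_le hInd hts
      have h2 : sg0 e₁ e₂ (τ s) - sg0 e₁ e₂ (τ s') = s - s' := by
        rw [← hσs, hστ, hστ]
      rw [h2] at this
      exact this
    intro s s'
    rcases le_total s' s with h | h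
    · rw [abs_of_nonneg (by linarith)]
      exact haux s' s h
    · rw [abs_of_nonpos (by linarith), norm_sub_rev]
      have := haux s s' h
      linarith [this]
  · -- unit norms
    intro s
    constructor
    · rw [hdrl, norm_smul, Real.norm_eq_abs,
        abs_of_pos (inv_pos.2 (Fl_pos hInd (τ s)))]
      exact inv_mul_cancel₀ (Fl_pos hInd (τ s)).ne'
    · rw [hdrr, norm_smul, Real.norm_eq_abs,
        abs_of_pos (inv_pos.2 (Ff_pos hInd (τ s)))]
      exact inv_mul_cancel₀ (Ff_pos hInd (τ s)).ne'
end

section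
/- If the natural parameterization r : ℝ → S_X is differentiable at every point of some open set U ⊆ ℝ, then r is continuously differentiable on U. -/
open Metric Set Filter Topology MeasureTheory


namespace NatParamAux

lemma abs_sin_sub_sin (a b : ℝ) : |Real.sin a - Real.sin b| ≤ |a - b| := by
  have h : LipschitzWith 1 Real.sin := by
    refine lipschitzWith_of_nnnorm_deriv_le Real.differentiable_sin (fun x => ?_)
    rw [Real.deriv_sin]
    simpa using NNReal.coe_le_coe.1 (by simpa [Real.norm_eq_abs] using Real.abs_cos_le_one x)
  simpa [Real.dist_eq] using h.dist_le_mul a b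

lemma abs_cos_sub_cos (a b : ℝ) : |Real.cos a - Real.cos b| ≤ |a - b| := by
  have h : LipschitzWith 1 Real.cos := by
    refine lipschitzWith_of_nnnorm_deriv_le Real.differentiable_cos (fun x => ?_)
    have : deriv Real.cos x = -Real.sin x := Real.deriv_cos
    rw [this]
    simpa using NNReal.coe_le_coe.1 (by simpa [Real.norm_eq_abs] using Real.abs_sin_le_one x)
  simpa [Real.dist_eq] using h.dist_le_mul a b

/-- limit of x / sin x at 0 -/
lemma tendsto_div_sin : Tendsto (fun x : ℝ => x / Real.sin x) (𝓝[≠] (0:ℝ)) (𝓝 1) := by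
  have h := hasDerivAt_iff_tendsto_slope.1 (Real.hasDerivAt_sin 0)
  rw [Real.cos_zero] at h
  have h2 : Tendsto (fun x : ℝ => Real.sin x / x) (𝓝[≠] (0:ℝ)) (𝓝 1) := by
    refine h.congr (fun x => ?_)
    rw [slope_def_field]
    simp
  have h3 := h2.inv₀ one_ne_zero
  rw [inv_one] at h3
  refine h3.congr (fun x => ?_)
  rw [inv_div]

variable {X : Type*} [NormedAddCommGroup X] [NormedSpace ℝ X]

/-- norm bound for one-sided derivatives of Lipschitz-type functions -/
lemma norm_hasDerivWithinAt_le {f : ℝ → X} {d : X} {u K : ℝ}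
    (hlip : ∀ a b, ‖f a - f b‖ ≤ K * |a - b|)
    (h : HasDerivWithinAt f d (Ici u) u) : ‖d‖ ≤ K := by
  have h' := hasDerivWithinAt_iff_tendsto_slope.1 h
  rw [Ici_sdiff_left] at h'
  refine le_of_tendsto h'.norm ?_
  filter_upwards [self_mem_nhdsWithin] with t (ht : t ∈ Ioi u)
  have htu : t ≠ u := ne_of_gt ht
  rw [slope_def_module, norm_smul, norm_inv, Real.norm_eq_abs]
  calc |t - u|⁻¹ * ‖f t - f u‖ ≤ |t - u|⁻¹ * (K * |t - u|) := by
        refine mul_le_mul_of_nonneg_left (hlip t u) (inv_nonneg.2 (abs_nonneg _))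
    _ = K := by
        field_simp [abs_ne_zero.2 (sub_ne_zero.2 htu)]

/-- image of an open set under a continuous strictly monotone map is open -/
lemma isOpen_image_strictMono {τ : ℝ → ℝ} (hc : Continuous τ) (hm : StrictMono τ)
    {U : Set ℝ} (hU : IsOpen U) : IsOpen (τ '' U) := by
  rw [isOpen_iff_mem_nhds]
  rintro _ ⟨s, hs, rfl⟩
  obtain ⟨ε, εpos, hball⟩ := Metric.isOpen_iff.1 hU s hs
  rw [Real.ball_eq_Ioo] at hball
  have hsub : Icc (s - ε/2) (s + ε/2) ⊆ U := fun t ht =>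
    hball ⟨by linarith [ht.1], by linarith [ht.2]⟩
  have hIcc : Icc (τ (s - ε/2)) (τ (s + ε/2)) ⊆ τ '' U := by
    intro u hu
    obtain ⟨t, ht, rfl⟩ := intermediate_value_Icc (by linarith) hc.continuousOn hu
    exact ⟨t, hsub ht, rfl⟩
  have h1 : τ (s - ε/2) < τ s := hm (by linarith)
  have h2 : τ s < τ (s + ε/2) := hm (by linarith)
  exact Filter.mem_of_superset (Ioo_mem_nhds h1 h2) ((Ioo_subset_Icc_self).trans hIcc)

/-- in a 2-dimensional space, two vectors in the kernel of a nonzero functional are dependent -/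
lemma eq_smul_of_ker [FiniteDimensional ℝ X] (hdim : Module.finrank ℝ X = 2)
    (g : X →L[ℝ] ℝ) {x y z : X} (hgx : g x ≠ 0) (hy : g y = 0) (hz : g z = 0) (hy0 : y ≠ 0) :
    ∃ c : ℝ, z = c • y := by
  set gl := (g : X →ₗ[ℝ] ℝ)
  have hsurj : Function.Surjective gl := by
    intro c
    refine ⟨(c / g x) • x, ?_⟩
    have : gl ((c / g x) • x) = (c / g x) * g x := by simp [gl, mul_comm]
    rw [this]
    field_simp
  have hrange : LinearMap.range gl = ⊤ := LinearMap.range_eq_top.2 hsurj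
  have hker : Module.finrank ℝ (LinearMap.ker gl) = 1 := by
    have := LinearMap.finrank_range_add_finrank_ker gl
    rw [hrange, hdim] at this
    simp [finrank_top] at this
    omega
  have hspan : Submodule.span ℝ {y} = LinearMap.ker gl := by
    refine Submodule.eq_of_le_of_finrank_le ?_ ?_
    · rw [Submodule.span_le, singleton_subset_iff]
      exact hy
    · rw [hker, finrank_span_singleton hy0]
  have hzmem : z ∈ Submodule.span ℝ {y} := hspan ▸ (hz : z ∈ LinearMap.ker gl)
  obtain ⟨c, hc⟩ := Submodule.mem_span_singleton.1 hzmem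
  exact ⟨c, hc.symm⟩

/-- a norming functional kills the derivative of a curve in the unit sphere -/
lemma apply_deriv_eq_zero {p : ℝ → X} (hnorm : ∀ t, ‖p t‖ = 1)
    (g : X →L[ℝ] ℝ) (hg : ‖g‖ ≤ 1) {u : ℝ} (hgu : g (p u) = 1) {d : X}
    (hd : HasDerivAt p d u) : g d = 0 := by
  have h1 : IsLocalMax (fun t => g (p t)) u := by
    refine Filter.Eventually.of_forall (fun t => ?_)
    calc g (p t) ≤ |g (p t)| := le_abs_self _
      _ ≤ ‖g‖ * ‖p t‖ := g.le_opNorm _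
      _ ≤ 1 := by rw [hnorm]; simpa using hg
      _ = g (p u) := hgu.symm
  have h2 : HasDerivAt (fun t => g (p t)) (g d) u :=
    g.hasFDerivAt.comp_hasDerivAt u hd
  exact h1.hasDerivAt_eq_zero h2


lemma p_differentiableAt
    (φ0 φ1 : X →L[ℝ] ℝ) (τ σ : ℝ → ℝ) (n : ℝ → ℝ) (p r : ℝ → X)
    (hτ_cont : Continuous τ) (hτ_mono : StrictMono τ) (hστ : ∀ x, σ (τ x) = x)
    (hn_pos : ∀ t, 0 < n t)
    (hφ0r : ∀ t, φ0 (r t) = (n (τ t))⁻¹ * Real.cos (τ t))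
    (hφ1r : ∀ t, φ1 (r t) = (n (τ t))⁻¹ * Real.sin (τ t))
    (K : ℝ) (hK : 0 < K) (hσK : ∀ a b, a ≤ b → σ b - σ a ≤ K * (b - a))
    (hσcont : Continuous σ)
    (W : Set ℝ) (hW : IsOpen W) (hτσ : ∀ u ∈ W, τ (σ u) = u)
    (hpr : ∀ u ∈ W, p u = r (σ u))
    (s : ℝ) (hsW : τ s ∈ W) (hv : DifferentiableAt ℝ r s) :
    DifferentiableAt ℝ p (τ s) := by
  set y := τ s with hy
  set v := deriv r s with hvdef
  have hvd : HasDerivAt r v s := hv.hasDerivAt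
  have hc0d : DifferentiableAt ℝ (fun t => φ0 (r t)) s :=
    (φ0.differentiable.differentiableAt).comp s hv
  have hc1d : DifferentiableAt ℝ (fun t => φ1 (r t)) s :=
    (φ1.differentiable.differentiableAt).comp s hv
  set ρ : ℝ → ℝ := fun t => (φ0 (r t))^2 + (φ1 (r t))^2 with hρdef
  have hρd : DifferentiableAt ℝ ρ s := (hc0d.pow 2).add (hc1d.pow 2)
  have hρval : ∀ t, ρ t = ((n (τ t))^2)⁻¹ := by
    intro t
    have hnt := hn_pos (τ t)
    have hsc := Real.sin_sq_add_cos_sq (τ t)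
    rw [hρdef]
    simp only [hφ0r, hφ1r]
    field_simp
    linarith [hsc]
  have hρpos : ∀ t, 0 < ρ t := by
    intro t
    rw [hρval]
    exact inv_pos.2 (pow_pos (hn_pos _) 2)
  have hnτval : ∀ t, n (τ t) = (Real.sqrt (ρ t))⁻¹ := by
    intro t
    rw [hρval, Real.sqrt_inv, Real.sqrt_sq (hn_pos (τ t)).le, inv_inv]
  have hnτd : DifferentiableAt ℝ (fun t => n (τ t)) s := by
    have h1 : (fun t => n (τ t)) = fun t => (Real.sqrt (ρ t))⁻¹ := funext hnτval
    rw [h1]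
    exact (hρd.sqrt (hρpos s).ne').inv (Real.sqrt_pos.2 (hρpos s)).ne'
  have hAd : DifferentiableAt ℝ (fun t => Real.cos (τ t)) s := by
    have h1 : (fun t => Real.cos (τ t)) = fun t => n (τ t) * φ0 (r t) := by
      funext t
      rw [hφ0r, ← mul_assoc, mul_inv_cancel₀ (hn_pos _).ne', one_mul]
    rw [h1]
    exact hnτd.mul hc0d
  have hBd : DifferentiableAt ℝ (fun t => Real.sin (τ t)) s := by
    have h1 : (fun t => Real.sin (τ t)) = fun t => n (τ t) * φ1 (r t) := by
      funext t
      rw [hφ1r, ← mul_assoc, mul_inv_cancel₀ (hn_pos _).ne', one_mul]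
    rw [h1]
    exact hnτd.mul hc1d
  set G : ℝ → ℝ := fun t => Real.sin (τ t - y) with hGdef
  have hGd : DifferentiableAt ℝ G s := by
    have h1 : G = fun t => Real.sin (τ t) * Real.cos y - Real.cos (τ t) * Real.sin y := by
      funext t
      show Real.sin (τ t - y) = _
      exact Real.sin_sub _ _
    rw [h1]
    exact (hBd.mul_const _).sub (hAd.mul_const _)
  set lam := deriv G s with hlamdef
  have hG : HasDerivAt G lam s := hGd.hasDerivAt
  have hG0 : G s = 0 := by simp [hGdef]; rw [← hy, sub_self, Real.sin_zero]
  -- τ has derivative lam at s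
  have hslopeG : Tendsto (slope G s) (𝓝[≠] s) (𝓝 lam) := hasDerivAt_iff_tendsto_slope.1 hG
  have hτ0 : Tendsto (fun t => τ t - y) (𝓝[≠] s) (𝓝[≠] (0:ℝ)) := by
    rw [tendsto_nhdsWithin_iff]
    constructor
    · have h1 : Tendsto (fun t => τ t - y) (𝓝 s) (𝓝 (τ s - y)) :=
        (hτ_cont.tendsto s).sub_const y
      rw [← hy, sub_self] at h1
      exact h1.mono_left nhdsWithin_le_nhds
    · filter_upwards [self_mem_nhdsWithin] with t ht
      simp only [mem_compl_iff, mem_singleton_iff] at ht ⊢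
      exact sub_ne_zero.2 (fun h => ht (hτ_mono.injective h))
  have hψ : Tendsto (fun t => (τ t - y) / Real.sin (τ t - y)) (𝓝[≠] s) (𝓝 1) :=
    tendsto_div_sin.comp hτ0
  have hmul := hψ.mul hslopeG
  rw [one_mul] at hmul
  have hev : ∀ᶠ t in 𝓝[≠] s, |τ t - y| < Real.pi ∧ t ≠ s := by
    have h1 : ∀ᶠ t in 𝓝 s, |τ t - y| < Real.pi := by
      have hc : Continuous fun t => |τ t - y| := (hτ_cont.sub continuous_const).abs
      have : |τ s - y| < Real.pi := by
        rw [← hy, sub_self, abs_zero]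
        exact Real.pi_pos
      exact (hc.tendsto s).eventually_lt_const this |>.mono (fun t ht => ht)
    filter_upwards [h1.filter_mono nhdsWithin_le_nhds, self_mem_nhdsWithin] with t h1 h2
    exact ⟨h1, h2⟩
  have htends : Tendsto (slope τ s) (𝓝[≠] s) (𝓝 lam) := by
    refine hmul.congr' ?_
    filter_upwards [hev] with t ht
    obtain ⟨h1, h2⟩ := ht
    have hne : τ t - y ≠ 0 := sub_ne_zero.2 (fun h => h2 (hτ_mono.injective h))
    have hsin : Real.sin (τ t - y) ≠ 0 := by
      rw [Ne, Real.sin_eq_zero_iff_of_lt_of_lt (by cases abs_lt.1 h1; linarith)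
        (by cases abs_lt.1 h1; linarith)]
      exact hne
    have hts : t - s ≠ 0 := sub_ne_zero.2 h2
    rw [slope_def_field, slope_def_field, hG0, sub_zero]
    have hGt : G t = Real.sin (τ t - y) := rfl
    rw [hGt]
    field_simp
    rw [hy]
  have hτdiff : HasDerivAt τ lam s := hasDerivAt_iff_tendsto_slope.2 htends
  -- lam is positive
  have hsub : 𝓝[>] s ≤ 𝓝[≠] s :=
    nhdsWithin_mono s fun x hx => by
      simp only [mem_compl_iff, mem_singleton_iff]
      exact ne_of_gt hx
  have h1 : Tendsto (slope τ s) (𝓝[>] s) (𝓝 lam) := htends.mono_left hsub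
  have h2 : ∀ᶠ t in 𝓝[>] s, K⁻¹ ≤ slope τ s t := by
    filter_upwards [self_mem_nhdsWithin] with t (ht : s < t)
    have hττ : τ s ≤ τ t := (hτ_mono ht).le
    have h3 := hσK (τ s) (τ t) hττ
    rw [hστ, hστ] at h3
    rw [slope_def_field, le_div_iff₀ (by linarith : (0:ℝ) < t - s)]
    rw [inv_mul_le_iff₀ hK]
    linarith
  have hlampos : 0 < lam := lt_of_lt_of_le (inv_pos.2 hK) (ge_of_tendsto h1 h2)
  -- σ has derivative lam⁻¹ at y, and p = r ∘ σ near y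
  have hσy : σ y = s := hστ s
  have hσd : HasDerivAt σ lam⁻¹ y := by
    refine HasDerivAt.of_local_left_inverse (f := τ) hσcont.continuousAt ?_ hlampos.ne' ?_
    · rw [hσy]; exact hτdiff
    · filter_upwards [hW.mem_nhds hsW] with u hu
      exact hτσ u hu
  have hrs : HasDerivAt (fun u => r (σ u)) (lam⁻¹ • v) y := by
    have hvd' : HasDerivAt r v (σ y) := hσy ▸ hvd
    exact hvd'.scomp y hσd
  refine hrs.differentiableAt.congr_of_eventuallyEq ?_
  filter_upwards [hW.mem_nhds hsW] with u hu
  exact hpr u hu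


lemma det_deriv (φ0 φ1 : X →L[ℝ] ℝ) (n : ℝ → ℝ) (p : ℝ → X)
    (hn_pos : ∀ t, 0 < n t)
    (hφ0p : ∀ t, φ0 (p t) = (n t)⁻¹ * Real.cos t)
    (hφ1p : ∀ t, φ1 (p t) = (n t)⁻¹ * Real.sin t)
    (u : ℝ) {d : X} (hd : HasDerivAt p d u) :
    φ0 (p u) * φ1 d - φ1 (p u) * φ0 d = (n u)⁻¹ * (n u)⁻¹ := by
  have hdd : DifferentiableAt ℝ p u := hd.differentiableAt
  have hc0d : DifferentiableAt ℝ (fun t => φ0 (p t)) u :=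
    (φ0.differentiable.differentiableAt).comp u hdd
  have hc1d : DifferentiableAt ℝ (fun t => φ1 (p t)) u :=
    (φ1.differentiable.differentiableAt).comp u hdd
  set ρ : ℝ → ℝ := fun t => (φ0 (p t))^2 + (φ1 (p t))^2 with hρdef
  have hρd : DifferentiableAt ℝ ρ u := (hc0d.pow 2).add (hc1d.pow 2)
  have hρval : ∀ t, ρ t = ((n t)^2)⁻¹ := by
    intro t
    have hnt := hn_pos t
    have hsc := Real.sin_sq_add_cos_sq t
    rw [hρdef]
    simp only [hφ0p, hφ1p]
    field_simp
    linarith [hsc]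
  have hρpos : ∀ t, 0 < ρ t := by
    intro t
    rw [hρval]
    exact inv_pos.2 (pow_pos (hn_pos _) 2)
  have hnval : ∀ t, n t = (Real.sqrt (ρ t))⁻¹ := by
    intro t
    rw [hρval, Real.sqrt_inv, Real.sqrt_sq (hn_pos t).le, inv_inv]
  have hnd : DifferentiableAt ℝ n u := by
    have h1 : n = fun t => (Real.sqrt (ρ t))⁻¹ := funext hnval
    rw [h1]
    exact (hρd.sqrt (hρpos u).ne').inv (Real.sqrt_pos.2 (hρpos u)).ne'
  obtain ⟨ν, hν⟩ : ∃ ν, HasDerivAt n ν u := ⟨deriv n u, hnd.hasDerivAt⟩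
  -- the function t ↦ det (p u) (p t), differentiated two ways
  have hφ0d : HasDerivAt (fun t => φ0 (p t)) (φ0 d) u := φ0.hasFDerivAt.comp_hasDerivAt u hd
  have hφ1d : HasDerivAt (fun t => φ1 (p t)) (φ1 d) u := φ1.hasFDerivAt.comp_hasDerivAt u hd
  have h1 : HasDerivAt (fun t => φ0 (p u) * φ1 (p t) - φ1 (p u) * φ0 (p t))
      (φ0 (p u) * φ1 d - φ1 (p u) * φ0 d) u :=
    (hφ1d.const_mul _).sub (hφ0d.const_mul _)
  have h2 : (fun t => φ0 (p u) * φ1 (p t) - φ1 (p u) * φ0 (p t))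
      = fun t => Real.sin (t - u) * ((n u)⁻¹ * (n t)⁻¹) := by
    funext t
    rw [hφ0p, hφ1p, hφ0p, hφ1p, Real.sin_sub]
    ring
  have hf1 : HasDerivAt (fun t : ℝ => Real.sin (t - u)) 1 u := by
    have h3 : HasDerivAt (fun t : ℝ => t - u) 1 u := (hasDerivAt_id u).sub_const u
    have h4 := h3.sin
    simpa using h4
  have hf2 : HasDerivAt (fun t => (n u)⁻¹ * (n t)⁻¹) ((n u)⁻¹ * (-ν / n u ^ 2)) u :=
    (hν.inv (hn_pos u).ne').const_mul _
  have h3 : HasDerivAt (fun t => Real.sin (t - u) * ((n u)⁻¹ * (n t)⁻¹))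
      ((n u)⁻¹ * (n u)⁻¹) u := by
    have h4 := hf1.mul hf2
    simp at h4
    exact h4
  rw [h2] at h1
  exact h1.unique h3

lemma deriv_cont [FiniteDimensional ℝ X] (hdim : Module.finrank ℝ X = 2)
    (φ0 φ1 : X →L[ℝ] ℝ) (n : ℝ → ℝ) (p : ℝ → X)
    (hn_pos : ∀ t, 0 < n t) (hn_cont : Continuous n)
    (hφ0p : ∀ t, φ0 (p t) = (n t)⁻¹ * Real.cos t)
    (hφ1p : ∀ t, φ1 (p t) = (n t)⁻¹ * Real.sin t)
    (hpnorm : ∀ t, ‖p t‖ = 1)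
    (hpcont : Continuous p)
    (K : ℝ) (hplip : ∀ a b, ‖p a - p b‖ ≤ K * |a - b|)
    (W : Set ℝ) (hW : IsOpen W) (hPdiff : ∀ u ∈ W, DifferentiableAt ℝ p u) :
    ContinuousOn (deriv p) W := by
  have hdet : ∀ w ∈ W, φ0 (p w) * φ1 (deriv p w) - φ1 (p w) * φ0 (deriv p w)
      = (n w)⁻¹ * (n w)⁻¹ := fun w hw =>
    det_deriv φ0 φ1 n p hn_pos hφ0p hφ1p w (hPdiff w hw).hasDerivAt
  have hnn0 : ∀ w : ℝ, (n w)⁻¹ * (n w)⁻¹ ≠ 0 := fun w =>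
    mul_ne_zero (inv_ne_zero (hn_pos w).ne') (inv_ne_zero (hn_pos w).ne')
  have hd0 : ∀ w ∈ W, deriv p w ≠ 0 := by
    intro w hw h0
    have h1 := hdet w hw
    rw [h0] at h1
    simp at h1
    exact (hn_pos w).ne' h1
  intro u hu
  apply ContinuousAt.continuousWithinAt
  rw [ContinuousAt]
  apply tendsto_of_subseq_tendsto
  intro xs hxs
  obtain ⟨N, hN⟩ := eventually_atTop.1 (hxs.eventually (hW.mem_nhds hu))
  set x : ℕ → ℝ := fun k => xs (k + N) with hxdef
  have hxW : ∀ k, x k ∈ W := fun k => hN _ (Nat.le_add_left N k)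
  have hxu : Tendsto x atTop (𝓝 u) := hxs.comp (tendsto_add_atTop_nat N)
  have hdball : ∀ k, deriv p (x k) ∈ closedBall (0:X) K := by
    intro k
    rw [mem_closedBall_zero_iff]
    exact norm_hasDerivWithinAt_le hplip
      ((hPdiff _ (hxW k)).hasDerivAt.hasDerivWithinAt)
  obtain ⟨w, hwball, ψ1, hψ1, hwlim⟩ :=
    (isCompact_closedBall (0:X) K).tendsto_subseq hdball
  have hgex : ∀ k : ℕ, ∃ g : X →L[ℝ] ℝ, ‖g‖ = 1 ∧ g (p (x (ψ1 k))) = 1 := by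
    intro k
    have hne : p (x (ψ1 k)) ≠ 0 := by
      rw [← norm_ne_zero_iff, hpnorm]
      exact one_ne_zero
    obtain ⟨g, hg1, hg2⟩ := exists_dual_vector ℝ _ (norm_ne_zero_iff.2 hne)
    refine ⟨g, hg1, ?_⟩
    rw [hg2, hpnorm]
    norm_num
  choose gs hgs1 hgs2 using hgex
  have hgball : ∀ k, gs k ∈ closedBall (0 : X →L[ℝ] ℝ) 1 := by
    intro k
    rw [mem_closedBall_zero_iff, hgs1]
  obtain ⟨g, hgball', ψ2, hψ2, hglim⟩ :=
    (isCompact_closedBall (0 : X →L[ℝ] ℝ) 1).tendsto_subseq hgball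
  refine ⟨fun k => ψ1 (ψ2 k) + N, ?_⟩
  set z : ℕ → ℝ := fun k => x (ψ1 (ψ2 k)) with hzdef
  have hzW : ∀ k, z k ∈ W := fun k => hxW _
  have hzu : Tendsto z atTop (𝓝 u) := hxu.comp ((hψ1.comp hψ2).tendsto_atTop)
  have hDz : Tendsto (fun k => deriv p (z k)) atTop (𝓝 w) := hwlim.comp hψ2.tendsto_atTop
  have hGz : Tendsto (fun k => gs (ψ2 k)) atTop (𝓝 g) := hglim
  have heval : Continuous (fun pr : (X →L[ℝ] ℝ) × X => pr.1 pr.2) :=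
    isBoundedBilinearMap_apply.continuous
  have hpz : Tendsto (fun k => p (z k)) atTop (𝓝 (p u)) := (hpcont.tendsto u).comp hzu
  -- g (p u) = 1
  have hgpu : g (p u) = 1 := by
    have h1 : Tendsto (fun k => gs (ψ2 k) (p (z k))) atTop (𝓝 (g (p u))) :=
      (heval.tendsto (g, p u)).comp (hGz.prodMk_nhds hpz)
    have h2 : (fun k => gs (ψ2 k) (p (z k))) = fun _ => 1 := funext fun k => hgs2 (ψ2 k)
    rw [h2] at h1
    exact tendsto_nhds_unique h1 tendsto_const_nhds
  have hgnorm : ‖g‖ ≤ 1 := mem_closedBall_zero_iff.1 hgball'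
  -- g w = 0
  have hgw : g w = 0 := by
    have hkill : ∀ k, gs (ψ2 k) (deriv p (z k)) = 0 := fun k =>
      apply_deriv_eq_zero hpnorm (gs (ψ2 k)) (le_of_eq (hgs1 (ψ2 k))) (hgs2 (ψ2 k))
        (hPdiff _ (hzW k)).hasDerivAt
    have h1 : Tendsto (fun k => gs (ψ2 k) (deriv p (z k))) atTop (𝓝 (g w)) :=
      (heval.tendsto (g, w)).comp (hGz.prodMk_nhds hDz)
    have h2 : (fun k => gs (ψ2 k) (deriv p (z k))) = fun _ => 0 := funext hkill
    rw [h2] at h1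
    exact tendsto_nhds_unique h1 tendsto_const_nhds
  have hgdu : g (deriv p u) = 0 :=
    apply_deriv_eq_zero hpnorm g hgnorm hgpu (hPdiff u hu).hasDerivAt
  have hgpu0 : g (p u) ≠ 0 := by rw [hgpu]; exact one_ne_zero
  obtain ⟨c, hc⟩ := eq_smul_of_ker hdim g hgpu0 hgdu hgw (hd0 u hu)
  -- determinant limit pins c = 1
  have hφ0pz : Tendsto (fun k => φ0 (p (z k))) atTop (𝓝 (φ0 (p u))) :=
    (φ0.continuous.tendsto _).comp hpz
  have hφ1pz : Tendsto (fun k => φ1 (p (z k))) atTop (𝓝 (φ1 (p u))) :=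
    (φ1.continuous.tendsto _).comp hpz
  have hφ0dz : Tendsto (fun k => φ0 (deriv p (z k))) atTop (𝓝 (φ0 w)) :=
    (φ0.continuous.tendsto _).comp hDz
  have hφ1dz : Tendsto (fun k => φ1 (deriv p (z k))) atTop (𝓝 (φ1 w)) :=
    (φ1.continuous.tendsto _).comp hDz
  have hdet1 : Tendsto (fun k => φ0 (p (z k)) * φ1 (deriv p (z k))
      - φ1 (p (z k)) * φ0 (deriv p (z k))) atTop
      (𝓝 (φ0 (p u) * φ1 w - φ1 (p u) * φ0 w)) :=
    (hφ0pz.mul hφ1dz).sub (hφ1pz.mul hφ0dz)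
  have hnz : Tendsto (fun k => (n (z k))⁻¹ * (n (z k))⁻¹) atTop
      (𝓝 ((n u)⁻¹ * (n u)⁻¹)) := by
    have h1 : Tendsto (fun k => n (z k)) atTop (𝓝 (n u)) := (hn_cont.tendsto u).comp hzu
    exact (h1.inv₀ (hn_pos u).ne').mul (h1.inv₀ (hn_pos u).ne')
  have hdet2 : (fun k => φ0 (p (z k)) * φ1 (deriv p (z k))
      - φ1 (p (z k)) * φ0 (deriv p (z k))) = fun k => (n (z k))⁻¹ * (n (z k))⁻¹ :=
    funext fun k => hdet (z k) (hzW k)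
  rw [hdet2] at hdet1
  have hkey : φ0 (p u) * φ1 w - φ1 (p u) * φ0 w = (n u)⁻¹ * (n u)⁻¹ :=
    tendsto_nhds_unique hdet1 hnz
  have hkey2 : φ0 (p u) * φ1 w - φ1 (p u) * φ0 w
      = c * ((n u)⁻¹ * (n u)⁻¹) := by
    rw [hc, ContinuousLinearMap.map_smul, ContinuousLinearMap.map_smul,
      smul_eq_mul, smul_eq_mul, ← hdet u hu]
    ring
  have hc1 : c = 1 := by
    rw [hkey2] at hkey
    exact mul_left_eq_self₀.1 hkey |>.resolve_right (hnn0 u)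
  have hwv : w = deriv p u := by rw [hc, hc1, one_smul]
  rw [← hwv]
  exact hDz

end NatParamAux

set_option maxHeartbeats 2000000 in
open NatParamAux in
/-- If the natural parameterization `r` of the unit sphere of a 2-dimensional real Banach
space is differentiable at every point of an open set `U ⊆ ℝ`, then `r` is continuously
differentiable on `U`. -/
theorem natural_parameterization_contDiff_of_differentiable
    {X : Type*} [NormedAddCommGroup X] [NormedSpace ℝ X] [CompleteSpace X]
    (hdim : Module.finrank ℝ X = 2)
    (e₁ e₂ : X) (hInd : LinearIndependent ℝ ![e₁, e₂])
    (p : ℝ → X)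
    (hp : ∀ t, p t = ‖Real.cos t • e₁ + Real.sin t • e₂‖⁻¹ •
      (Real.cos t • e₁ + Real.sin t • e₂))
    (σ : ℝ → ℝ) (hσ : ∀ t, σ t = ∫ u in (0:ℝ)..t, ‖derivWithin p (Ici u) u‖)
    (τ : ℝ → ℝ) (hτ_cont : Continuous τ) (hτ_mono : StrictMono τ)
    (hστ : ∀ x, σ (τ x) = x)
    (r : ℝ → X) (hr : ∀ s, r s = p (τ s))
    (U : Set ℝ) (hU : IsOpen U) (hdiff : ∀ s ∈ U, DifferentiableAt ℝ r s) :
    ContDiffOn ℝ 1 r U := by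
  classical
  borelize X
  have fd : FiniteDimensional ℝ X := FiniteDimensional.of_finrank_eq_succ (n := 1) hdim
  -- basis and coordinate functionals
  have hcard : Fintype.card (Fin 2) = Module.finrank ℝ X := by rw [hdim]; simp
  set b : Module.Basis (Fin 2) ℝ X := basisOfLinearIndependentOfCardEqFinrank hInd hcard with hbdef
  have hb : ⇑b = ![e₁, e₂] := coe_basisOfLinearIndependentOfCardEqFinrank hInd hcard
  have hbe0 : b 0 = e₁ := by rw [show b 0 = (⇑b) 0 from rfl, hb]; rfl
  have hbe1 : b 1 = e₂ := by rw [show b 1 = (⇑b) 1 from rfl, hb]; rfl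
  set φ0 : X →L[ℝ] ℝ := LinearMap.toContinuousLinearMap (b.coord 0) with hφ0def
  set φ1 : X →L[ℝ] ℝ := LinearMap.toContinuousLinearMap (b.coord 1) with hφ1def
  have hφ00 : φ0 e₁ = 1 := by
    rw [hφ0def, ← hbe0]
    simp [LinearMap.coe_toContinuousLinearMap', Module.Basis.coord_apply, Module.Basis.repr_self_apply]
  have hφ01 : φ0 e₂ = 0 := by
    rw [hφ0def, ← hbe1]
    simp [LinearMap.coe_toContinuousLinearMap', Module.Basis.coord_apply, Module.Basis.repr_self_apply]
  have hφ10 : φ1 e₁ = 0 := by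
    rw [hφ1def, ← hbe0]
    simp [LinearMap.coe_toContinuousLinearMap', Module.Basis.coord_apply, Module.Basis.repr_self_apply]
  have hφ11 : φ1 e₂ = 1 := by
    rw [hφ1def, ← hbe1]
    simp [LinearMap.coe_toContinuousLinearMap', Module.Basis.coord_apply, Module.Basis.repr_self_apply]
  -- the smooth curve q and its norm n
  set q : ℝ → X := fun t => Real.cos t • e₁ + Real.sin t • e₂ with hqdef
  set n : ℝ → ℝ := fun t => ‖q t‖ with hndef
  have hφ0q : ∀ t, φ0 (q t) = Real.cos t := by
    intro t
    rw [hqdef]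
    simp only [map_add, ContinuousLinearMap.map_smul, smul_eq_mul, hφ00, hφ01]
    ring
  have hφ1q : ∀ t, φ1 (q t) = Real.sin t := by
    intro t
    rw [hqdef]
    simp only [map_add, ContinuousLinearMap.map_smul, smul_eq_mul, hφ10, hφ11]
    ring
  have hq_ne : ∀ t, q t ≠ 0 := by
    intro t h0
    have h1 : Real.cos t = 0 := by rw [← hφ0q t, h0, map_zero]
    have h2 : Real.sin t = 0 := by rw [← hφ1q t, h0, map_zero]
    have h3 := Real.sin_sq_add_cos_sq t
    rw [h1, h2] at h3
    norm_num at h3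
  have hn_pos : ∀ t, 0 < n t := fun t => norm_pos_iff.2 (hq_ne t)
  have hqcont : Continuous q :=
    (Real.continuous_cos.smul continuous_const).add (Real.continuous_sin.smul continuous_const)
  have hn_cont : Continuous n := hqcont.norm
  have hp' : ∀ t, p t = (n t)⁻¹ • q t := fun t => hp t
  have hpnorm : ∀ t, ‖p t‖ = 1 := by
    intro t
    rw [hp' t, norm_smul, norm_inv, norm_norm]
    exact inv_mul_cancel₀ (hn_pos t).ne'
  have hpcont : Continuous p := by
    have h1 : p = fun t => (n t)⁻¹ • q t := funext hp'
    rw [h1]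
    exact (hn_cont.inv₀ fun t => (hn_pos t).ne').smul hqcont
  have hφ0p : ∀ t, φ0 (p t) = (n t)⁻¹ * Real.cos t := by
    intro t
    rw [hp' t, ContinuousLinearMap.map_smul, smul_eq_mul, hφ0q]
  have hφ1p : ∀ t, φ1 (p t) = (n t)⁻¹ * Real.sin t := by
    intro t
    rw [hp' t, ContinuousLinearMap.map_smul, smul_eq_mul, hφ1q]
  have hφ0r : ∀ t, φ0 (r t) = (n (τ t))⁻¹ * Real.cos (τ t) := by
    intro t; rw [hr t, hφ0p]
  have hφ1r : ∀ t, φ1 (r t) = (n (τ t))⁻¹ * Real.sin (τ t) := by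
    intro t; rw [hr t, hφ1p]
  -- bounds on q and n
  set M : ℝ := ‖e₁‖ + ‖e₂‖ with hMdef
  have hM_pos : 0 < M := by
    have h1 : e₁ ≠ 0 := by
      intro h0
      apply hq_ne 0
      rw [hqdef]
      simp [h0]
    have h2 := norm_pos_iff.2 h1
    have h3 := norm_nonneg e₂
    rw [hMdef]; linarith
  have hqlip : ∀ a c, ‖q a - q c‖ ≤ M * |a - c| := by
    intro a c
    have h1 : q a - q c = (Real.cos a - Real.cos c) • e₁ + (Real.sin a - Real.sin c) • e₂ := by
      rw [hqdef]
      simp only [sub_smul]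
      abel
    rw [h1]
    calc ‖(Real.cos a - Real.cos c) • e₁ + (Real.sin a - Real.sin c) • e₂‖
        ≤ ‖(Real.cos a - Real.cos c) • e₁‖ + ‖(Real.sin a - Real.sin c) • e₂‖ := norm_add_le _ _
      _ ≤ |a - c| * ‖e₁‖ + |a - c| * ‖e₂‖ := by
          rw [norm_smul, norm_smul, Real.norm_eq_abs, Real.norm_eq_abs]
          have h2 := abs_cos_sub_cos a c
          have h3 := abs_sin_sub_sin a c
          have h4 := norm_nonneg e₁
          have h5 := norm_nonneg e₂
          have h6 := abs_nonneg (Real.cos a - Real.cos c)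
          have h7 := abs_nonneg (Real.sin a - Real.sin c)
          nlinarith
      _ = M * |a - c| := by rw [hMdef]; ring
  -- the global minimum of n via periodicity
  obtain ⟨t₀, ht₀mem, hmin⟩ :=
    (isCompact_Icc : IsCompact (Icc (0:ℝ) (2 * Real.pi))).exists_isMinOn
      (nonempty_Icc.2 (by linarith [Real.pi_pos])) hn_cont.continuousOn
  set m : ℝ := n t₀ with hmdef
  have hm_pos : 0 < m := hn_pos t₀
  have hmin' := isMinOn_iff.1 hmin
  have h2π : (0:ℝ) < 2 * Real.pi := by positivity
  have hmn : ∀ t, m ≤ n t := by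
    intro t
    set k : ℤ := ⌊t / (2 * Real.pi)⌋ with hkdef
    set u : ℝ := t - k * (2 * Real.pi) with hudef
    have hqq : q u = q t := by
      rw [hqdef]
      simp only [hudef, Real.cos_sub_int_mul_two_pi, Real.sin_sub_int_mul_two_pi]
    have h1 := Int.floor_le (t / (2 * Real.pi))
    have h2 := Int.lt_floor_add_one (t / (2 * Real.pi))
    rw [← hkdef] at h1 h2
    have h3 : (k:ℝ) * (2 * Real.pi) ≤ t := (le_div_iff₀ h2π).1 h1
    have h4 : t < ((k:ℝ) + 1) * (2 * Real.pi) := (div_lt_iff₀ h2π).1 h2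
    have h5 : ((k:ℝ) + 1) * (2 * Real.pi) = (k:ℝ) * (2 * Real.pi) + 2 * Real.pi := by ring
    rw [h5] at h4
    have hu : u ∈ Icc 0 (2 * Real.pi) := by
      constructor
      · rw [hudef]; linarith
      · rw [hudef]; linarith
    calc m ≤ n u := hmin' u hu
      _ = n t := by rw [hndef]; simp only [hqq]
  -- Lipschitz bound for p
  set K : ℝ := 2 * (M / m) + 1 with hKdef
  have hK : 0 < K := by
    have h1 : 0 ≤ M / m := by positivity
    rw [hKdef]; linarith
  have hplip : ∀ a c, ‖p a - p c‖ ≤ K * |a - c| := by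
    intro a c
    have h1 : p a - p c = (n a)⁻¹ • (q a - q c) + ((n a)⁻¹ - (n c)⁻¹) • q c := by
      rw [hp' a, hp' c, smul_sub, sub_smul]
      abel
    have hna := hn_pos a
    have hnc := hn_pos c
    have hma := hmn a
    have hmc := hmn c
    have h2 : ‖p a - p c‖ ≤ (n a)⁻¹ * ‖q a - q c‖ + |(n a)⁻¹ - (n c)⁻¹| * n c := by
      rw [h1]
      calc ‖(n a)⁻¹ • (q a - q c) + ((n a)⁻¹ - (n c)⁻¹) • q c‖
          ≤ ‖(n a)⁻¹ • (q a - q c)‖ + ‖((n a)⁻¹ - (n c)⁻¹) • q c‖ := norm_add_le _ _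
        _ = (n a)⁻¹ * ‖q a - q c‖ + |(n a)⁻¹ - (n c)⁻¹| * n c := by
            rw [norm_smul, norm_smul, Real.norm_eq_abs, Real.norm_eq_abs,
              abs_of_pos (inv_pos.2 hna)]
    have h3 : |(n a)⁻¹ - (n c)⁻¹| * n c = |n c - n a| / n a := by
      rw [inv_sub_inv hna.ne' hnc.ne', abs_div, abs_of_pos (by positivity : (0:ℝ) < n a * n c)]
      field_simp
    have h4 : |n c - n a| ≤ M * |a - c| := by
      calc |n c - n a| ≤ ‖q c - q a‖ := abs_norm_sub_norm_le _ _
        _ ≤ M * |c - a| := hqlip c a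
        _ = M * |a - c| := by rw [abs_sub_comm]
    have h6 : (n a)⁻¹ * ‖q a - q c‖ ≤ m⁻¹ * (M * |a - c|) :=
      mul_le_mul (inv_anti₀ hm_pos hma) (hqlip a c) (norm_nonneg _) (by positivity)
    have h7 : |n c - n a| / n a ≤ (M * |a - c|) / m :=
      div_le_div₀ (by positivity) h4 hm_pos hma
    have h8 : m⁻¹ * (M * |a - c|) = (M * |a - c|) / m := by rw [inv_mul_eq_div]
    have h9 : (M * |a - c|) / m = (M / m) * |a - c| := by ring
    have h10 := abs_nonneg (a - c)
    have h11 : 0 ≤ M / m := by positivity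
    rw [h3] at h2
    rw [h8, h9] at h6
    rw [h9] at h7
    rw [hKdef]
    nlinarith
  -- the arc-length integrand F
  set F : ℝ → ℝ := fun u => ‖derivWithin p (Ici u) u‖ with hFdef
  have hFmeas : Measurable F := (measurable_derivWithin_Ici p).norm
  have hF0 : ∀ u, 0 ≤ F u := fun u => norm_nonneg _
  have hFK : ∀ u, F u ≤ K := by
    intro u
    by_cases hdw : DifferentiableWithinAt ℝ p (Ici u) u
    · exact norm_hasDerivWithinAt_le hplip hdw.hasDerivWithinAt
    · rw [hFdef]
      simp only [derivWithin_zero_of_not_differentiableWithinAt hdw, norm_zero]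
      exact hK.le
  have hFint : ∀ a c : ℝ, IntervalIntegrable F MeasureTheory.volume a c := by
    intro a c
    refine (intervalIntegrable_const (c := K)).mono_fun' hFmeas.aestronglyMeasurable ?_
    refine Filter.Eventually.of_forall (fun x => ?_)
    show ‖F x‖ ≤ K
    rw [Real.norm_eq_abs, abs_of_nonneg (hF0 x)]
    exact hFK x
  have hσab : ∀ a c : ℝ, σ c - σ a = ∫ u in a..c, F u := by
    intro a c
    rw [hσ c, hσ a]
    exact intervalIntegral.integral_interval_sub_left (hFint 0 c) (hFint 0 a)
  have hσK : ∀ a c, a ≤ c → σ c - σ a ≤ K * (c - a) := by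
    intro a c hac
    rw [hσab a c]
    calc (∫ u in a..c, F u) ≤ ∫ _ in a..c, K :=
          intervalIntegral.integral_mono_on hac (hFint a c) intervalIntegrable_const
            (fun x _ => hFK x)
      _ = K * (c - a) := by rw [intervalIntegral.integral_const, smul_eq_mul, mul_comm]
  have hσcont : Continuous σ := by
    have h1 : LipschitzWith ⟨K, hK.le⟩ σ := by
      refine LipschitzWith.of_dist_le_mul (fun a c => ?_)
      rw [Real.dist_eq, Real.dist_eq]
      have h2 : σ a - σ c = ∫ u in c..a, F u := hσab c a
      have h3 : |σ a - σ c| ≤ K * |a - c| := by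
        rw [h2]
        have h4 := intervalIntegral.norm_integral_le_of_norm_le_const
          (a := c) (b := a) (C := K) (f := F)
          (fun x _ => by rw [Real.norm_eq_abs, abs_of_nonneg (hF0 x)]; exact hFK x)
        rw [Real.norm_eq_abs] at h4
        exact h4
      exact h3
    exact h1.continuous
  -- W and differentiability of p on W
  set W : Set ℝ := τ '' U with hWdef
  have hW : IsOpen W := isOpen_image_strictMono hτ_cont hτ_mono hU
  have hτσW : ∀ u ∈ W, τ (σ u) = u := by
    rintro _ ⟨t, _, rfl⟩
    rw [hστ]
  have hprW : ∀ u ∈ W, p u = r (σ u) := by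
    rintro _ ⟨t, _, rfl⟩
    rw [hστ, ← hr]
  have hPdiff : ∀ u ∈ W, DifferentiableAt ℝ p u := by
    rintro _ ⟨t, ht, rfl⟩
    exact p_differentiableAt φ0 φ1 τ σ n p r hτ_cont hτ_mono hστ hn_pos hφ0r hφ1r
      K hK hσK hσcont W hW hτσW hprW t (mem_image_of_mem τ ht) (hdiff t ht)
  -- continuity of deriv p on W
  have hDcont : ContinuousOn (deriv p) W :=
    deriv_cont hdim φ0 φ1 n p hn_pos hn_cont hφ0p hφ1p hpnorm hpcont K hplip W hW hPdiff
  have hd0 : ∀ u ∈ W, deriv p u ≠ 0 := by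
    intro u hu h0
    have h1 := det_deriv φ0 φ1 n p hn_pos hφ0p hφ1p u (hPdiff u hu).hasDerivAt
    rw [h0] at h1
    simp at h1
    exact (hn_pos u).ne' h1
  -- F agrees with ‖deriv p‖ on W and is continuous there
  have hFW : ∀ u ∈ W, F u = ‖deriv p u‖ := by
    intro u hu
    rw [hFdef]
    simp only
    rw [(hPdiff u hu).derivWithin ((uniqueDiffOn_Ici u) u self_mem_Ici)]
  have hFcontAt : ∀ u ∈ W, ContinuousAt F u := by
    intro u hu
    have h1 : ContinuousAt (fun t => ‖deriv p t‖) u :=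
      ((hDcont u hu).continuousAt (hW.mem_nhds hu)).norm
    refine h1.congr ?_
    filter_upwards [hW.mem_nhds hu] with t ht
    exact (hFW t ht).symm
  have hFpos : ∀ u ∈ W, 0 < F u := by
    intro u hu
    rw [hFW u hu]
    exact norm_pos_iff.2 (hd0 u hu)
  -- σ is differentiable on W with derivative F
  have hσ'W : ∀ u ∈ W, HasDerivAt σ (F u) u := by
    intro u hu
    have h1 : HasDerivAt (fun t => ∫ x in (0:ℝ)..t, F x) (F u) u :=
      intervalIntegral.integral_hasDerivAt_right (hFint 0 u)
        ⟨univ, univ_mem, hFmeas.aestronglyMeasurable⟩ (hFcontAt u hu)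
    have h2 : σ = fun t => ∫ x in (0:ℝ)..t, F x := funext hσ
    rw [h2]
    exact h1
  -- τ and r are differentiable on U with continuous derivative
  have hτ' : ∀ s ∈ U, HasDerivAt τ (F (τ s))⁻¹ s := by
    intro s hs
    have hsW : τ s ∈ W := mem_image_of_mem τ hs
    exact HasDerivAt.of_local_left_inverse (f := σ) hτ_cont.continuousAt
      (hσ'W (τ s) hsW) (hFpos _ hsW).ne' (Filter.Eventually.of_forall hστ)
  have hr' : ∀ s ∈ U, HasDerivAt r ((F (τ s))⁻¹ • deriv p (τ s)) s := by
    intro s hs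
    have h1 : HasDerivAt p (deriv p (τ s)) (τ s) :=
      (hPdiff _ (mem_image_of_mem τ hs)).hasDerivAt
    have h2 := h1.scomp s (hτ' s hs)
    have h3 : r = p ∘ τ := funext hr
    rw [h3]
    exact h2
  have hderiv_r : ∀ s ∈ U, deriv r s = (F (τ s))⁻¹ • deriv p (τ s) :=
    fun s hs => (hr' s hs).deriv
  have hcont : ContinuousOn (deriv r) U := by
    have hτmaps : MapsTo τ U W := fun s hs => mem_image_of_mem τ hs
    have hFcomp : ContinuousOn (fun s => F (τ s)) U := by
      intro s hs
      exact ((hFcontAt _ (hτmaps hs)).comp hτ_cont.continuousAt).continuousWithinAt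
    have hDcomp : ContinuousOn (fun s => deriv p (τ s)) U :=
      hDcont.comp hτ_cont.continuousOn hτmaps
    have h1 : ContinuousOn (fun s => (F (τ s))⁻¹ • deriv p (τ s)) U :=
      (hFcomp.inv₀ (fun s hs => (hFpos _ (hτmaps hs)).ne')).smul hDcomp
    exact h1.congr (fun s hs => hderiv_r s hs)
  have hdiffOn : DifferentiableOn ℝ r U := fun s hs => (hdiff s hs).differentiableWithinAt
  rw [show (1 : WithTop ℕ∞) = 0 + 1 from rfl, contDiffOn_succ_iff_deriv_of_isOpen hU]
  exact ⟨hdiffOn, by simp, contDiffOn_zero.2 hcont⟩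
end

section
/- If the unit sphere of a strictly convex 2-dimensional real Banach space X contains two linearly independent special points, then S_X contains two special points x, y such that the pair (x, y) is regular. -/
open Metric Set

/-- A real Banach space is *strictly convex* if every convex subset of its unit sphere
contains at most one point. -/
def StrictlyConvexSphere (X : Type*) [NormedAddCommGroup X] [NormedSpace ℝ X] : Prop :=
  ∀ s : Set X, s ⊆ sphere (0 : X) 1 → Convex ℝ s → s.Subsingleton

/-- A point `x` of the unit sphere of `X` is *special* if for every real Banach space `Y`,
every surjective isometry `f : S_X → S_Y`, and all `y, z ∈ S_X` with `y - z = ‖y - z‖ • x`,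
one has `f y - f z = ‖y - z‖ • f x`. -/
def IsSpecialPoint {X : Type*} [NormedAddCommGroup X] [NormedSpace ℝ X]
    (x : sphere (0 : X) 1) : Prop :=
  ∀ (Y : Type*) [NormedAddCommGroup Y] [NormedSpace ℝ Y] [CompleteSpace Y],
    ∀ f : sphere (0 : X) 1 → sphere (0 : Y) 1, Isometry f → Function.Surjective f →
      ∀ y z : sphere (0 : X) 1, (y : X) - (z : X) = ‖(y : X) - (z : X)‖ • (x : X) →
        (f y : Y) - (f z : Y) = ‖(y : X) - (z : X)‖ • (f x : Y)

/-- A pair `(x, y)` of points of the unit sphere is *singular* if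
`{x, -x} ∩ {y, -y} ≠ ∅` or there is `z ∈ S_X` with
`S_X ∩ (z + ℝ·x) = {z} = S_X ∩ (z + ℝ·y)`. -/
def SingularPair {X : Type*} [NormedAddCommGroup X] [NormedSpace ℝ X] (x y : X) : Prop :=
  (({x, -x} : Set X) ∩ ({y, -y} : Set X)).Nonempty ∨
    ∃ z ∈ sphere (0 : X) 1,
      sphere (0 : X) 1 ∩ {w : X | ∃ t : ℝ, w = z + t • x} = {z} ∧
      sphere (0 : X) 1 ∩ {w : X | ∃ t : ℝ, w = z + t • y} = {z}

section Aux
variable {X : Type*} [NormedAddCommGroup X] [NormedSpace ℝ X]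

lemma lemA (m d : X) (hm : ‖m‖ < 1) (hd : d ≠ 0) : ∃ s : ℝ, 0 < s ∧ ‖m + s • d‖ = 1 := by
  have hdpos : 0 < ‖d‖ := norm_pos_iff.mpr hd
  set T : ℝ := (2 + ‖m‖) / ‖d‖ with hT
  have hT0 : 0 < T := by positivity
  have hcont : ContinuousOn (fun s : ℝ => ‖m + s • d‖) (Icc 0 T) := by fun_prop
  have hgT : 1 ≤ ‖m + T • d‖ := by
    have h1 : ‖T • d‖ - ‖m‖ ≤ ‖m + T • d‖ := by
      have he : ‖T • d‖ = ‖(m + T • d) - m‖ := by congr 1; abel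
      rw [he]
      have := norm_sub_le (m + T • d) m
      linarith
    have h2 : ‖T • d‖ = 2 + ‖m‖ := by
      rw [norm_smul, Real.norm_eq_abs, abs_of_pos hT0, hT]
      field_simp
    linarith
  have hmem : (1:ℝ) ∈ Icc (‖m + (0:ℝ) • d‖) (‖m + T • d‖) := by
    constructor
    · simpa using hm.le
    · exact hgT
  obtain ⟨s, hs, hgs⟩ := intermediate_value_Icc hT0.le hcont hmem
  refine ⟨s, ?_, hgs⟩
  rcases hs.1.eq_or_lt with h | h
  · exfalso; rw [← h] at hgs; simp at hgs; exact absurd hgs (by linarith)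
  · exact h

lemma line_convex (z d : X) : Convex ℝ {w : X | ∃ t : ℝ, w = z + t • d} := by
  rintro x ⟨s, rfl⟩ y ⟨t, rfl⟩ a b ha hb hab
  refine ⟨a * s + b * t, ?_⟩
  have : a • z + b • z = z := by
    rw [← add_smul, hab, one_smul]
  simp only [smul_add, add_smul, mul_smul]
  rw [show a • z + a • s • d + (b • z + b • t • d)
      = (a • z + b • z) + (a • s • d + b • t • d) by module, this]

lemma peak (hsc : StrictlyConvexSphere X) {z₀ d : X} (hd : d ≠ 0)
    (hz : z₀ ∈ sphere (0 : X) 1)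
    (htan : sphere (0 : X) 1 ∩ {w : X | ∃ t : ℝ, w = z₀ + t • d} = {z₀}) :
    ∃ φ : X →L[ℝ] ℝ, φ d = 0 ∧ 0 < φ z₀ ∧ (∀ w ∈ sphere (0 : X) 1, φ w ≤ φ z₀) ∧
      ∀ w ∈ sphere (0 : X) 1, φ w = φ z₀ → w = z₀ := by
  have hz1 : ‖z₀‖ = 1 := mem_sphere_zero_iff_norm.mp hz
  -- the line misses the open ball
  have hdisj : Disjoint (ball (0 : X) 1) {w : X | ∃ t : ℝ, w = z₀ + t • d} := by
    rw [Set.disjoint_left]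
    rintro x hx ⟨t, rfl⟩
    have hxn : ‖z₀ + t • d‖ < 1 := by simpa [mem_ball_zero_iff] using hx
    have ht0 : t ≠ 0 := by
      rintro rfl
      simp only [zero_smul, add_zero] at hxn
      rw [hz1] at hxn; exact lt_irrefl 1 hxn
    rcases lt_or_gt_of_ne ht0 with htneg | htpos
    · obtain ⟨s, hs0, hs1⟩ := lemA (z₀ + t • d) (-d) hxn (neg_ne_zero.mpr hd)
      have hmem : z₀ + (t - s) • d ∈ sphere (0 : X) 1 ∩ {w : X | ∃ r : ℝ, w = z₀ + r • d} := by
        constructor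
        · rw [mem_sphere_zero_iff_norm]
          rw [show z₀ + (t - s) • d = z₀ + t • d + s • (-d) by module]
          exact hs1
        · exact ⟨t - s, rfl⟩
      rw [htan] at hmem
      have : (t - s) • d = 0 := by
        have := hmem
        simp only [Set.mem_singleton_iff] at this
        have h2 : z₀ + (t - s) • d = z₀ + (0:ℝ) • d := by simpa using this
        simpa using (add_left_cancel h2)
      rcases smul_eq_zero.mp this with h | h
      · linarith
      · exact hd h
    · obtain ⟨s, hs0, hs1⟩ := lemA (z₀ + t • d) d hxn hd
      have hmem : z₀ + (t + s) • d ∈ sphere (0 : X) 1 ∩ {w : X | ∃ r : ℝ, w = z₀ + r • d} := by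
        constructor
        · rw [mem_sphere_zero_iff_norm]
          rw [show z₀ + (t + s) • d = z₀ + t • d + s • d by module]
          exact hs1
        · exact ⟨t + s, rfl⟩
      rw [htan] at hmem
      simp only [Set.mem_singleton_iff] at hmem
      have h2 : (t + s) • d = 0 := by
        have h3 : z₀ + (t + s) • d = z₀ + (0:ℝ) • d := by simpa using hmem
        simpa using (add_left_cancel h3)
      rcases smul_eq_zero.mp h2 with h | h
      · linarith
      · exact hd h
  obtain ⟨φ, c, hball, hline⟩ :=
    geometric_hahn_banach_open (convex_ball (0:X) 1) isOpen_ball (line_convex z₀ d) hdisj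
  have hzline : z₀ ∈ {w : X | ∃ t : ℝ, w = z₀ + t • d} := ⟨0, by simp⟩
  have hφd : φ d = 0 := by
    by_contra hne
    have := hline (z₀ + ((c - φ z₀ - 1) / φ d) • d) ⟨_, rfl⟩
    rw [map_add, map_smul] at this
    simp only [smul_eq_mul] at this
    rw [div_mul_cancel₀ _ hne] at this
    linarith
  have hc0 : 0 < c := by
    have := hball 0 (by simp)
    simpa using this
  have hwle : ∀ w ∈ sphere (0 : X) 1, φ w ≤ c := by
    intro w hw
    have hw1 : ‖w‖ = 1 := mem_sphere_zero_iff_norm.mp hw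
    by_contra hlt
    push_neg at hlt
    have hφw : 0 < φ w := lt_trans hc0 hlt
    have hmem : (c / φ w) • w ∈ ball (0:X) 1 := by
      rw [mem_ball_zero_iff, norm_smul, hw1, mul_one, Real.norm_eq_abs,
        abs_of_pos (by positivity)]
      rw [div_lt_one hφw]; exact hlt
    have := hball _ hmem
    rw [map_smul, smul_eq_mul, div_mul_cancel₀ _ (ne_of_gt hφw)] at this
    exact lt_irrefl c this
  have hzc : φ z₀ = c := le_antisymm (hwle z₀ hz) (hline z₀ hzline)
  refine ⟨φ, hφd, by rw [hzc]; exact hc0, by rw [hzc]; exact hwle, ?_⟩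
  intro w hw hweq
  have hw1 : ‖w‖ = 1 := mem_sphere_zero_iff_norm.mp hw
  have hseg : segment ℝ w z₀ ⊆ sphere (0 : X) 1 := by
    rintro m ⟨a, b, ha, hb, hab, rfl⟩
    rw [mem_sphere_zero_iff_norm]
    have hle : ‖a • w + b • z₀‖ ≤ 1 := by
      calc ‖a • w + b • z₀‖ ≤ ‖a • w‖ + ‖b • z₀‖ := norm_add_le _ _
      _ = a + b := by rw [norm_smul, norm_smul, hw1, hz1, Real.norm_eq_abs, Real.norm_eq_abs,
            abs_of_nonneg ha, abs_of_nonneg hb]; ring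
      _ = 1 := hab
    rcases hle.eq_or_lt with h | h
    · exact h
    · exfalso
      have hmem : a • w + b • z₀ ∈ ball (0:X) 1 := mem_ball_zero_iff.mpr h
      have := hball _ hmem
      rw [map_add, map_smul, map_smul, smul_eq_mul, smul_eq_mul, hweq, hzc] at this
      have : (a + b) * c < c := by linarith
      rw [hab, one_mul] at this
      exact lt_irrefl c this
  have hsub := hsc (segment ℝ w z₀) hseg (convex_segment w z₀)
  exact hsub (left_mem_segment ℝ w z₀) (right_mem_segment ℝ w z₀)

lemma not_parallel {z₀ d : X} (hz : z₀ ∈ sphere (0 : X) 1)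
    (htan : sphere (0 : X) 1 ∩ {w : X | ∃ t : ℝ, w = z₀ + t • d} = {z₀}) :
    ∀ t : ℝ, z₀ ≠ t • d := by
  intro t ht
  have hz1 : ‖z₀‖ = 1 := mem_sphere_zero_iff_norm.mp hz
  have hmem : -z₀ ∈ sphere (0 : X) 1 ∩ {w : X | ∃ r : ℝ, w = z₀ + r • d} := by
    constructor
    · rw [mem_sphere_zero_iff_norm, norm_neg]; exact hz1
    · exact ⟨-2 * t, by rw [ht]; module⟩
  rw [htan] at hmem
  simp only [Set.mem_singleton_iff] at hmem
  have h2 : (2:ℝ) • z₀ = 0 := by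
    rw [two_smul]
    nth_rewrite 1 [← hmem]
    abel
  rcases smul_eq_zero.mp h2 with h | h
  · norm_num at h
  · rw [h] at hz1; simp at hz1

lemma lin_of_ker (hdim : Module.finrank ℝ X = 2) {d z₀ : X} (hd : d ≠ 0)
    (hz0 : ∀ t : ℝ, z₀ ≠ t • d) {φ : X →L[ℝ] ℝ} (hφd : φ d = 0) (hφz : φ z₀ ≠ 0) :
    ∀ x : X, φ x = 0 → ∃ t : ℝ, x = t • d := by
  have hind : LinearIndependent ℝ ![d, z₀] := by
    rw [linearIndependent_fin2]
    constructor
    · simp only [Matrix.cons_val_one, Matrix.head_cons]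
      intro h
      exact hz0 0 (by simp at h; rw [h]; simp)
    · intro a ha
      simp only [Matrix.cons_val_one, Matrix.head_cons, Matrix.cons_val_zero] at ha
      rcases eq_or_ne a 0 with h | h
      · rw [h] at ha; simp at ha; exact hd ha.symm
      · exact hz0 a⁻¹ (by rw [← ha]; rw [smul_smul, inv_mul_cancel₀ h, one_smul])
  have hfd : FiniteDimensional ℝ X := FiniteDimensional.of_finrank_pos (by rw [hdim]; norm_num)
  have hcard : Fintype.card (Fin 2) = Module.finrank ℝ X := by simp [hdim]
  let b := basisOfLinearIndependentOfCardEqFinrank hind hcard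
  have hb : ⇑b = ![d, z₀] := coe_basisOfLinearIndependentOfCardEqFinrank hind hcard
  intro x hx
  have hrepr : x = b.repr x 0 • d + b.repr x 1 • z₀ := by
    have := b.sum_repr x
    rw [Fin.sum_univ_two, hb] at this
    simpa using this.symm
  have hφx : φ x = b.repr x 1 * φ z₀ := by
    conv_lhs => rw [hrepr]
    rw [map_add, map_smul, map_smul, hφd]
    simp
  rw [hx] at hφx
  have h1 : b.repr x 1 = 0 := by
    rcases mul_eq_zero.mp hφx.symm with h | h
    · exact h
    · exact absurd h hφz
  refine ⟨b.repr x 0, ?_⟩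
  rw [h1, zero_smul, add_zero] at hrepr
  exact hrepr

lemma tang (hsc : StrictlyConvexSphere X) (hdim : Module.finrank ℝ X = 2)
    {d z₀ p : X} (hd : d ≠ 0) (hz : z₀ ∈ sphere (0 : X) 1) (hp : p ∈ sphere (0 : X) 1)
    (h1 : sphere (0 : X) 1 ∩ {w : X | ∃ t : ℝ, w = z₀ + t • d} = {z₀})
    (h2 : sphere (0 : X) 1 ∩ {w : X | ∃ t : ℝ, w = p + t • d} = {p}) :
    p = z₀ ∨ p = -z₀ := by
  obtain ⟨φ, hφd, hφz, hφpeak, hφeq⟩ := peak hsc hd hz h1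
  obtain ⟨φ', hφ'd, hφ'p, hφ'peak, hφ'eq⟩ := peak hsc hd hp h2
  have hz0 := not_parallel hz h1
  set l : ℝ := φ' z₀ / φ z₀ with hl
  have hEq : ∀ x : X, φ' x = l * φ x := by
    intro x
    -- use that φ' - l • φ kills both d and z₀, hence is zero... use lin_of_ker on combination
    -- direct: express x in basis via lin_of_ker trick
    have hker : φ (x - (φ x / φ z₀) • z₀) = 0 := by
      rw [map_sub, map_smul]
      simp only [smul_eq_mul]
      field_simp
      ring
    obtain ⟨t, ht⟩ := lin_of_ker hdim hd hz0 hφd (ne_of_gt hφz) _ hker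
    have hx : x = t • d + (φ x / φ z₀) • z₀ := by
      rw [← ht]; abel
    rw [hx, map_add, map_add, map_smul, map_smul, map_smul, map_smul, hφd, hφ'd]
    simp only [smul_eq_mul, mul_zero, zero_add]
    rw [hl]
    field_simp
  rcases lt_trichotomy l 0 with hneg | hzero | hpos
  · right
    have hmz : -z₀ ∈ sphere (0:X) 1 := by
      rw [mem_sphere_zero_iff_norm, norm_neg]; exact mem_sphere_zero_iff_norm.mp hz
    have h3 : φ' (-z₀) ≤ φ' p := hφ'peak _ hmz
    have h4 : φ' (-z₀) = -(l * φ z₀) := by rw [hEq]; simp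
    have h5 : φ' p = l * φ p := hEq p
    have h6 : φ p ≤ -φ z₀ := by
      rw [h4, h5] at h3
      nlinarith
    have hmp : -p ∈ sphere (0:X) 1 := by
      rw [mem_sphere_zero_iff_norm, norm_neg]; exact mem_sphere_zero_iff_norm.mp hp
    have h7 : φ (-p) ≤ φ z₀ := hφpeak _ hmp
    have h8 : φ (-p) = φ z₀ := by
      rw [map_neg]; rw [map_neg] at h7; linarith
    have := hφeq _ hmp h8
    rw [← this]; simp
  · exfalso
    have := hEq p
    rw [hzero] at this
    simp at this
    linarith
  · left
    have h3 : φ' z₀ ≤ φ' p := hφ'peak _ hz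
    rw [hEq, hEq] at h3
    have h6 : φ z₀ ≤ φ p := by nlinarith
    have h7 : φ p = φ z₀ := le_antisymm (hφpeak _ hp) h6
    exact hφeq _ hp h7

lemma neg_tang {z₀ d : X}
    (htan : sphere (0 : X) 1 ∩ {w : X | ∃ t : ℝ, w = z₀ + t • d} = {z₀}) :
    sphere (0 : X) 1 ∩ {w : X | ∃ t : ℝ, w = -z₀ + t • d} = {-z₀} := by
  ext x
  constructor
  · rintro ⟨hxs, t, rfl⟩
    have hmem : z₀ + (-t) • d ∈ sphere (0 : X) 1 ∩ {w : X | ∃ r : ℝ, w = z₀ + r • d} := by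
      constructor
      · rw [mem_sphere_zero_iff_norm]
        rw [show z₀ + (-t) • d = -(-z₀ + t • d) by module, norm_neg]
        exact mem_sphere_zero_iff_norm.mp hxs
      · exact ⟨-t, rfl⟩
    rw [htan] at hmem
    simp only [Set.mem_singleton_iff] at hmem
    have : (-t) • d = 0 := by
      have h2 : z₀ + (-t) • d = z₀ + (0:ℝ) • d := by simpa using hmem
      simpa using add_left_cancel h2
    simp only [Set.mem_singleton_iff]
    rw [show -z₀ + t • d = -(z₀ + (-t) • d) by module, this]
    simp
  · rintro rfl
    have hz : z₀ ∈ sphere (0:X) 1 := by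
      have : z₀ ∈ ({z₀} : Set X) := rfl
      rw [← htan] at this
      exact this.1
    constructor
    · rw [mem_sphere_zero_iff_norm, norm_neg]
      exact mem_sphere_zero_iff_norm.mp hz
    · exact ⟨0, by simp⟩

lemma partner (hsc : StrictlyConvexSphere X) (hdim : Module.finrank ℝ X = 2)
    {d z₀ : X} (hd : d ≠ 0) (hz : z₀ ∈ sphere (0 : X) 1)
    (htan : sphere (0 : X) 1 ∩ {w : X | ∃ t : ℝ, w = z₀ + t • d} = {z₀})
    (p : sphere (0 : X) 1) (hp1 : (p : X) ≠ z₀) (hp2 : (p : X) ≠ -z₀) :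
    ∃ q : sphere (0 : X) 1, q ≠ p ∧ ∃ t : ℝ, (p : X) - (q : X) = t • d := by
  by_contra hno
  push_neg at hno
  have htan' : sphere (0 : X) 1 ∩ {w : X | ∃ t : ℝ, w = (p : X) + t • d} = {(p : X)} := by
    ext x
    constructor
    · rintro ⟨hxs, t, rfl⟩
      simp only [Set.mem_singleton_iff]
      rcases eq_or_ne t 0 with h | h
      · rw [h]; simp
      · exfalso
        have hq : ((p : X) + t • d) ≠ (p : X) := by
          intro he
          have : t • d = 0 := by
            have h3 : (p : X) + t • d = (p : X) + 0 := by rw [he]; simp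
            exact add_left_cancel h3
          rcases smul_eq_zero.mp this with h' | h'
          · exact h h'
          · exact hd h'
        have hqne : (⟨_, hxs⟩ : sphere (0:X) 1) ≠ p := by
          intro he
          exact hq (congrArg Subtype.val he)
        have := hno ⟨_, hxs⟩ hqne (-t)
        apply this
        simp only
        module
    · rintro rfl
      exact ⟨p.2, 0, by simp⟩
  rcases tang hsc hdim hd hz p.2 htan htan' with h | h
  · exact hp1 h
  · exact hp2 h

lemma const_aux [FiniteDimensional ℝ X] {Y : Type*} [NormedAddCommGroup Y]
    {u v z₀ : X} (hu0 : u ≠ 0) (hvu : ∀ t : ℝ, v ≠ t • u)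
    (hz : z₀ ∈ sphere (0:X) 1)
    (φ ψ : X →L[ℝ] ℝ)
    (hφu : φ u = 0) (hψv : ψ v = 0)
    (hφpeak : ∀ w ∈ sphere (0:X) 1, φ w ≤ φ z₀)
    (hφeq : ∀ w ∈ sphere (0:X) 1, φ w = φ z₀ → w = z₀)
    (hψpeak : ∀ w ∈ sphere (0:X) 1, ψ w ≤ ψ z₀)
    (hψeq : ∀ w ∈ sphere (0:X) 1, ψ w = ψ z₀ → w = z₀)
    (hlin : ∀ x : X, φ x = 0 → ∃ t : ℝ, x = t • u)
    (h : sphere (0:X) 1 → Y) (hcont : Continuous h)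
    (hU : ∀ (p q : sphere (0:X) 1) (t : ℝ), (p:X) - (q:X) = t • u → h p = h q)
    (hV : ∀ (p q : sphere (0:X) 1) (t : ℝ), (p:X) - (q:X) = t • v → h p = h q)
    (hpart : ∀ p : sphere (0:X) 1, (p:X) ≠ z₀ → (p:X) ≠ -z₀ →
      ∃ q : sphere (0:X) 1, q ≠ p ∧ ∃ t : ℝ, (p:X) - (q:X) = t • v)
    (q : sphere (0:X) 1) (hq : (q:X) ≠ -z₀) : h q = h ⟨z₀, hz⟩ := by
  set Ψ := ψ z₀ with hΨ
  set W : Set (sphere (0:X) 1) := {p | h p = h q} with hWdef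
  have hWc : IsClosed W := isClosed_eq hcont continuous_const
  have hCS : CompactSpace (sphere (0:X) 1) :=
    isCompact_iff_compactSpace.mp (isCompact_sphere (0:X) 1)
  have hWcp : IsCompact W := hWc.isCompact
  have hWne : W.Nonempty := ⟨q, rfl⟩
  have hcont' : ContinuousOn (fun p : sphere (0:X) 1 => ψ (p:X)) W :=
    (ψ.continuous.comp continuous_subtype_val).continuousOn
  obtain ⟨pm, hpW, hmax'⟩ := hWcp.exists_isMaxOn hWne hcont'
  have hmax : ∀ p ∈ W, ψ (p:X) ≤ ψ (pm:X) := fun p hp => hmax' hp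
  set s := ψ (pm:X) with hs
  have hsle : s ≤ Ψ := hψpeak _ pm.2
  rcases hsle.lt_or_eq with hslt | hseq
  · exfalso
    -- the key contradiction
    have key : ∀ α β : sphere (0:X) 1, α ∈ W → β ∈ W → ψ (α:X) = s → ψ (β:X) = s →
        φ (β:X) < φ (α:X) → False := by
      intro α β hαW hβW hψα hψβ hba
      have hαz : (α:X) ≠ z₀ := by
        intro he
        rw [he] at hψα
        rw [← hψα] at hslt
        exact lt_irrefl _ hslt
      have haΦ : φ (α:X) < φ z₀ :=
        lt_of_le_of_ne (hφpeak _ α.2) (fun he => hαz (hφeq _ α.2 he))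
      set a := φ (α:X) with ha
      set bb := φ (β:X) with hbb
      set Φ := φ z₀ with hΦ
      have hΦb : 0 < Φ - bb := by linarith
      set θ := (a - bb) / (Φ - bb) with hθ
      have hθ0 : 0 < θ := by apply div_pos <;> linarith
      have hθ1 : θ < 1 := by
        rw [hθ, div_lt_one hΦb]; linarith
      have hθmul : θ * (Φ - bb) = a - bb := div_mul_cancel₀ _ (ne_of_gt hΦb)
      set m := (1 - θ) • (β:X) + θ • z₀ with hm
      have hφm : φ m = a := by
        rw [hm, map_add, map_smul, map_smul]
        simp only [smul_eq_mul, ← hbb]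
        nlinarith [hθmul]
      have hψm : s < ψ m := by
        rw [hm, map_add, map_smul, map_smul]
        simp only [smul_eq_mul, hψβ, ← hΨ]
        nlinarith
      have hβ1 : ‖(β:X)‖ = 1 := mem_sphere_zero_iff_norm.mp β.2
      have hz1 : ‖z₀‖ = 1 := mem_sphere_zero_iff_norm.mp hz
      have hm1 : ‖m‖ ≤ 1 := by
        calc ‖m‖ ≤ ‖(1 - θ) • (β:X)‖ + ‖θ • z₀‖ := norm_add_le _ _
        _ = (1 - θ) + θ := by
            rw [norm_smul, norm_smul, hβ1, hz1, Real.norm_eq_abs, Real.norm_eq_abs,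
              abs_of_nonneg (by linarith), abs_of_nonneg (by linarith)]; ring
        _ = 1 := by ring
      have hr : ∃ r : X, r ∈ sphere (0:X) 1 ∧ φ r = a ∧ s < ψ r := by
        rcases hm1.lt_or_eq with hlt | heq
        · set d := if 0 ≤ ψ u then u else -u with hd
          have hd0 : d ≠ 0 := by
            rw [hd]; split_ifs
            · exact hu0
            · exact neg_ne_zero.mpr hu0
          have hφd : φ d = 0 := by
            rw [hd]; split_ifs
            · exact hφu
            · rw [map_neg, hφu, neg_zero]
          have hψd : 0 ≤ ψ d := by
            rw [hd]; split_ifs with hcase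
            · exact hcase
            · rw [map_neg]; push_neg at hcase; linarith
          obtain ⟨t, ht0, ht1⟩ := lemA m d hlt hd0
          refine ⟨m + t • d, mem_sphere_zero_iff_norm.mpr ht1, ?_, ?_⟩
          · rw [map_add, map_smul, smul_eq_mul, hφd, mul_zero, add_zero, hφm]
          · rw [map_add, map_smul, smul_eq_mul]
            nlinarith
        · exact ⟨m, mem_sphere_zero_iff_norm.mpr heq, hφm, hψm⟩
      obtain ⟨r, hrS, hφr, hψr⟩ := hr
      have hker : φ (r - (α:X)) = 0 := by rw [map_sub, hφr, ← ha, sub_self]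
      obtain ⟨t', ht'⟩ := hlin _ hker
      have hhr : h ⟨r, hrS⟩ = h α := hU ⟨r, hrS⟩ α t' ht'
      have hrW : (⟨r, hrS⟩ : sphere (0:X) 1) ∈ W := by
        have : h α = h q := hαW
        simp only [hWdef, Set.mem_setOf_eq, hhr, this]
      have := hmax _ hrW
      exact absurd hψr (not_lt.mpr this)
    -- find p₁
    have hqW : q ∈ W := rfl
    have hqψ : -Ψ < ψ (q:X) := by
      have hmq : -(q:X) ∈ sphere (0:X) 1 := by
        rw [mem_sphere_zero_iff_norm, norm_neg]
        exact mem_sphere_zero_iff_norm.mp q.2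
      rcases (hψpeak _ hmq).lt_or_eq with hh | hh
      · rw [map_neg] at hh; linarith
      · exact absurd (by rw [← hψeq _ hmq hh]; simp : (q:X) = -z₀) hq
    have hsgt : -Ψ < s := lt_of_lt_of_le hqψ (hmax q hqW)
    have hp1 : (pm:X) ≠ z₀ := by
      intro he
      rw [hs, he] at hslt
      exact lt_irrefl _ hslt
    have hp2 : (pm:X) ≠ -z₀ := by
      intro he
      rw [hs, he, map_neg] at hsgt
      linarith
    obtain ⟨p₁, hne, t, hrel⟩ := hpart pm hp1 hp2
    have hψ1 : ψ (p₁:X) = s := by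
      have : ψ ((pm:X) - (p₁:X)) = 0 := by rw [hrel, map_smul, smul_eq_mul, hψv, mul_zero]
      rw [map_sub] at this
      rw [hs]; linarith
    have hW1 : p₁ ∈ W := by
      have h1 : h pm = h p₁ := hV pm p₁ t hrel
      have h2 : h pm = h q := hpW
      simp only [hWdef, Set.mem_setOf_eq, ← h1, h2]
    have hφne : φ (pm:X) ≠ φ (p₁:X) := by
      intro he
      have ht0 : t ≠ 0 := by
        intro h0
        rw [h0, zero_smul, sub_eq_zero] at hrel
        exact hne (Subtype.ext hrel.symm)
      have : φ ((pm:X) - (p₁:X)) = 0 := by rw [map_sub, he, sub_self]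
      rw [hrel, map_smul, smul_eq_mul] at this
      have hφv : φ v = 0 := by
        rcases mul_eq_zero.mp this with h' | h'
        · exact absurd h' ht0
        · exact h'
      obtain ⟨t', ht'⟩ := hlin v hφv
      exact hvu t' ht'
    rcases lt_trichotomy (φ (p₁:X)) (φ (pm:X)) with hh | hh | hh
    · exact key pm p₁ hpW hW1 rfl hψ1 hh
    · exact hφne hh.symm
    · exact key p₁ pm hW1 hpW hψ1 rfl hh
  · have hpz : (pm:X) = z₀ := hψeq _ pm.2 hseq
    have : pm = (⟨z₀, hz⟩ : sphere (0:X) 1) := Subtype.ext hpz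
    rw [← this]
    exact hpW.symm
end Aux

universe uX uY uZ

/-- A bare copy of `Fin n → ℝ` carrying no instances. -/
def NCopy (n : ℕ) : Type := Fin n → ℝ

section Transfer
variable {X : Type uX} [NormedAddCommGroup X] [NormedSpace ℝ X]

lemma special_of_equiv {Y : Type uY} [NormedAddCommGroup Y] [NormedSpace ℝ Y]
    {Z : Type uZ} [NormedAddCommGroup Z] [NormedSpace ℝ Z]
    (e : Y ≃ₗᵢ[ℝ] Z) (x : sphere (0 : X) 1)
    (h : ∀ g : sphere (0 : X) 1 → sphere (0 : Z) 1, Isometry g → Function.Surjective g →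
      ∀ y w : sphere (0 : X) 1, (y : X) - (w : X) = ‖(y : X) - (w : X)‖ • (x : X) →
        (g y : Z) - (g w : Z) = ‖(y : X) - (w : X)‖ • (g x : Z))
    (f : sphere (0 : X) 1 → sphere (0 : Y) 1) (hiso : Isometry f)
    (hsurj : Function.Surjective f) :
    ∀ y w : sphere (0 : X) 1, (y : X) - (w : X) = ‖(y : X) - (w : X)‖ • (x : X) →
      (f y : Y) - (f w : Y) = ‖(y : X) - (w : X)‖ • (f x : Y) := by
  intro y w hyw
  set g : sphere (0 : X) 1 → sphere (0 : Z) 1 := fun p =>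
    ⟨e (f p : Y), by
      rw [mem_sphere_zero_iff_norm, e.norm_map]
      exact mem_sphere_zero_iff_norm.mp (f p).2⟩ with hg
  have hgiso : Isometry g := by
    apply Isometry.of_dist_eq
    intro p q
    have h1 : dist (g p) (g q) = ‖e (f p : Y) - e (f q : Y)‖ := by
      rw [Subtype.dist_eq, dist_eq_norm]
    rw [h1, ← e.map_sub, e.norm_map, ← dist_eq_norm, ← Subtype.dist_eq, hiso.dist_eq]
  have hgsurj : Function.Surjective g := by
    rintro ⟨zv, hzv⟩
    have h1 : ‖e.symm zv‖ = 1 := by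
      rw [e.symm.norm_map]
      exact mem_sphere_zero_iff_norm.mp hzv
    obtain ⟨p, hp⟩ := hsurj ⟨e.symm zv, mem_sphere_zero_iff_norm.mpr h1⟩
    refine ⟨p, ?_⟩
    apply Subtype.ext
    show e (f p : Y) = zv
    rw [hp]
    exact e.apply_symm_apply zv
  have := h g hgiso hgsurj y w hyw
  have h2 : e ((f y : Y) - (f w : Y)) = e (‖(y : X) - (w : X)‖ • (f x : Y)) := by
    rw [e.map_sub, e.map_smul]
    exact this
  exact e.injective h2

lemma special_down (x : sphere (0 : X) 1) (h : IsSpecialPoint.{uX, uY} x) :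
    IsSpecialPoint.{uX, 0} x := by
  intro Y _ _ _ f hiso hsurj
  exact special_of_equiv (LinearIsometryEquiv.ulift ℝ (E := Y)).symm x
    (fun g hgiso hgsurj => h (ULift.{uY} Y) g hgiso hgsurj) f hiso hsurj

lemma special_up [FiniteDimensional ℝ X] (x : sphere (0 : X) 1)
    (h : IsSpecialPoint.{uX, 0} x) : IsSpecialPoint.{uX, uY} x := by
  intro Y _ _ _ f hiso hsurj
  -- Y is finite dimensional
  have hXcs : CompactSpace (sphere (0 : X) 1) :=
    isCompact_iff_compactSpace.mp (isCompact_sphere (0 : X) 1)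
  have hSY : IsCompact (sphere (0 : Y) 1) := by
    have hrange : sphere (0 : Y) 1 = Set.range (fun p : sphere (0 : X) 1 => ((f p : Y))) := by
      ext yy
      constructor
      · intro hyy
        obtain ⟨p, hp⟩ := hsurj ⟨yy, hyy⟩
        exact ⟨p, by show ((f p : Y)) = yy; rw [hp]⟩
      · rintro ⟨p, rfl⟩
        exact (f p).2
    rw [hrange]
    exact isCompact_range (continuous_subtype_val.comp hiso.continuous)
  have hball : IsCompact (closedBall (0 : Y) 1) := by
    have himg : closedBall (0 : Y) 1 =
        (fun q : ℝ × Y => q.1 • q.2) '' (Icc (0:ℝ) 1 ×ˢ sphere (0:Y) 1) := by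
      ext yy
      constructor
      · intro hyy
        rcases eq_or_ne yy 0 with rfl | hne
        · exact ⟨(0, ((f x : Y))), ⟨⟨le_refl 0, zero_le_one⟩, (f x).2⟩, by simp⟩
        · have hn : 0 < ‖yy‖ := norm_pos_iff.mpr hne
          refine ⟨(‖yy‖, ‖yy‖⁻¹ • yy), ⟨⟨norm_nonneg _, mem_closedBall_zero_iff.mp hyy⟩, ?_⟩, ?_⟩
          · rw [mem_sphere_zero_iff_norm, norm_smul, Real.norm_eq_abs,
              abs_of_pos (by positivity)]
            field_simp
          · show ‖yy‖ • ‖yy‖⁻¹ • yy = yy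
            rw [smul_smul, mul_inv_cancel₀ (ne_of_gt hn), one_smul]
      · rintro ⟨⟨t, sv⟩, ⟨⟨ht0, ht1⟩, hs⟩, rfl⟩
        rw [mem_closedBall_zero_iff]
        show ‖t • sv‖ ≤ 1
        rw [norm_smul, mem_sphere_zero_iff_norm.mp hs, mul_one, Real.norm_eq_abs,
          abs_of_nonneg ht0]
        exact ht1
    rw [himg]
    exact (isCompact_Icc.prod hSY).image (continuous_fst.smul continuous_snd)
  have hYfd : FiniteDimensional ℝ Y := FiniteDimensional.of_isCompact_closedBall₀ ℝ one_pos hball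
  -- transport Y to Type 0
  set n := Module.finrank ℝ Y with hn
  letI i1 : AddCommGroup (NCopy n) := Pi.addCommGroup
  letI i2 : Module ℝ (NCopy n) := Pi.module _ _ _
  have E : Y ≃ₗ[ℝ] NCopy n := (Module.finBasis ℝ Y).equivFun
  letI i3 : NormedAddCommGroup (NCopy n) :=
    NormedAddCommGroup.induced (NCopy n) Y (E.symm : NCopy n →ₗ[ℝ] Y) E.symm.injective
  letI i4 : NormedSpace ℝ (NCopy n) := by
    refine ⟨fun a b => ?_⟩
    change ‖(E.symm : NCopy n →ₗ[ℝ] Y) (a • b)‖ ≤ ‖a‖ * ‖(E.symm : NCopy n →ₗ[ℝ] Y) b‖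
    rw [map_smul]
    exact norm_smul_le a _
  haveI i5 : FiniteDimensional ℝ (NCopy n) := Module.Finite.equiv E
  haveI i6 : CompleteSpace (NCopy n) := FiniteDimensional.complete ℝ _
  have hnorm : ∀ yv : Y, ‖E yv‖ = ‖yv‖ := by
    intro yv
    change ‖(E.symm : NCopy n →ₗ[ℝ] Y) (E yv)‖ = ‖yv‖
    simp
  have e : Y ≃ₗᵢ[ℝ] NCopy n := ⟨E, hnorm⟩
  exact special_of_equiv e x
    (fun g hgiso hgsurj => h (NCopy n) g hgiso hgsurj) f hiso hsurj

end Transfer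



/-- If the unit sphere of a strictly convex 2-dimensional real Banach space contains two
linearly independent special points, then it contains two special points forming a
regular pair. -/
theorem exists_regular_pair_of_special_points
    {X : Type*} [NormedAddCommGroup X] [NormedSpace ℝ X] [CompleteSpace X]
    (hdim : Module.finrank ℝ X = 2)
    (hsc : StrictlyConvexSphere X)
    (u v : sphere (0 : X) 1)
    (huv : LinearIndependent ℝ ![(u : X), (v : X)])
    (hu : IsSpecialPoint u) (hv : IsSpecialPoint v) :
    ∃ x y : sphere (0 : X) 1, IsSpecialPoint x ∧ IsSpecialPoint y ∧
      ¬ SingularPair (x : X) (y : X) := by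
  have hFD : FiniteDimensional ℝ X :=
    FiniteDimensional.of_finrank_pos (by rw [hdim]; norm_num)
  by_cases hsing : SingularPair (u : X) (v : X)
  swap
  · exact ⟨u, v, special_up u (special_down u hu), special_up v (special_down v hv), hsing⟩
  obtain ⟨hv0, hvu'⟩ := linearIndependent_fin2.mp huv
  simp only [Matrix.cons_val_one, Matrix.head_cons, Matrix.cons_val_zero] at hv0 hvu'
  have hu1 : ‖(u:X)‖ = 1 := mem_sphere_zero_iff_norm.mp u.2
  have hv1 : ‖(v:X)‖ = 1 := mem_sphere_zero_iff_norm.mp v.2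
  have hu0 : (u:X) ≠ 0 := fun h => by rw [h] at hu1; simp at hu1
  have hv0' : (v:X) ≠ 0 := hv0
  have hvu : ∀ t : ℝ, (v:X) ≠ t • (u:X) := by
    intro t ht
    have ht0 : t ≠ 0 := by
      intro h0; rw [h0, zero_smul] at ht; exact hv0 ht
    exact hvu' t⁻¹ (by rw [ht, smul_smul, inv_mul_cancel₀ ht0, one_smul])
  rcases hsing with ⟨e, he1, he2⟩ | ⟨z, hz, Hu, Hv⟩
  · exfalso
    simp only [Set.mem_insert_iff, Set.mem_singleton_iff] at he1 he2
    have : ∃ c : ℝ, c • (v:X) = (u:X) := by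
      rcases he1 with rfl | rfl
      · rcases he2 with h | h
        · exact ⟨1, by rw [one_smul, h]⟩
        · exact ⟨-1, by rw [neg_smul, one_smul, ← h]⟩
      · rcases he2 with h | h
        · exact ⟨-1, by rw [neg_smul, one_smul, ← h]; simp⟩
        · exact ⟨1, by rw [one_smul]; rw [neg_eq_iff_eq_neg] at h; rw [h]; simp⟩
    obtain ⟨c, hc⟩ := this
    exact hvu' c hc
  · have hz1 : ‖z‖ = 1 := mem_sphere_zero_iff_norm.mp hz
    have hznz : z ≠ 0 := fun h => by rw [h] at hz1; simp at hz1
    obtain ⟨φ, hφu, hφz, hφpeak, hφeq⟩ := peak hsc hu0 hz Hu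
    obtain ⟨ψ, hψv, hψz, hψpeak, hψeq⟩ := peak hsc hv0' hz Hv
    have hz0u := not_parallel hz Hu
    have hz0v := not_parallel hz Hv
    have hlin := lin_of_ker hdim hu0 hz0u hφu (ne_of_gt hφz)
    have hmz : -z ∈ sphere (0:X) 1 := by
      rw [mem_sphere_zero_iff_norm, norm_neg]; exact hz1
    have huz : (u:X) ≠ z := by
      intro h; exact hz0u 1 (by rw [one_smul, h])
    have humz : (u:X) ≠ -z := by
      intro h
      exact hz0u (-1) (by rw [neg_smul, one_smul, h, neg_neg])
    -- z is a special point
    have hu₀ := special_down u hu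
    have hv₀ := special_down v hv
    have hzsp : IsSpecialPoint.{_, 0} (⟨z, hz⟩ : sphere (0:X) 1) := by
      intro Y _ _ _ f hiso hsurj y w hyw
      have hcard : Fintype.card (Fin 2) = Module.finrank ℝ X := by simp [hdim]
      obtain ⟨A, hAu, hAv⟩ : ∃ A : X →ₗ[ℝ] Y, A (u:X) = (f u : Y) ∧ A (v:X) = (f v : Y) := by
        let b := basisOfLinearIndependentOfCardEqFinrank huv hcard
        have hb : ⇑b = ![(u:X), (v:X)] := coe_basisOfLinearIndependentOfCardEqFinrank huv hcard
        refine ⟨b.constr ℝ ![((f u : Y)), ((f v : Y))], ?_, ?_⟩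
        · have h0 : (u:X) = b 0 := by rw [hb]; simp
          rw [h0]
          have := b.constr_basis ℝ ![((f u : Y)), ((f v : Y))] 0
          rw [this]
          simp
        · have h0 : (v:X) = b 1 := by rw [hb]; simp
          rw [h0]
          have := b.constr_basis ℝ ![((f u : Y)), ((f v : Y))] 1
          rw [this]
          simp
      -- chord lemmas
      have chordU : ∀ (p q' : sphere (0:X) 1) (t : ℝ), (p:X) - (q':X) = t • (u:X) →
          (f p : Y) - (f q' : Y) = A ((p:X) - (q':X)) := by
        intro p q' t hpq
        rcases le_or_gt 0 t with ht | ht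
        · have hnorm : ‖(p:X) - (q':X)‖ = t := by
            rw [hpq, norm_smul, hu1, Real.norm_eq_abs, abs_of_nonneg ht, mul_one]
          have hcond : (p:X) - (q':X) = ‖(p:X) - (q':X)‖ • (u:X) := by rw [hnorm]; exact hpq
          have := hu₀ Y f hiso hsurj p q' hcond
          rw [this, hnorm, hpq, map_smul, hAu]
        · have hpq' : (q':X) - (p:X) = (-t) • (u:X) := by rw [← neg_sub, hpq]; module
          have hnorm : ‖(q':X) - (p:X)‖ = -t := by
            rw [hpq', norm_smul, hu1, Real.norm_eq_abs, abs_of_nonneg (by linarith), mul_one]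
          have hcond : (q':X) - (p:X) = ‖(q':X) - (p:X)‖ • (u:X) := by rw [hnorm]; exact hpq'
          have := hu₀ Y f hiso hsurj q' p hcond
          have h2 : (f p : Y) - (f q' : Y) = -(‖(q':X) - (p:X)‖ • (f u : Y)) := by
            rw [← this]; abel
          rw [h2, hnorm, hpq, map_smul, hAu]
          module
      have chordV : ∀ (p q' : sphere (0:X) 1) (t : ℝ), (p:X) - (q':X) = t • (v:X) →
          (f p : Y) - (f q' : Y) = A ((p:X) - (q':X)) := by
        intro p q' t hpq
        rcases le_or_gt 0 t with ht | ht
        · have hnorm : ‖(p:X) - (q':X)‖ = t := by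
            rw [hpq, norm_smul, hv1, Real.norm_eq_abs, abs_of_nonneg ht, mul_one]
          have hcond : (p:X) - (q':X) = ‖(p:X) - (q':X)‖ • (v:X) := by rw [hnorm]; exact hpq
          have := hv₀ Y f hiso hsurj p q' hcond
          rw [this, hnorm, hpq, map_smul, hAv]
        · have hpq' : (q':X) - (p:X) = (-t) • (v:X) := by rw [← neg_sub, hpq]; module
          have hnorm : ‖(q':X) - (p:X)‖ = -t := by
            rw [hpq', norm_smul, hv1, Real.norm_eq_abs, abs_of_nonneg (by linarith), mul_one]
          have hcond : (q':X) - (p:X) = ‖(q':X) - (p:X)‖ • (v:X) := by rw [hnorm]; exact hpq'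
          have := hv₀ Y f hiso hsurj q' p hcond
          have h2 : (f p : Y) - (f q' : Y) = -(‖(q':X) - (p:X)‖ • (f v : Y)) := by
            rw [← this]; abel
          rw [h2, hnorm, hpq, map_smul, hAv]
          module
      set g : sphere (0:X) 1 → Y := fun p => (f p : Y) - A (p:X) with hg
      have hgU : ∀ (p q' : sphere (0:X) 1) (t : ℝ), (p:X) - (q':X) = t • (u:X) →
          g p = g q' := by
        intro p q' t hpq
        have := chordU p q' t hpq
        rw [map_sub] at this
        simp only [hg]
        rw [sub_eq_sub_iff_sub_eq_sub, this]
      have hgV : ∀ (p q' : sphere (0:X) 1) (t : ℝ), (p:X) - (q':X) = t • (v:X) →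
          g p = g q' := by
        intro p q' t hpq
        have := chordV p q' t hpq
        rw [map_sub] at this
        simp only [hg]
        rw [sub_eq_sub_iff_sub_eq_sub, this]
      have hgcont : Continuous g := by
        apply Continuous.sub
        · exact continuous_subtype_val.comp hiso.continuous
        · exact A.continuous_of_finiteDimensional.comp continuous_subtype_val
      have hpart : ∀ p : sphere (0:X) 1, (p:X) ≠ z → (p:X) ≠ -z →
          ∃ q' : sphere (0:X) 1, q' ≠ p ∧ ∃ t : ℝ, (p:X) - (q':X) = t • (v:X) :=
        fun p hp1 hp2 => partner hsc hdim hv0' hz Hv p hp1 hp2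
      -- constancy at z
      have C1 : ∀ q' : sphere (0:X) 1, (q':X) ≠ -z → g q' = g ⟨z, hz⟩ :=
        fun q' hq' => const_aux hu0 hvu hz φ ψ hφu hψv hφpeak hφeq hψpeak hψeq hlin
          g hgcont hgU hgV hpart q' hq'
      -- constancy at -z
      have hφpeak' : ∀ w ∈ sphere (0:X) 1, (-φ) w ≤ (-φ) (-z) := by
        intro w hw
        have hmw : -w ∈ sphere (0:X) 1 := by
          rw [mem_sphere_zero_iff_norm, norm_neg]; exact mem_sphere_zero_iff_norm.mp hw
        have := hφpeak _ hmw
        simp only [ContinuousLinearMap.neg_apply, map_neg] at *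
        linarith
      have hφeq' : ∀ w ∈ sphere (0:X) 1, (-φ) w = (-φ) (-z) → w = -z := by
        intro w hw hweq
        have hmw : -w ∈ sphere (0:X) 1 := by
          rw [mem_sphere_zero_iff_norm, norm_neg]; exact mem_sphere_zero_iff_norm.mp hw
        simp only [ContinuousLinearMap.neg_apply, map_neg, neg_neg] at hweq
        have : φ (-w) = φ z := by rw [map_neg]; linarith
        have := hφeq _ hmw this
        rw [← this]; simp
      have hψpeak' : ∀ w ∈ sphere (0:X) 1, (-ψ) w ≤ (-ψ) (-z) := by
        intro w hw
        have hmw : -w ∈ sphere (0:X) 1 := by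
          rw [mem_sphere_zero_iff_norm, norm_neg]; exact mem_sphere_zero_iff_norm.mp hw
        have := hψpeak _ hmw
        simp only [ContinuousLinearMap.neg_apply, map_neg] at *
        linarith
      have hψeq' : ∀ w ∈ sphere (0:X) 1, (-ψ) w = (-ψ) (-z) → w = -z := by
        intro w hw hweq
        have hmw : -w ∈ sphere (0:X) 1 := by
          rw [mem_sphere_zero_iff_norm, norm_neg]; exact mem_sphere_zero_iff_norm.mp hw
        simp only [ContinuousLinearMap.neg_apply, map_neg, neg_neg] at hweq
        have : ψ (-w) = ψ z := by rw [map_neg]; linarith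
        have := hψeq _ hmw this
        rw [← this]; simp
      have hφu' : (-φ) (u:X) = 0 := by
        simp only [ContinuousLinearMap.neg_apply, hφu, neg_zero]
      have hψv' : (-ψ) (v:X) = 0 := by
        simp only [ContinuousLinearMap.neg_apply, hψv, neg_zero]
      have hlin' : ∀ x : X, (-φ) x = 0 → ∃ t : ℝ, x = t • (u:X) := by
        intro x hx
        simp only [ContinuousLinearMap.neg_apply, neg_eq_zero] at hx
        exact hlin x hx
      have hpart' : ∀ p : sphere (0:X) 1, (p:X) ≠ -z → (p:X) ≠ -(-z) →
          ∃ q' : sphere (0:X) 1, q' ≠ p ∧ ∃ t : ℝ, (p:X) - (q':X) = t • (v:X) :=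
        fun p hp1 hp2 => partner hsc hdim hv0' hmz (neg_tang Hv) p hp1 hp2
      have C2 : ∀ q' : sphere (0:X) 1, (q':X) ≠ -(-z) → g q' = g ⟨-z, hmz⟩ :=
        fun q' hq' => const_aux hu0 hvu hmz (-φ) (-ψ) hφu' hψv' hφpeak' hφeq' hψpeak' hψeq'
          hlin' g hgcont hgU hgV hpart' q' hq'
      -- all values of g are 0
      have hgu : g u = 0 := by
        simp only [hg, hAu, sub_self]
      have hgz : g ⟨z, hz⟩ = 0 := by rw [← C1 u humz]; exact hgu
      have hgmz : g ⟨-z, hmz⟩ = 0 := by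
        rw [← C2 u (by rw [neg_neg]; exact huz)]; exact hgu
      have hgall : ∀ p : sphere (0:X) 1, g p = 0 := by
        intro p
        by_cases hp : (p:X) = -z
        · have : p = (⟨-z, hmz⟩ : sphere (0:X) 1) := Subtype.ext hp
          rw [this]; exact hgmz
        · rw [C1 p hp]; exact hgz
      -- conclude
      have hval : ∀ p : sphere (0:X) 1, (f p : Y) = A (p:X) := by
        intro p
        have hp := hgall p
        simp only [hg] at hp
        exact sub_eq_zero.mp hp
      set t := ‖(y:X) - (w:X)‖ with htdef
      rw [hval y, hval w, hval ⟨z, hz⟩, ← map_sub, hyw, map_smul]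
    refine ⟨u, ⟨z, hz⟩, special_up u (special_down u hu), special_up _ hzsp, ?_⟩
    rintro (⟨e, he1, he2⟩ | ⟨z', hz', H1, H2⟩)
    · simp only [Set.mem_insert_iff, Set.mem_singleton_iff] at he1 he2
      rcases he1 with rfl | rfl
      · rcases he2 with h | h
        · exact huz h
        · exact humz h
      · rcases he2 with h | h
        · exact humz (by rw [← h]; simp)
        · exact huz (neg_injective h)
    · rcases tang hsc hdim hu0 hz hz' Hu H1 with rfl | h
      · have hmem : -z' ∈ sphere (0:X) 1 ∩ {w : X | ∃ t : ℝ, w = z' + t • z'} := by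
          refine ⟨?_, ⟨-2, by module⟩⟩
          rw [mem_sphere_zero_iff_norm, norm_neg]
          exact mem_sphere_zero_iff_norm.mp hz'
        rw [H2] at hmem
        simp only [Set.mem_singleton_iff] at hmem
        have h2 : (2:ℝ) • z' = 0 := by
          rw [two_smul]
          nth_rewrite 1 [← hmem]
          abel
        rcases smul_eq_zero.mp h2 with h' | h'
        · norm_num at h'
        · exact hznz h'
      · subst h
        have hmem : z ∈ sphere (0:X) 1 ∩ {w : X | ∃ t : ℝ, w = -z + t • z} := by
          exact ⟨hz, ⟨2, by module⟩⟩
        rw [H2] at hmem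
        simp only [Set.mem_singleton_iff] at hmem
        have h2 : (2:ℝ) • z = 0 := by
          rw [two_smul]
          nth_rewrite 2 [hmem]
          abel
        rcases smul_eq_zero.mp h2 with h' | h'
        · norm_num at h'
        · exact hznz h'
end
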